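/- arXiv:2011.11101 — 5 statements merged into one kernel-verified Lean document; each statement's English description precedes it below -/
import Mathlib

section
/- Let q be a prime power, let x ∈ GF(q³) \ GF(q), and consider the map γ of PG(1,q³) induced by the matrix with rows (a,b) and (c,d) with entries in GF(q) and nonzero determinant. Define S_x = {(t^q - t : x t - x^q t^q) : t ∈ GF(q³)*} ⊆ PG(1,q³). Then γ(S_x) = S_{(c-dx)/(bx-a)} whenever bx - a ≠ 0, and γ(S_x) = S_x if and only if γ is the identity (i.e., b = c = 0 and a = d up to scalar). -/
open scoped LinearAlgebra.Projectivization
open Projectivization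

/-- The splash `S_x = {(t^q - t : x t - x^q t^q) : t ∈ GF(q³)*}` of `PG(1, q³)`. -/
def splash (q : ℕ) {L : Type*} [Field L] (x : L) : Set (ℙ L (L × L)) :=
  {P : ℙ L (L × L) | ∃ t : L, t ≠ 0 ∧
    ∃ h : ((t ^ q - t, x * t - x ^ q * t ^ q) : L × L) ≠ 0,
      P = Projectivization.mk L (t ^ q - t, x * t - x ^ q * t ^ q) h}

/-- The `L`-linear map on `L × L` induced by the matrix with rows `(a, b)` and `(c, d)`,
with entries in the subfield `K`. -/
def matMap {K L : Type*} [Field K] [Field L] [Algebra K L] (a b c d : K) :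
    (L × L) →ₗ[L] (L × L) where
  toFun p := (algebraMap K L a * p.1 + algebraMap K L b * p.2,
              algebraMap K L c * p.1 + algebraMap K L d * p.2)
  map_add' p r := by simp [Prod.ext_iff]; constructor <;> ring
  map_smul' m p := by simp [Prod.ext_iff, smul_eq_mul]; constructor <;> ring

section Aux

open Polynomial

lemma mk_congr {F V : Type*} [Field F] [AddCommGroup V] [Module F V] {v w : V}
    (h : v = w) (hv : v ≠ 0) (hw : w ≠ 0) :
    Projectivization.mk F v hv = Projectivization.mk F w hw := by subst h; rfl

lemma six_mono {F : Type*} [Field F] (c5 c4 c3 c2 c1 c0 : F) (e5 e4 e3 e2 e1 : ℕ)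
    (h54 : e5 ≠ e4) (h53 : e5 ≠ e3) (h52 : e5 ≠ e2) (h51 : e5 ≠ e1) (h50 : e5 ≠ 0)
    (h43 : e4 ≠ e3) (h42 : e4 ≠ e2) (h41 : e4 ≠ e1) (h40 : e4 ≠ 0)
    (h32 : e3 ≠ e2) (h31 : e3 ≠ e1) (h30 : e3 ≠ 0)
    (h21 : e2 ≠ e1) (h20 : e2 ≠ 0) (h10 : e1 ≠ 0)
    (h : C c5 * X ^ e5 + C c4 * X ^ e4 + C c3 * X ^ e3 + C c2 * X ^ e2 + C c1 * X ^ e1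
        + C c0 = (0 : Polynomial F)) :
    c5 = 0 ∧ c4 = 0 ∧ c3 = 0 ∧ c2 = 0 ∧ c1 = 0 ∧ c0 = 0 := by
  refine ⟨?_, ?_, ?_, ?_, ?_, ?_⟩
  · simpa [coeff_X_pow, coeff_C, h54, h53, h52, h51, h50] using congrArg (fun p => coeff p e5) h
  · simpa [coeff_X_pow, coeff_C, Ne.symm h54, h43, h42, h41, h40] using
      congrArg (fun p => coeff p e4) h
  · simpa [coeff_X_pow, coeff_C, Ne.symm h53, Ne.symm h43, h32, h31, h30] using
      congrArg (fun p => coeff p e3) h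
  · simpa [coeff_X_pow, coeff_C, Ne.symm h52, Ne.symm h42, Ne.symm h32, h21, h20] using
      congrArg (fun p => coeff p e2) h
  · simpa [coeff_X_pow, coeff_C, Ne.symm h51, Ne.symm h41, Ne.symm h31, Ne.symm h21, h10] using
      congrArg (fun p => coeff p e1) h
  · simpa [coeff_X_pow, coeff_C, Ne.symm h50, Ne.symm h40, Ne.symm h30, Ne.symm h20,
      Ne.symm h10] using congrArg (fun p => coeff p 0) h

variable {q : ℕ} {K L : Type*} [Field K] [Field L] [Algebra K L] [Fintype K] [Fintype L]

lemma frob_facts' (hK : Fintype.card K = q) :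
    (∀ y z : L, (y + z) ^ q = y ^ q + z ^ q) ∧
    (∀ y z : L, (y - z) ^ q = y ^ q - z ^ q) ∧
    (∀ P Q : Polynomial L, (P + Q) ^ q = P ^ q + Q ^ q) := by
  obtain ⟨p, hp⟩ := CharP.exists K
  obtain ⟨n, hprime, hcard⟩ := FiniteField.card K p
  haveI : Fact p.Prime := ⟨hprime⟩
  haveI : CharP L p := charP_of_injective_algebraMap (algebraMap K L).injective p
  haveI : CharP (Polynomial L) p := inferInstance
  have hq : q = p ^ (n : ℕ) := by rw [← hK, hcard]
  subst hq
  refine ⟨fun y z => ?_, fun y z => ?_, fun P Q => ?_⟩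
  · exact add_pow_char_pow y z p n
  · have h := add_pow_char_pow (y - z) z p n
    rw [sub_add_cancel] at h
    rw [h]; ring
  · exact add_pow_char_pow P Q p n

lemma two_le_q' (hK : Fintype.card K = q) : 2 ≤ q := hK ▸ Fintype.one_lt_card

lemma frob_inj' (hK : Fintype.card K = q) {y z : L} (h : y ^ q = z ^ q) : y = z := by
  have h2 := (frob_facts' (L := L) hK).2.1 y z
  rw [h, sub_self] at h2
  have hq : q ≠ 0 := by have := two_le_q' (K := K) hK; omega
  have := pow_eq_zero_iff hq |>.mp h2
  exact sub_eq_zero.mp this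

lemma pow_q_eq_iff' (hK : Fintype.card K = q) (hL : Fintype.card L = q ^ 3) (y : L) :
    y ^ q = y ↔ y ∈ (algebraMap K L).range := by
  classical
  have hq2 := two_le_q' (K := K) hK
  -- the two finsets
  set Kfin : Finset L := Finset.univ.filter (fun z : L => z ^ q = z) with hKfin
  set Rfin : Finset L := Finset.univ.image (algebraMap K L) with hRfin
  have hsub : Rfin ⊆ Kfin := by
    intro z hz
    simp only [hRfin, Finset.mem_image, Finset.mem_univ, true_and] at hz
    obtain ⟨k, rfl⟩ := hz
    simp only [hKfin, Finset.mem_filter, Finset.mem_univ, true_and]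
    rw [← map_pow, ← hK, FiniteField.pow_card]
  have hcardR : Rfin.card = q := by
    rw [hRfin, Finset.card_image_of_injective _ (algebraMap K L).injective,
      Finset.card_univ, hK]
  have hcardK : Kfin.card ≤ q := by
    have hdeg : (X ^ q - X : Polynomial L).natDegree = q := by
      rw [Polynomial.natDegree_sub_eq_left_of_natDegree_lt] <;>
        simp [Polynomial.natDegree_X_pow, Polynomial.natDegree_X] <;> omega
    have hne : (X ^ q - X : Polynomial L) ≠ 0 := by
      intro hc
      rw [hc, Polynomial.natDegree_zero] at hdeg
      omega
    have hsub2 : Kfin ⊆ (X ^ q - X : Polynomial L).roots.toFinset := by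
      intro z hz
      simp only [hKfin, Finset.mem_filter, Finset.mem_univ, true_and] at hz
      simp [Multiset.mem_toFinset, Polynomial.mem_roots hne, Polynomial.IsRoot.def,
        Polynomial.eval_sub, Polynomial.eval_pow, Polynomial.eval_X, hz, sub_self]
    calc Kfin.card ≤ _ := Finset.card_le_card hsub2
      _ ≤ Multiset.card (X ^ q - X : Polynomial L).roots := Multiset.toFinset_card_le _
      _ ≤ _ := Polynomial.card_roots' _
      _ = q := hdeg
  have heq : Kfin = Rfin := (Finset.eq_of_subset_of_card_le hsub (by omega)).symm
  constructor
  · intro hy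
    have : y ∈ Kfin := by simp [hKfin, hy]
    rw [heq] at this
    simp only [hRfin, Finset.mem_image, Finset.mem_univ, true_and] at this
    obtain ⟨k, hk⟩ := this
    exact ⟨k, hk⟩
  · rintro ⟨k, rfl⟩
    rw [← map_pow, ← hK, FiniteField.pow_card]

lemma splash_vec_ne' (hK : Fintype.card K = q) (hL : Fintype.card L = q ^ 3)
    {x : L} (hx : x ∉ (algebraMap K L).range) {t : L} (ht : t ≠ 0) :
    ((t ^ q - t, x * t - x ^ q * t ^ q) : L × L) ≠ 0 := by
  have hxq : x ^ q ≠ x := fun hc => hx ((pow_q_eq_iff' hK hL x).mp hc)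
  intro hc
  have h1 : t ^ q - t = 0 := congrArg Prod.fst hc
  have h2 : x * t - x ^ q * t ^ q = 0 := congrArg Prod.snd hc
  have htq : t ^ q = t := by linear_combination h1
  rw [htq] at h2
  have h3 : t * (x - x ^ q) = 0 := by linear_combination h2
  rcases mul_eq_zero.mp h3 with h | h
  · exact ht h
  · exact hxq (by linear_combination -h)

lemma splash_map_eq' (hK : Fintype.card K = q) (hL : Fintype.card L = q ^ 3)
    {x : L} (hx : x ∉ (algebraMap K L).range) (a b c d : K)
    (hinj : Function.Injective (matMap (L := L) a b c d))
    (hba : algebraMap K L b * x - algebraMap K L a ≠ 0) :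
    Projectivization.map (matMap (L := L) a b c d) hinj '' splash q x =
      splash q ((algebraMap K L c - algebraMap K L d * x) /
        (algebraMap K L b * x - algebraMap K L a)) := by
  obtain ⟨hadd, hsub, -⟩ := frob_facts' (K := K) (L := L) hK
  have hfix : ∀ k : K, (algebraMap K L k) ^ q = algebraMap K L k := fun k => by
    rw [← map_pow, ← hK, FiniteField.pow_card]
  set A := algebraMap K L a with hA
  set B := algebraMap K L b with hB
  set C := algebraMap K L c with hC
  set D := algebraMap K L d with hD
  set x' := (C - D * x) / (B * x - A) with hx'def
  set μ := A - B * x with hμ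
  have hμne : μ ≠ 0 := fun hc => hba (by rw [hμ] at hc; linear_combination -hc)
  have hμq : μ ^ q = A - B * x ^ q := by rw [hμ, hsub, hfix, mul_pow, hfix]
  have hbaq : B * x ^ q - A ≠ 0 := by
    intro hc
    apply pow_ne_zero q hba
    rw [hsub, mul_pow, hfix, hfix]
    exact hc
  have hx'q : x' ^ q = (C - D * x ^ q) / (B * x ^ q - A) := by
    rw [hx'def, div_pow, hsub, hsub, hfix, hfix, mul_pow, mul_pow, hfix, hfix]
  have hvec : ∀ t : L, (matMap (L := L) a b c d) (t ^ q - t, x * t - x ^ q * t ^ q)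
      = ((μ * t) ^ q - μ * t, x' * (μ * t) - x' ^ q * (μ * t) ^ q) := by
    intro t
    show (A * (t ^ q - t) + B * (x * t - x ^ q * t ^ q),
          C * (t ^ q - t) + D * (x * t - x ^ q * t ^ q)) = _
    have h1 : (μ * t) ^ q = (A - B * x ^ q) * t ^ q := by rw [mul_pow, hμq]
    refine Prod.ext ?_ ?_
    · show A * (t ^ q - t) + B * (x * t - x ^ q * t ^ q) = (μ * t) ^ q - μ * t
      rw [h1, hμ]; ring
    · show C * (t ^ q - t) + D * (x * t - x ^ q * t ^ q) = x' * (μ * t) - x' ^ q * (μ * t) ^ q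
      rw [h1, hx'q, hx'def, hμ]
      linear_combination (C - D * x) * t * mul_inv_cancel₀ hba - (C - D * x ^ q) * t ^ q * mul_inv_cancel₀ hbaq
  ext P
  simp only [Set.mem_image, splash, Set.mem_setOf_eq]
  constructor
  · rintro ⟨Q, ⟨t, ht, hne, rfl⟩, rfl⟩
    have hne2 : ((μ * t) ^ q - μ * t, x' * (μ * t) - x' ^ q * (μ * t) ^ q) ≠ (0 : L × L) := by
      rw [← hvec t]
      exact fun hc => hne (hinj (by rw [hc, map_zero]))
    refine ⟨μ * t, mul_ne_zero hμne ht, hne2, ?_⟩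
    rw [Projectivization.map_mk]
    exact mk_congr (hvec t) _ _
  · rintro ⟨s, hs, hne, rfl⟩
    have hts : μ * (μ⁻¹ * s) = s := mul_inv_cancel_left₀ hμne s
    have ht : μ⁻¹ * s ≠ 0 := mul_ne_zero (inv_ne_zero hμne) hs
    refine ⟨Projectivization.mk L _ (splash_vec_ne' hK hL hx ht), ⟨μ⁻¹ * s, ht, _, rfl⟩, ?_⟩
    rw [Projectivization.map_mk]
    refine mk_congr ?_ _ _
    rw [hvec (μ⁻¹ * s), hts]

set_option maxHeartbeats 1000000 in
lemma splash_inj' (hK : Fintype.card K = q) (hL : Fintype.card L = q ^ 3)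
    {x x' : L} (hx : x ∉ (algebraMap K L).range) (hx' : x' ∉ (algebraMap K L).range)
    (h : splash q x = splash q x') : x' = x := by
  classical
  obtain ⟨hadd, hsub, haddP⟩ := frob_facts' (K := K) (L := L) hK
  have hq2 : 2 ≤ q := two_le_q' (K := K) hK
  have hq0 : q ≠ 0 := by omega
  have hA : q + 1 < q ^ 2 := by nlinarith
  have hfrobinj : ∀ {y z : L}, y ^ q = z ^ q → y = z := by
    intro y z hyz
    have h2 : (y - z) ^ q = 0 := by rw [hsub, hyz, sub_self]
    exact sub_eq_zero.mp (pow_eq_zero_iff hq0 |>.mp h2)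
  have hcube : ∀ y : L, ((y ^ q) ^ q) ^ q = y := by
    intro y
    rw [← pow_mul, ← pow_mul, show q * (q * q) = q ^ 3 by ring, ← hL, FiniteField.pow_card]
  have hfix0 : (0 : L) ^ q = 0 := zero_pow hq0
  have hxq : x ^ q ≠ x := fun hc => hx ((pow_q_eq_iff' hK hL x).mp hc)
  have hx'q : x' ^ q ≠ x' := fun hc => hx' ((pow_q_eq_iff' hK hL x').mp hc)
  have hdenx : x - x ^ q ≠ 0 := sub_ne_zero.mpr (Ne.symm hxq)
  have hden : x' - x' ^ q ≠ 0 := sub_ne_zero.mpr (Ne.symm hx'q)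
  set α := (x - x ^ q) / (x' - x' ^ q) with hα
  set β := (x' ^ q - x ^ q) / (x' - x' ^ q) with hβ
  have hαne : α ≠ 0 := div_ne_zero hdenx hden
  set s : Finset L := Finset.univ.filter (fun t : L => t ^ q ≠ t) with hs
  set Bset : Finset L := s.image (fun t => t / (t ^ q - t)) with hBset
  have hmemB : ∀ w : L, w ∈ Bset ↔ ∃ t : L, t ^ q ≠ t ∧ t / (t ^ q - t) = w := by
    intro w; simp [hBset, hs]
  have h1ne : ∀ y : L, ((1 : L), y) ≠ (0 : L × L) := fun y hc =>
    one_ne_zero (congrArg Prod.fst hc)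
  -- membership characterization for points with first coordinate 1
  have hmemS : ∀ (z : L), z ∉ (algebraMap K L).range → ∀ y : L,
      (Projectivization.mk L ((1 : L), y) (h1ne y) ∈ splash q z ↔
        ∃ t : L, t ^ q ≠ t ∧ y = -z ^ q + (z - z ^ q) * (t / (t ^ q - t))) := by
    intro z hz y
    constructor
    · rintro ⟨t, ht, hne, heq⟩
      rw [Projectivization.mk_eq_mk_iff] at heq
      obtain ⟨u, hu⟩ := heq
      rw [Prod.smul_mk] at hu
      have h1 : (u : L) * (t ^ q - t) = 1 := by
        have := congrArg Prod.fst hu; simpa [smul_eq_mul, Units.smul_def] using this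
      have h2 : (u : L) * (z * t - z ^ q * t ^ q) = y := by
        have := congrArg Prod.snd hu; simpa [smul_eq_mul, Units.smul_def] using this
      have htne : t ^ q - t ≠ 0 := by
        intro hc; rw [hc, mul_zero] at h1; exact one_ne_zero h1.symm
      refine ⟨t, fun hc => htne (by rw [hc, sub_self]), ?_⟩
      have hu' : (u : L) = (t ^ q - t)⁻¹ := eq_inv_of_mul_eq_one_left h1
      rw [← h2, hu']
      field_simp
      ring
    · rintro ⟨t, ht, rfl⟩
      have htne : t ^ q - t ≠ 0 := sub_ne_zero.mpr ht
      have ht0 : t ≠ 0 := fun hc => ht (by rw [hc, hfix0])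
      refine ⟨t, ht0, splash_vec_ne' hK hL hz ht0, ?_⟩
      rw [Projectivization.mk_eq_mk_iff']
      refine ⟨(t ^ q - t)⁻¹, ?_⟩
      rw [Prod.smul_mk]
      refine Prod.ext ?_ ?_
      · show (t ^ q - t)⁻¹ • (t ^ q - t) = 1
        rw [smul_eq_mul]; exact inv_mul_cancel₀ htne
      · show (t ^ q - t)⁻¹ • (z * t - z ^ q * t ^ q) = -z ^ q + (z - z ^ q) * (t / (t ^ q - t))
        rw [smul_eq_mul]
        field_simp
        ring
  -- invariance of Bset under w ↦ α w + β
  have hinv : ∀ w ∈ Bset, α * w + β ∈ Bset := by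
    intro w hw
    obtain ⟨t, ht, hwt⟩ := (hmemB w).mp hw
    have hyx : Projectivization.mk L ((1 : L), -x ^ q + (x - x ^ q) * w) (h1ne _) ∈ splash q x :=
      (hmemS x hx _).mpr ⟨t, ht, by rw [hwt]⟩
    rw [h] at hyx
    obtain ⟨u, hu, hy'⟩ := (hmemS x' hx' _).mp hyx
    have hw' : u / (u ^ q - u) ∈ Bset := (hmemB _).mpr ⟨u, hu, rfl⟩
    have hune : u ^ q - u ≠ 0 := sub_ne_zero.mpr hu
    have hval : u / (u ^ q - u) = ((x - x ^ q) * w + (x' ^ q - x ^ q)) / (x' - x' ^ q) := by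
      rw [eq_div_iff hden]
      linear_combination -hy'
    have heq2 : α * w + β = u / (u ^ q - u) := by
      rw [hval, hα, hβ]
      ring
    rwa [heq2]
  -- cardinality of Bset
  have hcard_fix : (Finset.univ.filter (fun z : L => z ^ q = z)).card = q := by
    have hsub2 : Finset.univ.image (algebraMap K L) ⊆
        Finset.univ.filter (fun z : L => z ^ q = z) := by
      intro z hz
      simp only [Finset.mem_image, Finset.mem_univ, true_and] at hz
      obtain ⟨k, rfl⟩ := hz
      simp only [Finset.mem_filter, Finset.mem_univ, true_and]
      rw [← map_pow, ← hK, FiniteField.pow_card]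
    have hcardR : (Finset.univ.image (algebraMap K L)).card = q := by
      rw [Finset.card_image_of_injective _ (algebraMap K L).injective, Finset.card_univ, hK]
    have hdegX : (X ^ q - X : Polynomial L).natDegree = q := by
      rw [Polynomial.natDegree_sub_eq_left_of_natDegree_lt] <;>
        simp [Polynomial.natDegree_X_pow, Polynomial.natDegree_X] <;> omega
    have hneX : (X ^ q - X : Polynomial L) ≠ 0 := by
      intro hc
      rw [hc, Polynomial.natDegree_zero] at hdegX
      omega
    have hleK : (Finset.univ.filter (fun z : L => z ^ q = z)).card ≤ q := by
      have hsub3 : Finset.univ.filter (fun z : L => z ^ q = z) ⊆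
          (X ^ q - X : Polynomial L).roots.toFinset := by
        intro z hz
        simp only [Finset.mem_filter, Finset.mem_univ, true_and] at hz
        simp [Multiset.mem_toFinset, Polynomial.mem_roots hneX, Polynomial.IsRoot.def,
          Polynomial.eval_sub, Polynomial.eval_pow, Polynomial.eval_X, hz, sub_self]
      calc (Finset.univ.filter (fun z : L => z ^ q = z)).card
          ≤ _ := Finset.card_le_card hsub3
        _ ≤ Multiset.card (X ^ q - X : Polynomial L).roots := Multiset.toFinset_card_le _
        _ ≤ _ := Polynomial.card_roots' _
        _ = q := hdegX
    have heqKR := Finset.eq_of_subset_of_card_le hsub2 (by omega)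
    rw [← heqKR, hcardR]
  have hcards : s.card = q ^ 3 - q := by
    have hseq : s = Finset.univ \ Finset.univ.filter (fun z : L => z ^ q = z) := by
      rw [hs]; ext z; simp
    rw [hseq, Finset.card_sdiff_of_subset (Finset.subset_univ _), Finset.card_univ, hL, hcard_fix]
  have hcardB : Bset.card = q ^ 2 + q := by
    have hfib : ∀ w ∈ Bset, (s.filter (fun t => t / (t ^ q - t) = w)).card = q - 1 := by
      intro w hw
      obtain ⟨t₀, ht₀, hwt₀⟩ := (hmemB w).mp hw
      have ht₀ne : t₀ ^ q - t₀ ≠ 0 := sub_ne_zero.mpr ht₀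
      have ht₀0 : t₀ ≠ 0 := fun hc => ht₀ (by rw [hc, hfix0])
      have hset : s.filter (fun t => t / (t ^ q - t) = w) =
          ((Finset.univ.filter (fun z : L => z ^ q = z)).erase 0).image
            (fun lam => lam * t₀) := by
        ext u
        simp only [Finset.mem_image, Finset.mem_erase, Finset.mem_filter, Finset.mem_univ,
          true_and, hs]
        constructor
        · rintro ⟨hu, hueq⟩
          have hu0 : u ≠ 0 := fun hc => hu (by rw [hc, hfix0])
          have hune : u ^ q - u ≠ 0 := sub_ne_zero.mpr hu
          refine ⟨u / t₀, ⟨div_ne_zero hu0 ht₀0, ?_⟩, div_mul_cancel₀ u ht₀0⟩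
          -- (u/t₀)^q = u/t₀
          rw [div_pow, div_eq_div_iff (pow_ne_zero q ht₀0) ht₀0]
          -- u^q * t₀ = u * t₀^q
          rw [← hwt₀, div_eq_div_iff hune ht₀ne] at hueq
          linear_combination -hueq
        · rintro ⟨lam, ⟨hlam0, hlamq⟩, rfl⟩
          have hlq : (lam * t₀) ^ q = lam * t₀ ^ q := by rw [mul_pow, hlamq]
          have hd : (lam * t₀) ^ q - lam * t₀ = lam * (t₀ ^ q - t₀) := by rw [hlq]; ring
          constructor
          · rw [hlq]
            intro hc
            have : lam * (t₀ ^ q - t₀) = 0 := by linear_combination hc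
            rcases mul_eq_zero.mp this with h' | h'
            · exact hlam0 h'
            · exact ht₀ne h'
          · rw [hd, ← hwt₀, mul_div_mul_left _ _ hlam0]
      rw [hset, Finset.card_image_of_injective _ (mul_left_injective₀ ht₀0),
        Finset.card_erase_of_mem (by simp [hfix0]), hcard_fix]
    have hsum := Finset.card_eq_sum_card_image (fun t => t / (t ^ q - t)) s
    rw [← hBset, Finset.sum_congr rfl hfib, Finset.sum_const, smul_eq_mul, hcards] at hsum
    have hid : (q ^ 2 + q) * (q - 1) + q = q ^ 3 := by
      obtain ⟨r, rfl⟩ : ∃ r, q = r + 2 := ⟨q - 2, by omega⟩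
      have h21 : r + 2 - 1 = r + 1 := by omega
      rw [h21]; ring
    have hF : (q ^ 2 + q) * (q - 1) = q ^ 3 - q := eq_tsub_of_add_eq hid
    exact Nat.eq_of_mul_eq_mul_right (by omega) (hsum.symm.trans hF.symm)
  -- the polynomial g
  set g : Polynomial L := X ^ (q ^ 2 + q) + X ^ (q ^ 2 + 1) + X ^ (q ^ 2) + X ^ (q + 1)
      + X ^ q + X ^ 1 + 1 with hg
  have hgeval : ∀ u : L, g.eval u = (u + 1) ^ (q ^ 2 + q + 1) - u ^ (q ^ 2 + q + 1) := by
    intro u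
    have pe : ∀ v : L, v ^ (q ^ 2) = (v ^ q) ^ q := fun v => by
      rw [show q ^ 2 = q * q by ring, pow_mul]
    have pe1 : ∀ v : L, v ^ (q ^ 2 + q) = (v ^ q) ^ q * v ^ q := fun v => by
      rw [pow_add, pe]
    have pe2 : ∀ v : L, v ^ (q ^ 2 + 1) = (v ^ q) ^ q * v := fun v => by
      rw [pow_add, pe, pow_one]
    have pe3 : ∀ v : L, v ^ (q + 1) = v ^ q * v := fun v => by rw [pow_add, pow_one]
    have pe4 : ∀ v : L, v ^ (q ^ 2 + q + 1) = (v ^ q) ^ q * v ^ q * v := fun v => by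
      rw [pow_add, pe1, pow_one]
    have e1 : (u + 1) ^ q = u ^ q + 1 := by rw [hadd, one_pow]
    have e2 : ((u + 1) ^ q) ^ q = (u ^ q) ^ q + 1 := by rw [e1, hadd, one_pow]
    rw [hg]
    simp only [eval_add, eval_pow, eval_X, eval_one]
    rw [pe4 u, pe4 (u + 1), e2, e1, pe1 u, pe2 u, pe u, pe3 u]
    ring
  -- every element of Bset is a root of g
  have hroot : ∀ w ∈ Bset, g.eval w = 0 := by
    intro w hw
    obtain ⟨t, ht, hwt⟩ := (hmemB w).mp hw
    have htne : t ^ q - t ≠ 0 := sub_ne_zero.mpr ht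
    have ht0 : t ≠ 0 := fun hc => ht (by rw [hc, hfix0])
    rw [hgeval, ← hwt]
    have hw1 : t / (t ^ q - t) + 1 = t ^ q / (t ^ q - t) := by field_simp; ring
    rw [hw1, div_pow, div_pow, div_sub_div_same, _root_.div_eq_zero_iff]
    left
    have key : (t ^ q) ^ (q ^ 2 + q + 1) = t ^ (q ^ 2 + q + 1) := by
      have h1 : (t ^ q) ^ (q ^ 2 + q + 1) * t = t ^ (q ^ 2 + q + 1) * t ^ (q ^ 3) := by
        rw [← pow_mul, ← pow_succ, ← pow_add]
        congr 1
        ring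
      rw [show t ^ (q ^ 3) = t by rw [← hL, FiniteField.pow_card]] at h1
      exact mul_right_cancel₀ ht0 h1
    rw [key, sub_self]
  -- expansion of (C α * X + C γ) ^ (q²+q+1)
  have hTexp : ∀ γ : L, ((C α) * X + C γ) ^ (q ^ 2 + q + 1) =
        C ((α ^ q) ^ q) * C (α ^ q) * C α * X ^ (q ^ 2 + q + 1)
      + C ((α ^ q) ^ q) * C (α ^ q) * C γ * X ^ (q ^ 2 + q)
      + C ((α ^ q) ^ q) * C (γ ^ q) * C α * X ^ (q ^ 2 + 1)
      + C ((α ^ q) ^ q) * C (γ ^ q) * C γ * X ^ (q ^ 2)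
      + C ((γ ^ q) ^ q) * C (α ^ q) * C α * X ^ (q + 1)
      + C ((γ ^ q) ^ q) * C (α ^ q) * C γ * X ^ q
      + C ((γ ^ q) ^ q) * C (γ ^ q) * C α * X ^ 1
      + C ((γ ^ q) ^ q) * C (γ ^ q) * C γ := by
    intro γ
    have hq1 : ((C α) * X + C γ : Polynomial L) ^ q = C (α ^ q) * X ^ q + C (γ ^ q) := by
      rw [haddP, mul_pow, ← C_pow, ← C_pow]
    have hq2' : (((C α) * X + C γ : Polynomial L) ^ q) ^ q
        = C ((α ^ q) ^ q) * X ^ (q ^ 2) + C ((γ ^ q) ^ q) := by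
      rw [hq1, haddP, mul_pow, ← C_pow, ← C_pow,
        show ((X : Polynomial L) ^ q) ^ q = X ^ (q ^ 2) from by
          rw [← pow_mul, show q * q = q ^ 2 by ring]]
    have hsplit : ((C α) * X + C γ : Polynomial L) ^ (q ^ 2 + q + 1)
        = (((C α) * X + C γ) ^ q) ^ q * ((C α) * X + C γ) ^ q * ((C α) * X + C γ) := by
      rw [show q ^ 2 + q + 1 = q * q + q + 1 from by ring, pow_add, pow_add, pow_mul, pow_one]
    rw [hsplit, hq2', hq1]
    ring
  have hβ1 : (β + 1) ^ q = β ^ q + 1 := by rw [hadd, one_pow]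
  have hβ2 : ((β + 1) ^ q) ^ q = (β ^ q) ^ q + 1 := by rw [hβ1, hadd, one_pow]
  have hDexp : (C α * X + C (β + 1)) ^ (q ^ 2 + q + 1) - (C α * X + C β) ^ (q ^ 2 + q + 1)
      - C ((α ^ q) ^ q * α ^ q) * g =
        C ((α ^ q) ^ q * α - (α ^ q) ^ q * α ^ q) * X ^ (q ^ 2 + 1)
      + C ((α ^ q) ^ q * (β ^ q + β + 1) - (α ^ q) ^ q * α ^ q) * X ^ (q ^ 2)
      + C (α ^ q * α - (α ^ q) ^ q * α ^ q) * X ^ (q + 1)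
      + C (α ^ q * ((β ^ q) ^ q + β + 1) - (α ^ q) ^ q * α ^ q) * X ^ q
      + C (α * ((β ^ q) ^ q + β ^ q + 1) - (α ^ q) ^ q * α ^ q) * X ^ 1
      + C (((β ^ q) ^ q + 1) * ((β ^ q + 1) * (β + 1)) - (β ^ q) ^ q * (β ^ q * β)
          - (α ^ q) ^ q * α ^ q) := by
    rw [hTexp (β + 1), hTexp β, hβ2, hβ1, hg]
    simp only [C_add, C_mul, C_sub, C_1]
    ring
  have hzero :
        C ((α ^ q) ^ q * α - (α ^ q) ^ q * α ^ q) * X ^ (q ^ 2 + 1)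
      + C ((α ^ q) ^ q * (β ^ q + β + 1) - (α ^ q) ^ q * α ^ q) * X ^ (q ^ 2)
      + C (α ^ q * α - (α ^ q) ^ q * α ^ q) * X ^ (q + 1)
      + C (α ^ q * ((β ^ q) ^ q + β + 1) - (α ^ q) ^ q * α ^ q) * X ^ q
      + C (α * ((β ^ q) ^ q + β ^ q + 1) - (α ^ q) ^ q * α ^ q) * X ^ 1
      + C (((β ^ q) ^ q + 1) * ((β ^ q + 1) * (β + 1)) - (β ^ q) ^ q * (β ^ q * β)
          - (α ^ q) ^ q * α ^ q) = (0 : Polynomial L) := by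
    apply Polynomial.eq_zero_of_natDegree_lt_card_of_eval_eq_zero' _ Bset
    · intro w hw
      rw [← hDexp]
      simp only [eval_sub, eval_mul, eval_add, eval_pow, eval_C, eval_X]
      rw [hroot w hw, mul_zero, sub_zero]
      have h2 := hroot _ (hinv w hw)
      rw [hgeval] at h2
      rw [show α * w + (β + 1) = α * w + β + 1 by ring]
      linear_combination h2
    · rw [hcardB]
      have hdeg : (C ((α ^ q) ^ q * α - (α ^ q) ^ q * α ^ q) * X ^ (q ^ 2 + 1)
          + C ((α ^ q) ^ q * (β ^ q + β + 1) - (α ^ q) ^ q * α ^ q) * X ^ (q ^ 2)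
          + C (α ^ q * α - (α ^ q) ^ q * α ^ q) * X ^ (q + 1)
          + C (α ^ q * ((β ^ q) ^ q + β + 1) - (α ^ q) ^ q * α ^ q) * X ^ q
          + C (α * ((β ^ q) ^ q + β ^ q + 1) - (α ^ q) ^ q * α ^ q) * X ^ 1
          + C (((β ^ q) ^ q + 1) * ((β ^ q + 1) * (β + 1)) - (β ^ q) ^ q * (β ^ q * β)
              - (α ^ q) ^ q * α ^ q)).natDegree ≤ q ^ 2 + 1 := by
        compute_degree <;> omega
      omega
  obtain ⟨hc5, hc4, hc3, hc2, hc1, hc0⟩ := six_mono _ _ _ _ _ _ _ _ _ _ _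
    (by omega) (by omega) (by omega) (by omega) (by omega) (by omega) (by omega) (by omega)
    (by omega) (by omega) (by omega) (by omega) (by omega) (by omega) (by omega) hzero
  clear hc3 hc1
  -- α is fixed by Frobenius
  have hc2ne : (α ^ q) ^ q ≠ 0 := pow_ne_zero _ (pow_ne_zero _ hαne)
  have hαq : α ^ q = α := by
    have : (α ^ q) ^ q * α = (α ^ q) ^ q * α ^ q := by linear_combination hc5
    exact (mul_left_cancel₀ hc2ne this).symm
  simp only [hαq] at hc4 hc2 hc0
  have hEq2 : β ^ q + β + 1 = α := mul_left_cancel₀ hαne (by linear_combination hc4)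
  have hEq4 : (β ^ q) ^ q + β + 1 = α := mul_left_cancel₀ hαne (by linear_combination hc2)
  have h1 : (β ^ q) ^ q = β ^ q := by linear_combination hEq4 - hEq2
  have hββ : β ^ q = β := by
    have h2 := congrArg (fun y : L => y ^ q) h1
    rw [hcube β] at h2
    rw [h1] at h2
    exact h2.symm
  rw [hββ] at hEq2
  simp only [hββ] at hc0
  have hαval : α = β + β + 1 := hEq2.symm
  rw [hαval] at hc0
  have hfinal : β * (β + 1) = 0 := by linear_combination -hc0
  rcases mul_eq_zero.mp hfinal with hβ0 | hβm1
  · -- β = 0 : x'^q = x^q hence x' = x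
    rw [hβ, _root_.div_eq_zero_iff] at hβ0
    rcases hβ0 with h' | h'
    · have hq' : x' ^ q = x ^ q := by linear_combination h'
      exact hfrobinj hq' 
    · exact absurd h' hden
  · -- β = -1 : leads to contradiction
    have hβval : β = -1 := by linear_combination hβm1
    rw [hβ, div_eq_iff hden] at hβval
    -- x'^q - x^q = -(x' - x'^q)
    have hx'x : x' = x ^ q := by linear_combination hβval
    have hαm : α = -1 := by rw [hαval]; linear_combination 2 * hβm1
    rw [hα, div_eq_iff hden, hx'x] at hαm
    -- x - x^q = -1 * (x^q - (x^q)^q)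
    have hxc : x = (x ^ q) ^ q := by linear_combination hαm
    have hxfix : x ^ q = x := by
      have h2 := congrArg (fun y : L => y ^ q) hxc
      rw [hcube x] at h2
      exact h2
    exact absurd hxfix hxq

end Aux

/-- For `x ∈ GF(q³) \ GF(q)` and a projectivity `γ` of `PG(1,q³)` induced by an invertible
matrix with rows `(a,b)`, `(c,d)` over `GF(q)`: if `bx - a ≠ 0` then
`γ(S_x) = S_{(c - dx)/(bx - a)}`; and `γ(S_x) = S_x` if and only if `γ` is the identity,
i.e. `b = c = 0` and `a = d`. -/
theorem statement2 (q : ℕ) (K L : Type*) [Field K] [Field L] [Algebra K L]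
    [Fintype K] [Fintype L] (hK : Fintype.card K = q) (hL : Fintype.card L = q ^ 3)
    (x : L) (hx : x ∉ (algebraMap K L).range)
    (a b c d : K) (hdet : a * d - b * c ≠ 0)
    (hinj : Function.Injective (matMap (L := L) a b c d)) :
    ((algebraMap K L b * x - algebraMap K L a ≠ 0 →
        Projectivization.map (matMap (L := L) a b c d) hinj '' splash q x =
          splash q ((algebraMap K L c - algebraMap K L d * x) /
            (algebraMap K L b * x - algebraMap K L a))) ∧
      (Projectivization.map (matMap (L := L) a b c d) hinj '' splash q x = splash q x ↔
        b = 0 ∧ c = 0 ∧ a = d)) := by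
  obtain ⟨hadd, hsub, -⟩ := frob_facts' (K := K) (L := L) hK
  have hq2 : 2 ≤ q := two_le_q' (K := K) hK
  have hq0 : q ≠ 0 := by omega
  have hfix : ∀ k : K, (algebraMap K L k) ^ q = algebraMap K L k := fun k => by
    rw [← map_pow, ← hK, FiniteField.pow_card]
  have einj : Function.Injective (algebraMap K L) := (algebraMap K L).injective
  have hxq : x ^ q ≠ x := fun hc => hx ((pow_q_eq_iff' hK hL x).mp hc)
  have hfrobinj : ∀ {y z : L}, y ^ q = z ^ q → y = z := by
    intro y z hyz
    have h2 : (y - z) ^ q = 0 := by rw [hsub, hyz, sub_self]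
    exact sub_eq_zero.mp (pow_eq_zero_iff hq0 |>.mp h2)
  have hcube : ∀ y : L, ((y ^ q) ^ q) ^ q = y := by
    intro y
    rw [← pow_mul, ← pow_mul, show q * (q * q) = q ^ 3 by ring, ← hL, FiniteField.pow_card]
  have hlin : ∀ s u : K, algebraMap K L s * x = algebraMap K L u → s = 0 ∧ u = 0 := by
    intro s u hsu
    by_cases hs : s = 0
    · subst hs
      rw [map_zero, zero_mul] at hsu
      refine ⟨rfl, einj ?_⟩
      rw [map_zero]
      exact hsu.symm
    · exfalso
      apply hx
      refine ⟨u / s, ?_⟩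
      have hsL : algebraMap K L s ≠ 0 := fun h0 => hs (einj (by rw [h0, map_zero]))
      rw [map_div₀, div_eq_iff hsL]
      linear_combination -hsu
  have hbx : algebraMap K L b * x - algebraMap K L a ≠ 0 := by
    intro hc
    have h2 : algebraMap K L b * x = algebraMap K L a := by linear_combination hc
    obtain ⟨hb0, ha0⟩ := hlin b a h2
    apply hdet
    rw [ha0, hb0]
    ring
  refine ⟨fun _ => splash_map_eq' hK hL hx a b c d hinj hbx, ?_, ?_⟩
  · intro himg
    have h1 := splash_map_eq' hK hL hx a b c d hinj hbx
    rw [himg] at h1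
    set x' := (algebraMap K L c - algebraMap K L d * x) /
      (algebraMap K L b * x - algebraMap K L a) with hx'def
    have hx'mul : x' * (algebraMap K L b * x - algebraMap K L a)
        = algebraMap K L c - algebraMap K L d * x := by
      rw [hx'def, div_mul_cancel₀ _ hbx]
    have hx'r : x' ∉ (algebraMap K L).range := by
      rintro ⟨k, hk⟩
      rw [← hk] at hx'mul
      have h3 : algebraMap K L (d + k * b) * x = algebraMap K L (c + k * a) := by
        rw [map_add, map_add, map_mul, map_mul]
        linear_combination hx'mul
      obtain ⟨h4, h5⟩ := hlin _ _ h3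
      apply hdet
      have hd : d = -(k * b) := eq_neg_of_add_eq_zero_left h4
      have hc : c = -(k * a) := eq_neg_of_add_eq_zero_left h5
      rw [hd, hc]
      ring
    have hxx' : x' = x := splash_inj' hK hL hx hx'r h1
    rw [hx'def, div_eq_iff hbx] at hxx'
    by_cases hb : b = 0
    · subst hb
      rw [map_zero] at hxx'
      have h6 : algebraMap K L (d - a) * x = algebraMap K L c := by
        rw [map_sub]
        linear_combination -hxx'
      obtain ⟨h7, h8⟩ := hlin _ _ h6
      exact ⟨rfl, h8, (sub_eq_zero.mp h7).symm⟩
    · exfalso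
      have hB : algebraMap K L b ≠ 0 := fun h0 => hb (einj (by rw [h0, map_zero]))
      set lam := (algebraMap K L a - algebraMap K L d) / algebraMap K L b with hlam
      set nu := algebraMap K L c / algebraMap K L b with hnu
      have hx2 : x ^ 2 = lam * x + nu := by
        rw [hlam, hnu]
        field_simp
        linear_combination -hxx'
      have hlamq : lam ^ q = lam := by rw [hlam, div_pow, hsub, hfix, hfix, hfix]
      have hnuq : nu ^ q = nu := by rw [hnu, div_pow, hfix, hfix]
      have hstep : ∀ y : L, y ^ 2 = lam * y + nu → (y ^ q) ^ 2 = lam * y ^ q + nu := by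
        intro y hy
        have h9 := congrArg (fun z : L => z ^ q) hy
        rw [hadd, mul_pow, hlamq, hnuq,
          show (y ^ 2) ^ q = (y ^ q) ^ 2 from by rw [← pow_mul, ← pow_mul, mul_comm]] at h9
        exact h9
      have h2 := hstep x hx2
      have h3 := hstep _ h2
      have hxne : x ≠ x ^ q := Ne.symm hxq
      have hsum1 : x + x ^ q = lam := by
        have hd := sub_ne_zero.mpr hxne
        have h10 : (x + x ^ q) * (x - x ^ q) = lam * (x - x ^ q) := by
          linear_combination hx2 - h2
        exact mul_right_cancel₀ hd h10
      have hxqq : x ≠ (x ^ q) ^ q := by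
        intro hc
        apply hxq
        have h4 := congrArg (fun y : L => y ^ q) hc
        rw [hcube x] at h4
        exact h4
      have hsum2 : x + (x ^ q) ^ q = lam := by
        have hd := sub_ne_zero.mpr hxqq
        have h10 : (x + (x ^ q) ^ q) * (x - (x ^ q) ^ q) = lam * (x - (x ^ q) ^ q) := by
          linear_combination hx2 - h3
        exact mul_right_cancel₀ hd h10
      have h11 : x ^ q = (x ^ q) ^ q := by linear_combination hsum1 - hsum2
      exact hxq (hfrobinj h11).symm
  · rintro ⟨rfl, rfl, rfl⟩
    have ha : a ≠ 0 := by intro h0; apply hdet; rw [h0]; ring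
    have haL : algebraMap K L a ≠ 0 := fun h0 => ha (einj (by rw [h0, map_zero]))
    have hid : ∀ P : ℙ L (L × L), Projectivization.map (matMap (L := L) a 0 0 a) hinj P = P := by
      intro P
      induction P using Projectivization.ind with
      | h v hv =>
        rw [Projectivization.map_mk, Projectivization.mk_eq_mk_iff']
        refine ⟨algebraMap K L a, ?_⟩
        show algebraMap K L a • v = matMap (L := L) a 0 0 a v
        refine Prod.ext ?_ ?_ <;>
          simp [matMap, smul_eq_mul, Algebra.smul_def]
    rw [show Projectivization.map (matMap (L := L) a 0 0 a) hinj = id from funext hid,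
      Set.image_id]
end

section
/- Let q be a prime power and x ∈ GF(q) with x ≠ 0 and x³ ≠ 1. Then there are no δ ∈ GF(q) \ {0,1} and t ∈ GF(q²) \ GF(q) satisfying simultaneously δ t^{q+1} + (δ-1)(t^q + t) - 1 = 0 and δ x t^{q+1} + (1-δ-x) t^q + δ((δ-1)x - δ) t + δ = 0. -/
/-- Let `q` be a prime power and `x ∈ GF(q)` with `x ≠ 0` and `x³ ≠ 1`. Then there are no
`δ ∈ GF(q) \ {0,1}` and `t ∈ GF(q²) \ GF(q)` satisfying simultaneously
`δ t^{q+1} + (δ-1)(t^q + t) - 1 = 0` and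
`δ x t^{q+1} + (1-δ-x) t^q + δ((δ-1)x - δ) t + δ = 0`. -/
theorem statement4 (q : ℕ) (K L : Type*) [Field K] [Field L] [Algebra K L]
    [Fintype K] [Fintype L] (hK : Fintype.card K = q) (hL : Fintype.card L = q ^ 2)
    (x : K) (hx0 : x ≠ 0) (hx3 : x ^ 3 ≠ 1) :
    ¬ ∃ (δ : K) (t : L), δ ≠ 0 ∧ δ ≠ 1 ∧ t ∉ (algebraMap K L).range ∧
      algebraMap K L δ * t ^ (q + 1) + (algebraMap K L δ - 1) * (t ^ q + t) - 1 = 0 ∧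
      algebraMap K L (δ * x) * t ^ (q + 1) + algebraMap K L (1 - δ - x) * t ^ q +
        algebraMap K L (δ * ((δ - 1) * x - δ)) * t + algebraMap K L δ = 0 := by
  rintro ⟨δ, t, hδ0, hδ1, hrange, h1, h2⟩
  have hinj : Function.Injective (algebraMap K L) := (algebraMap K L).injective
  obtain ⟨p, hp⟩ := CharP.exists K
  haveI : CharP K p := hp
  haveI : CharP L p := charP_of_injective_algebraMap hinj p
  obtain ⟨n, hpprime, hqpn⟩ := FiniteField.card K p
  haveI : Fact p.Prime := ⟨hpprime⟩
  have hq : q = p ^ (n : ℕ) := hK ▸ hqpn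
  have hq2 : 2 ≤ q := hK ▸ Fintype.one_lt_card
  have hfrob : ∀ a b : L, (a + b) ^ q = a ^ q + b ^ q := by
    intro a b; rw [hq]; exact add_pow_char_pow ..
  have htq2 : t ^ (q ^ 2) = t := by
    have := FiniteField.pow_card t; rwa [hL] at this
  -- membership criterion: fixed points of q-power Frobenius are in the range
  have hmem : ∀ y : L, y ^ q = y → y ∈ (algebraMap K L).range := by
    intro y hy
    classical
    set f : Polynomial L := Polynomial.X ^ q - Polynomial.X with hf
    have hq1 : 1 < q := hq2
    have hf0 : f ≠ 0 := FiniteField.X_pow_card_sub_X_ne_zero L hq1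
    have hdeg : f.natDegree = q := FiniteField.X_pow_card_sub_X_natDegree_eq L hq1
    set A : Finset L := Finset.univ.image (algebraMap K L) with hA
    have hAcard : A.card = q := by
      rw [hA, Finset.card_image_of_injective _ hinj, Finset.card_univ, hK]
    have hsub : A ⊆ f.roots.toFinset := by
      intro z hz
      rw [hA, Finset.mem_image] at hz
      obtain ⟨a, -, rfl⟩ := hz
      rw [Multiset.mem_toFinset, Polynomial.mem_roots hf0]
      have ha : a ^ q = a := by rw [← hK]; exact FiniteField.pow_card a
      simp [f, Polynomial.IsRoot, ← map_pow, ha]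
    have hcard : f.roots.toFinset.card ≤ q :=
      le_trans (Multiset.toFinset_card_le _) (le_trans (Polynomial.card_roots' f) hdeg.le)
    have hAeq : A = f.roots.toFinset :=
      Finset.eq_of_subset_of_card_le hsub (by omega)
    have hy' : y ∈ f.roots.toFinset := by
      rw [Multiset.mem_toFinset, Polynomial.mem_roots hf0]
      simp [f, Polynomial.IsRoot, hy]
    rw [← hAeq, hA, Finset.mem_image] at hy'
    obtain ⟨a, -, ha⟩ := hy'
    exact ⟨a, ha⟩
  -- trace and norm of t
  have hqq : q * q = q ^ 2 := (sq q).symm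
  have hTmem : (t ^ q + t) ∈ (algebraMap K L).range := by
    apply hmem
    rw [hfrob, ← pow_mul, hqq, htq2, add_comm]
  have hNmem : t ^ (q + 1) ∈ (algebraMap K L).range := by
    apply hmem
    rw [← pow_mul]
    have : (q + 1) * q = q ^ 2 + q := by ring
    rw [this, pow_add, htq2, pow_succ]
    ring
  obtain ⟨T, hT⟩ := hTmem
  obtain ⟨N, hN⟩ := hNmem
  -- equation 1 in K
  have e1 : δ * N + (δ - 1) * T - 1 = 0 := by
    apply hinj
    rw [map_zero]
    simp only [map_sub, map_add, map_mul, map_one, hT, hN]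
    linear_combination h1
  -- t^q = T - t
  have htq : t ^ q = algebraMap K L T - t := by linear_combination -hT
  -- rewrite equation 2 as linear in t
  have h2' : algebraMap K L (δ * x * N + (1 - δ - x) * T + δ)
      + algebraMap K L (δ * ((δ - 1) * x - δ) - (1 - δ - x)) * t = 0 := by
    have e := h2
    rw [← hN, htq] at e
    simp only [map_add, map_sub, map_mul, map_one] at e ⊢
    linear_combination e
  -- split into two K-equations
  have key : ∀ A B : K, algebraMap K L A + algebraMap K L B * t = 0 → B = 0 ∧ A = 0 := by
    intro A B h
    by_cases hB : B = 0
    · refine ⟨hB, ?_⟩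
      rw [hB, map_zero, zero_mul, add_zero] at h
      exact hinj (by rw [h, map_zero])
    · exfalso
      apply hrange
      refine ⟨-A / B, ?_⟩
      have hBL : algebraMap K L B ≠ 0 := fun hc => hB (hinj (by rw [hc, map_zero]))
      rw [map_div₀, map_neg]
      field_simp
      linear_combination -h
  obtain ⟨eB, eA⟩ := key _ _ h2'
  have hx1 : x ≠ 1 := by
    intro h; apply hx3; rw [h]; ring
  have hδ2 : δ ^ 2 = δ - 1 := by
    have hfac : (δ ^ 2 - δ + 1) * (x - 1) = 0 := by linear_combination eB
    rcases mul_eq_zero.mp hfac with h | h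
    · linear_combination h
    · exact absurd (by linear_combination h) hx1
  have hδ3 : δ ^ 3 = -1 := by linear_combination (δ + 1) * hδ2
  have hxδ : x + δ ≠ 0 := by
    intro h
    apply hx3
    have hx : x = -δ := by linear_combination h
    rw [hx]; linear_combination -hδ3
  have hT' : T = -δ ^ 2 := by
    have hD : δ * (x + δ) * T = δ * (x + δ) * (-δ ^ 2) := by
      linear_combination x * e1 - eA + T * hδ2 + (x + δ) * hδ3
    exact mul_left_cancel₀ (mul_ne_zero hδ0 hxδ) hD
  have hN' : N = -δ := by
    have h : δ * (N + δ) = 0 := by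
      linear_combination e1 - (δ - 1) * hT' + (δ + 1) * hδ2
    have := (mul_eq_zero.mp h).resolve_left hδ0
    linear_combination this
  -- final contradiction: t satisfies (t - 1)(t + δ) = 0
  set d : L := algebraMap K L δ with hd
  have hdL : d ^ 2 = d - 1 := by
    rw [hd, ← map_pow, hδ2, map_sub, map_one]
  have htn : (algebraMap K L T - t) * t = algebraMap K L N := by
    rw [← htq, hN, pow_succ]
  have hTL : algebraMap K L T = -d ^ 2 := by
    rw [hT', map_neg, map_pow, hd]
  have hNL : algebraMap K L N = -d := by rw [hN', map_neg, hd]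
  have hfin : (t - 1) * (t + d) = 0 := by
    rw [hTL, hNL] at htn
    linear_combination -htn - t * hdL
  rcases mul_eq_zero.mp hfin with h | h
  · exact hrange ⟨1, by rw [map_one]; linear_combination -h⟩
  · exact hrange ⟨-δ, by rw [map_neg, ← hd]; linear_combination -h⟩
end

section
/- In PG(3,q) with q > 2, let ℓ₁, ℓ₂, ℓ₃ be three pairwise skew lines lying in the opposite regulus of a hyperbolic quadric Q⁺(3,q), and let r be a line external to Q⁺(3,q). Then the set B of the 4(q+1) points of ℓ₁ ∪ ℓ₂ ∪ ℓ₃ ∪ r is a minimal cutting blocking set: B is a cutting blocking set but for every point P ∈ B, B \ {P} is not a cutting blocking set. -/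
open scoped LinearAlgebra.Projectivization
open Projectivization Module

/-- A plane (hyperplane) of `PG(3, q) = ℙ F (Fin 4 → F)`. -/
def IsProjHyperplane {K V : Type*} [Field K] [AddCommGroup V] [Module K V]
    (H : Set (ℙ K V)) : Prop :=
  ∃ f : V →ₗ[K] K, f ≠ 0 ∧ H = {p : ℙ K V | f p.rep = 0}

/-- A line of the projective space `ℙ K V`. -/
def IsProjLine {K V : Type*} [Field K] [AddCommGroup V] [Module K V]
    (ℓ : Set (ℙ K V)) : Prop :=
  ∃ W : Submodule K V, Module.finrank K W = 2 ∧ ℓ = {p : ℙ K V | p.submodule ≤ W}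

/-- A cutting blocking set: for every hyperplane `H`, the set `H ∩ X` spans `H`. -/
def IsCuttingBlockingSet {K V : Type*} [Field K] [AddCommGroup V] [Module K V]
    (X : Set (ℙ K V)) : Prop :=
  ∀ H : Set (ℙ K V), IsProjHyperplane H →
    Projectivization.Subspace.span (H ∩ X) = Projectivization.Subspace.span H

/-- A hyperbolic quadric `Q⁺(3, q)` of `PG(3, q)`: the image of the canonical quadric
`X₁X₄ = X₂X₃` under a projectivity. -/
def IsHyperbolicQuadric {F : Type*} [Field F] (S : Set (ℙ F (Fin 4 → F))) : Prop :=
  ∃ e : (Fin 4 → F) ≃ₗ[F] (Fin 4 → F),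
    S = {P : ℙ F (Fin 4 → F) | e P.rep 0 * e P.rep 3 = e P.rep 1 * e P.rep 2}

set_option linter.unusedSectionVars false
set_option maxHeartbeats 1000000

section Basics
variable {K V : Type*} [Field K] [AddCommGroup V] [Module K V]

/-- The set of projective points lying in a submodule, as a projective subspace. -/
def subOf (M : Submodule K V) : Projectivization.Subspace K V where
  carrier := {p : ℙ K V | p.submodule ≤ M}
  mem_add' v w hv hw hvw h1 h2 := by
    simp only [Set.mem_setOf_eq, Projectivization.submodule_mk,
      Submodule.span_singleton_le_iff_mem] at h1 h2 ⊢
    exact M.add_mem h1 h2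

lemma mem_subOf {M : Submodule K V} {p : ℙ K V} : p ∈ subOf M ↔ p.submodule ≤ M := Iff.rfl

lemma mk_mem_subOf {M : Submodule K V} {v : V} (hv : v ≠ 0) :
    Projectivization.mk K v hv ∈ subOf M ↔ v ∈ M := by
  simp [mem_subOf, Projectivization.submodule_mk, Submodule.span_singleton_le_iff_mem]

lemma mem_line_iff {M : Submodule K V} {v : V} (hv : v ≠ 0) :
    Projectivization.mk K v hv ∈ {p : ℙ K V | p.submodule ≤ M} ↔ v ∈ M :=
  mk_mem_subOf hv

lemma rep_mem_iff {M : Submodule K V} {p : ℙ K V} :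
    p.submodule ≤ M ↔ p.rep ∈ M := by
  rw [Projectivization.submodule_eq, Submodule.span_singleton_le_iff_mem]

/-- Bridge lemma: if a nonzero vector is in the linear span of representatives of a set of
projective points, then its point is in the projective span. -/
lemma mk_mem_span_of_mem_span (S : Set (ℙ K V)) (v : V)
    (h : v ∈ Submodule.span K (Projectivization.rep '' S)) (hv : v ≠ 0) :
    Projectivization.mk K v hv ∈ Projectivization.Subspace.span S := by
  induction h using Submodule.span_induction with
  | mem x hx =>
    obtain ⟨p, hp, rfl⟩ := hx
    rw [Projectivization.mk_rep]
    exact Projectivization.Subspace.subset_span _ hp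
  | zero => exact absurd rfl hv
  | add x y hx hy ihx ihy =>
    rcases eq_or_ne x 0 with rfl | hx0
    · have hy0 : y ≠ 0 := by simpa using hv
      have : Projectivization.mk K (0 + y) hv = Projectivization.mk K y hy0 := by
        rw [Projectivization.mk_eq_mk_iff]; exact ⟨1, by simp⟩
      rw [this]; exact ihy hy0
    rcases eq_or_ne y 0 with rfl | hy0
    · have : Projectivization.mk K (x + 0) hv = Projectivization.mk K x hx0 := by
        rw [Projectivization.mk_eq_mk_iff]; exact ⟨1, by simp⟩
      rw [this]; exact ihx hx0
    · exact (Projectivization.Subspace.span S).mem_add x y hx0 hy0 hv (ihx hx0) (ihy hy0)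
  | smul a x hx ihx =>
    have ha : a ≠ 0 := by rintro rfl; simp at hv
    have hx0 : x ≠ 0 := by rintro rfl; simp at hv
    have : Projectivization.mk K (a • x) hv = Projectivization.mk K x hx0 := by
      rw [Projectivization.mk_eq_mk_iff]
      exact ⟨Units.mk0 a ha, rfl⟩
    rw [this]; exact ihx hx0
end Basics

section FinDim
variable {K V : Type*} [Field K] [AddCommGroup V] [Module K V] [FiniteDimensional K V]

lemma line_of_dim_one {M : Submodule K V} {v : V} (hv : v ≠ 0)
    (hM : M = K ∙ v) : {p : ℙ K V | p.submodule ≤ M} = {Projectivization.mk K v hv} := by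
  ext p
  simp only [Set.mem_setOf_eq, Set.mem_singleton_iff, hM]
  constructor
  · intro h
    have h1 : finrank K (K ∙ v : Submodule K V) = 1 := finrank_span_singleton hv
    have h2 : p.submodule = K ∙ v := by
      refine Submodule.eq_of_le_of_finrank_le h ?_
      rw [h1, Projectivization.finrank_submodule]
    rw [← Projectivization.submodule_mk v hv] at h2
    exact Projectivization.submodule_injective h2
  · rintro rfl
    rw [Projectivization.submodule_mk]

lemma dim_inter_ge (A B : Submodule K V) :
    finrank K A + finrank K B ≤ finrank K V + finrank K (A ⊓ B : Submodule K V) := by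
  have := Submodule.finrank_sup_add_finrank_inf_eq A B
  have h2 : finrank K (A ⊔ B : Submodule K V) ≤ finrank K V := Submodule.finrank_le _
  omega

lemma exists_nonzero_inter {A B : Submodule K V}
    (h : finrank K V < finrank K A + finrank K B) :
    ∃ v : V, v ∈ A ⊓ B ∧ v ≠ 0 := by
  have := dim_inter_ge A B
  have hpos : 0 < finrank K (A ⊓ B : Submodule K V) := by omega
  have hne : A ⊓ B ≠ ⊥ := by
    intro h0
    rw [h0] at hpos; simp at hpos
  obtain ⟨v, hv, hv0⟩ := Submodule.exists_mem_ne_zero_of_ne_bot hne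
  exact ⟨v, hv, hv0⟩

end FinDim

section Hyp
variable {K V : Type*} [Field K] [AddCommGroup V] [Module K V] [FiniteDimensional K V]

/-- A hyperplane set equals the set of points in the kernel of its functional. -/
lemma hyperplane_eq_ker {f : V →ₗ[K] K} :
    {p : ℙ K V | f p.rep = 0} = {p : ℙ K V | p.submodule ≤ LinearMap.ker f} := by
  ext p
  simp only [Set.mem_setOf_eq, rep_mem_iff, LinearMap.mem_ker]

lemma finrank_ker {f : V →ₗ[K] K} (hf : f ≠ 0) :
    finrank K (LinearMap.ker f) + 1 = finrank K V := by
  have h := LinearMap.finrank_range_add_finrank_ker f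
  have hr : finrank K (LinearMap.range f) = 1 := by
    have h1 : LinearMap.range f ≠ ⊥ := by
      intro h0
      exact hf (LinearMap.range_eq_bot.mp h0)
    have h2 : finrank K (LinearMap.range f) ≤ 1 := by
      simpa using Submodule.finrank_le (LinearMap.range f)
    have h3 : finrank K (LinearMap.range f) ≠ 0 := by
      intro h0
      exact h1 (Submodule.finrank_eq_zero.mp h0)
    omega
  omega

/-- Any codimension-1 submodule is the kernel of a nonzero functional, hence the point set is
a hyperplane. -/
lemma exists_functional {U : Submodule K V} (hU : finrank K U + 1 = finrank K V) :
    ∃ f : V →ₗ[K] K, f ≠ 0 ∧ LinearMap.ker f = U := by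
  have hq : finrank K (V ⧸ U) = 1 := by
    have := Submodule.finrank_quotient_add_finrank U
    omega
  have : Nonempty ((V ⧸ U) ≃ₗ[K] K) := by
    apply FiniteDimensional.nonempty_linearEquiv_of_finrank_eq
    rw [hq, finrank_self]
  obtain ⟨e⟩ := this
  refine ⟨(e : (V ⧸ U) →ₗ[K] K).comp U.mkQ, ?_, ?_⟩
  · intro h0
    have hUt : U ≠ ⊤ := by
      intro ht
      rw [ht, finrank_top] at hU
      omega
    obtain ⟨x, hx⟩ : ∃ x, x ∉ U := by
      by_contra hc
      push_neg at hc
      exact hUt (Submodule.eq_top_iff'.mpr hc)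
    have : e (U.mkQ x) = 0 := congrFun (congrArg DFunLike.coe h0) x
    have hx0 : U.mkQ x = 0 := e.injective (by simpa using this)
    exact hx ((Submodule.Quotient.mk_eq_zero U).mp hx0)
  · ext x
    simp only [LinearMap.mem_ker, LinearMap.coe_comp, Function.comp_apply,
      LinearEquiv.coe_coe]
    rw [show (e (U.mkQ x) = 0 ↔ U.mkQ x = 0) from ⟨fun h => e.injective (by simpa using h), fun h => by rw [h]; simp⟩]
    exact Submodule.Quotient.mk_eq_zero U

end Hyp

section Quadric
variable {F : Type*} [Field F]

/-- The quadratic form of the hyperbolic quadric determined by `e`. -/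
def Phi (e : (Fin 4 → F) ≃ₗ[F] (Fin 4 → F)) (x : Fin 4 → F) : F :=
  e x 0 * e x 3 - e x 1 * e x 2

/-- The polar bilinear form. -/
def PhiB (e : (Fin 4 → F) ≃ₗ[F] (Fin 4 → F)) (x y : Fin 4 → F) : F :=
  e x 0 * e y 3 + e y 0 * e x 3 - e x 1 * e y 2 - e y 1 * e x 2

lemma Phi_combo (e : (Fin 4 → F) ≃ₗ[F] (Fin 4 → F)) (s t : F) (x y : Fin 4 → F) :
    Phi e (s • x + t • y) = s ^ 2 * Phi e x + s * t * PhiB e x y + t ^ 2 * Phi e y := by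
  simp only [Phi, PhiB, map_add, map_smul, Pi.add_apply, Pi.smul_apply, smul_eq_mul]
  ring

lemma Phi_smul (e : (Fin 4 → F) ≃ₗ[F] (Fin 4 → F)) (a : F) (x : Fin 4 → F) :
    Phi e (a • x) = a ^ 2 * Phi e x := by
  simp only [Phi, map_smul, Pi.smul_apply, smul_eq_mul]
  ring

/-- Membership in the quadric in terms of any representative vector. -/
lemma mem_quadric_iff {e : (Fin 4 → F) ≃ₗ[F] (Fin 4 → F)}
    {Q : Set (ℙ F (Fin 4 → F))}
    (hQ : Q = {P : ℙ F (Fin 4 → F) | e P.rep 0 * e P.rep 3 = e P.rep 1 * e P.rep 2})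
    {v : Fin 4 → F} (hv : v ≠ 0) :
    Projectivization.mk F v hv ∈ Q ↔ Phi e v = 0 := by
  obtain ⟨a, ha⟩ := Projectivization.exists_smul_eq_mk_rep F v hv
  have hrep : (Projectivization.mk F v hv).rep = (a : F) • v := ha.symm
  rw [hQ]
  simp only [Set.mem_setOf_eq]
  rw [show ∀ w : Fin 4 → F, (e w 0 * e w 3 = e w 1 * e w 2) ↔ Phi e w = 0 by
    intro w; rw [Phi, sub_eq_zero]]
  rw [hrep, Phi_smul]
  constructor
  · intro h
    have ha2 : (a : F) ^ 2 ≠ 0 := pow_ne_zero _ a.ne_zero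
    exact (mul_eq_zero.mp h).resolve_left ha2
  · intro h; rw [h, mul_zero]

/-- A 2-dimensional subspace containing three distinct projective points of the quadric is
contained in the quadric cone. -/
lemma line_in_quadric {e : (Fin 4 → F) ≃ₗ[F] (Fin 4 → F)}
    {a b c : Fin 4 → F} (hc : ∃ s t : F, s ≠ 0 ∧ t ≠ 0 ∧ c = s • a + t • b)
    (ha : Phi e a = 0) (hb : Phi e b = 0) (hcq : Phi e c = 0) :
    ∀ x ∈ Submodule.span F {a, b}, Phi e x = 0 := by
  obtain ⟨s, t, hs, ht, rfl⟩ := hc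
  have hB : PhiB e a b = 0 := by
    rw [Phi_combo, ha, hb] at hcq
    have h1 : s * t * PhiB e a b = 0 := by linear_combination hcq
    have := mul_ne_zero hs ht
    rcases mul_eq_zero.mp h1 with h | h
    · exact absurd h this
    · exact h
  intro x hx
  obtain ⟨u, w, rfl⟩ := Submodule.mem_span_pair.mp hx
  rw [Phi_combo, ha, hb, hB]
  ring

end Quadric

section Trans
variable {K V : Type*} [Field K] [AddCommGroup V] [Module K V] [FiniteDimensional K V]

lemma finrank_pos_of_ne_bot {M : Submodule K V} (h : M ≠ ⊥) : 0 < finrank K M := by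
  rcases Nat.eq_zero_or_pos (finrank K M) with h0 | h0
  · exact absurd (Submodule.finrank_eq_zero.mp h0) h
  · exact h0

lemma ne_bot_of_finrank_pos {M : Submodule K V} (h : 0 < finrank K M) : M ≠ ⊥ := by
  intro h0; rw [h0] at h; simp at h0 h

lemma eq_of_le_of_rank {M N : Submodule K V} (h : M ≤ N) (hr : finrank K N ≤ finrank K M) :
    M = N := Submodule.eq_of_le_of_finrank_le h hr

lemma one_dim_inf_bot {x y : V} (hx : x ≠ 0) (hy : y ≠ 0)
    (h : (K ∙ x) ≠ (K ∙ y)) : (K ∙ x) ⊓ (K ∙ y) = ⊥ := by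
  by_contra hne
  have h1 : finrank K ((K ∙ x) ⊓ (K ∙ y) : Submodule K V) ≥ 1 := finrank_pos_of_ne_bot hne
  have hx1 : finrank K (K ∙ x : Submodule K V) = 1 := finrank_span_singleton hx
  have hy1 : finrank K (K ∙ y : Submodule K V) = 1 := finrank_span_singleton hy
  have e1 : (K ∙ x) ⊓ (K ∙ y) = (K ∙ x) := eq_of_le_of_rank inf_le_left (by omega)
  have e2 : (K ∙ x) ⊓ (K ∙ y) = (K ∙ y) := eq_of_le_of_rank inf_le_right (by omega)
  exact h (e1 ▸ e2)

lemma finrank_sup_one_dim {x y : V} (hx : x ≠ 0) (hy : y ≠ 0)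
    (h : (K ∙ x) ≠ (K ∙ y)) : finrank K ((K ∙ x) ⊔ (K ∙ y) : Submodule K V) = 2 := by
  have := Submodule.finrank_sup_add_finrank_inf_eq (K ∙ x) (K ∙ y)
  rw [one_dim_inf_bot hx hy h, finrank_span_singleton hx, finrank_span_singleton hy] at this
  simp only [finrank_bot] at this
  omega

/-- Linear independence from non-membership in a span. -/
lemma li_of_notMem {a b : V} (ha : a ≠ 0) (hb : b ∉ (K ∙ a)) :
    ∀ x y : K, x • a + y • b = 0 → x = 0 ∧ y = 0 := by
  intro x y hxy
  have hb0 : b ≠ 0 := by rintro rfl; exact hb (Submodule.zero_mem _)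
  rcases eq_or_ne y 0 with rfl | hy
  · simp only [zero_smul, add_zero, smul_eq_zero] at hxy
    exact ⟨hxy.resolve_right ha, rfl⟩
  · exfalso
    apply hb
    have : b = (-x / y) • a := by
      have h1 : y • b + x • a = 0 := by rw [← hxy]; abel
      have h2 : y • b = (-x) • a := by
        rw [neg_smul]; exact eq_neg_of_add_eq_zero_left h1
      calc b = y⁻¹ • (y • b) := by rw [smul_smul, inv_mul_cancel₀ hy, one_smul]
        _ = y⁻¹ • ((-x) • a) := by rw [h2]
        _ = (-x / y) • a := by rw [smul_smul, div_eq_mul_inv, mul_comm]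
    rw [this]
    exact Submodule.smul_mem _ _ (Submodule.mem_span_singleton_self a)

lemma span_combo_ne {a b : V} (ha : a ≠ 0) (hb : b ∉ (K ∙ a)) {α β γ δ : K}
    (hdet : α * δ - β * γ ≠ 0) :
    (K ∙ (α • a + β • b)) ≠ (K ∙ (γ • a + δ • b)) := by
  intro h
  have hmem : γ • a + δ • b ∈ (K ∙ (α • a + β • b)) := by
    rw [h]; exact Submodule.mem_span_singleton_self _
  obtain ⟨s, hs⟩ := Submodule.mem_span_singleton.mp hmem
  have hkey : (s * α - γ) • a + (s * β - δ) • b = 0 := by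
    have h2 := hs
    simp only [smul_add, smul_smul] at h2
    rw [sub_smul, sub_smul]
    calc (s * α) • a - γ • a + ((s * β) • b - δ • b)
        = ((s * α) • a + (s * β) • b) - (γ • a + δ • b) := by abel
      _ = 0 := by rw [h2]; abel
  obtain ⟨h1, h2⟩ := li_of_notMem ha hb _ _ hkey
  apply hdet
  have hg : γ = s * α := (sub_eq_zero.mp h1).symm
  have hd : δ = s * β := (sub_eq_zero.mp h2).symm
  rw [hg, hd]; ring

lemma combo_ne_zero {a b : V} (ha : a ≠ 0) (hb : b ∉ (K ∙ a)) {α β : K}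
    (h : ¬(α = 0 ∧ β = 0)) : α • a + β • b ≠ 0 := by
  intro h0
  exact h (li_of_notMem ha hb _ _ h0)

end Trans

section Trans2
variable {K V : Type*} [Field K] [AddCommGroup V] [Module K V] [FiniteDimensional K V]

lemma inf_rank_one {T X : Submodule K V} (hT2 : finrank K T = 2) (hX2 : finrank K X = 2)
    (hne : T ≠ X) (hnb : T ⊓ X ≠ ⊥) : finrank K (T ⊓ X : Submodule K V) = 1 := by
  have h1 : 0 < finrank K (T ⊓ X : Submodule K V) := finrank_pos_of_ne_bot hnb
  have h2 : finrank K (T ⊓ X : Submodule K V) ≤ 2 := by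
    have := Submodule.finrank_mono (inf_le_left : T ⊓ X ≤ T); omega
  rcases Nat.lt_or_ge (finrank K (T ⊓ X : Submodule K V)) 2 with h | h
  · omega
  · exfalso
    have e1 : T ⊓ X = T := eq_of_le_of_rank inf_le_left (by rw [hT2]; omega)
    have e2 : T ⊓ X = X := eq_of_le_of_rank inf_le_right (by rw [hX2]; omega)
    exact hne (e1 ▸ e2)

variable (A B C : Submodule K V)

/-- A transversal of three pairwise skew lines. -/
def IsTransv (T : Submodule K V) : Prop :=
  finrank K T = 2 ∧ T ⊓ A ≠ ⊥ ∧ T ⊓ B ≠ ⊥ ∧ T ⊓ C ≠ ⊥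

variable {A B C}
variable (hV : finrank K V = 4) (hA : finrank K A = 2) (hB : finrank K B = 2)
  (hC : finrank K C = 2) (hAB : A ⊓ B = ⊥) (hAC : A ⊓ C = ⊥) (hBC : B ⊓ C = ⊥)

include hAB in
lemma trans_ne_A {T : Submodule K V} (hT : IsTransv A B C T) : T ≠ A := by
  rintro rfl
  exact hT.2.2.1 hAB

include hV hA hB hC hAB hAC hBC in
/-- Distinct transversals are skew. -/
lemma trans_skew {T T' : Submodule K V} (hT : IsTransv A B C T) (hT' : IsTransv A B C T')
    (hne : T ≠ T') : T ⊓ T' = ⊥ := by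
  by_contra hbot
  have hTT : finrank K (T ⊓ T' : Submodule K V) = 1 := inf_rank_one hT.1 hT'.1 hne hbot
  have hS : finrank K (T ⊔ T' : Submodule K V) = 3 := by
    have := Submodule.finrank_sup_add_finrank_inf_eq T T'
    rw [hTT, hT.1, hT'.1] at this
    omega
  have claim : ∀ X : Submodule K V, finrank K X = 2 → T ⊓ X ≠ ⊥ → T' ⊓ X ≠ ⊥ →
      T ≠ X → T' ≠ X → (T ⊓ X = T' ⊓ X) ∨ X ≤ T ⊔ T' := by
    intro X hX h1 h2 hTX hT'X
    rcases eq_or_ne (T ⊓ X) (T' ⊓ X) with h | h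
    · exact Or.inl h
    · right
      have r1 : finrank K (T ⊓ X : Submodule K V) = 1 := inf_rank_one hT.1 hX hTX h1
      have r2 : finrank K (T' ⊓ X : Submodule K V) = 1 := inf_rank_one hT'.1 hX hT'X h2
      have hii : (T ⊓ X) ⊓ (T' ⊓ X) = ⊥ := by
        by_contra hc
        have e1 : (T ⊓ X) ⊓ (T' ⊓ X) = T ⊓ X := eq_of_le_of_rank inf_le_left
          (by rw [r1]; exact finrank_pos_of_ne_bot hc)
        have e2 : (T ⊓ X) ⊓ (T' ⊓ X) = T' ⊓ X := eq_of_le_of_rank inf_le_right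
          (by rw [r2]; exact finrank_pos_of_ne_bot hc)
        exact h (e1 ▸ e2)
      have hsup : finrank K ((T ⊓ X) ⊔ (T' ⊓ X) : Submodule K V) = 2 := by
        have := Submodule.finrank_sup_add_finrank_inf_eq (T ⊓ X) (T' ⊓ X)
        rw [hii, r1, r2] at this
        simp only [finrank_bot] at this
        omega
      have hXeq : (T ⊓ X) ⊔ (T' ⊓ X) = X := eq_of_le_of_rank
        (sup_le inf_le_right inf_le_right) (by rw [hX, hsup])
      rw [← hXeq]
      exact sup_le (le_trans inf_le_left le_sup_left) (le_trans inf_le_left le_sup_right)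
  have pair : ∀ X Y : Submodule K V, X ⊓ Y = ⊥ → T ⊓ X ≠ ⊥ → T ⊓ Y ≠ ⊥ →
      T ⊓ X = T' ⊓ X → T ⊓ Y = T' ⊓ Y → False := by
    intro X Y hXY hTXb hTYb heX heY
    have r1 : 1 ≤ finrank K (T ⊓ X : Submodule K V) := finrank_pos_of_ne_bot hTXb
    have hXle : T ⊓ X ≤ T ⊓ T' := le_inf inf_le_left (heX ▸ inf_le_left : T ⊓ X ≤ T')
    have hYle : T ⊓ Y ≤ T ⊓ T' := le_inf inf_le_left (heY ▸ inf_le_left : T ⊓ Y ≤ T')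
    have e1 : T ⊓ X = T ⊓ T' := eq_of_le_of_rank hXle (by omega)
    have : T ⊓ Y ≤ X ⊓ Y := le_inf (le_trans (e1 ▸ hYle) inf_le_right) inf_le_right
    rw [hXY, le_bot_iff] at this
    exact hTYb this
  -- hence at least two base lines are inside `S`, contradiction with dimensions
  have dimcon : ∀ X Y : Submodule K V, finrank K X = 2 → finrank K Y = 2 → X ⊓ Y = ⊥ →
      X ≤ T ⊔ T' → Y ≤ T ⊔ T' → False := by
    intro X Y hX hY hXY hXS hYS
    have h1 : X ⊔ Y ≤ T ⊔ T' := sup_le hXS hYS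
    have h2 : finrank K (X ⊔ Y : Submodule K V) = 4 := by
      have := Submodule.finrank_sup_add_finrank_inf_eq X Y
      rw [hXY, hX, hY] at this
      simp only [finrank_bot] at this
      omega
    have := Submodule.finrank_mono h1
    omega
  have hTA := trans_ne_A hAB hT
  have hT'A := trans_ne_A hAB hT'
  have hTB := trans_ne_A (A := B) (B := A) (by rw [inf_comm]; exact hAB)
    ⟨hT.1, hT.2.2.1, hT.2.1, hT.2.2.2⟩
  have hT'B := trans_ne_A (A := B) (B := A) (by rw [inf_comm]; exact hAB)
    ⟨hT'.1, hT'.2.2.1, hT'.2.1, hT'.2.2.2⟩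
  have hTC := trans_ne_A (A := C) (B := A) (by rw [inf_comm]; exact hAC)
    ⟨hT.1, hT.2.2.2, hT.2.1, hT.2.2.1⟩
  have hT'C := trans_ne_A (A := C) (B := A) (by rw [inf_comm]; exact hAC)
    ⟨hT'.1, hT'.2.2.2, hT'.2.1, hT'.2.2.1⟩
  rcases claim A hA hT.2.1 hT'.2.1 hTA hT'A with cA | cA
  · rcases claim B hB hT.2.2.1 hT'.2.2.1 hTB hT'B with cB | cB
    · exact pair A B hAB hT.2.1 hT.2.2.1 cA cB
    · rcases claim C hC hT.2.2.2 hT'.2.2.2 hTC hT'C with cC | cC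
      · exact pair A C hAC hT.2.1 hT.2.2.2 cA cC
      · exact dimcon B C hB hC hBC cB cC
  · rcases claim B hB hT.2.2.1 hT'.2.2.1 hTB hT'B with cB | cB
    · rcases claim C hC hT.2.2.2 hT'.2.2.2 hTC hT'C with cC | cC
      · exact pair B C hBC hT.2.2.1 hT.2.2.2 cB cC
      · exact dimcon A C hA hC hAC cA cC
    · exact dimcon A B hA hB hAB cA cB

include hV hB hC hAB hAC in
/-- Through every point of `A` there is a transversal of `A`, `B`, `C`. -/
lemma exists_transversal_through {x : V} (hx : x ∈ A) (hx0 : x ≠ 0) :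
    ∃ T : Submodule K V, IsTransv A B C T ∧ x ∈ T := by
  have hxB : x ∉ B := by
    intro h
    exact hx0 (by simpa [hAB] using Submodule.mem_inf.mpr ⟨hx, h⟩ : x ∈ (⊥ : Submodule K V))
  have hxC : x ∉ C := by
    intro h
    exact hx0 (by simpa [hAC] using Submodule.mem_inf.mpr ⟨hx, h⟩ : x ∈ (⊥ : Submodule K V))
  set S : Submodule K V := B ⊔ (K ∙ x) with hSdef
  have hxKx : (K ∙ x) ⊓ B = ⊥ := by
    by_contra hc
    obtain ⟨v, hv, hv0⟩ := Submodule.exists_mem_ne_zero_of_ne_bot hc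
    obtain ⟨s, rfl⟩ := Submodule.mem_span_singleton.mp hv.1
    have hs : s ≠ 0 := by rintro rfl; simp at hv0
    exact hxB (by simpa [hs] using Submodule.smul_mem B s⁻¹ hv.2 : x ∈ B)
  have hS : finrank K S = 3 := by
    have := Submodule.finrank_sup_add_finrank_inf_eq B (K ∙ x)
    rw [inf_comm, hxKx] at this
    rw [hSdef]
    rw [finrank_span_singleton hx0, hB] at this
    simp only [finrank_bot] at this
    omega
  obtain ⟨y, hy, hy0⟩ : ∃ y : V, y ∈ C ⊓ S ∧ y ≠ 0 := exists_nonzero_inter (by rw [hV, hC, hS]; omega)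
  have hyx : y ∉ (K ∙ x) := by
    intro h
    obtain ⟨s, rfl⟩ := Submodule.mem_span_singleton.mp h
    have hs : s ≠ 0 := by rintro rfl; simp at hy0
    exact hxC (by simpa [hs] using Submodule.smul_mem C s⁻¹ hy.1 : x ∈ C)
  set T : Submodule K V := (K ∙ x) ⊔ (K ∙ y) with hTdef
  have hT2 : finrank K T = 2 := by
    rw [hTdef, sup_comm]
    have hyKx : (K ∙ y) ⊓ (K ∙ x) = ⊥ := by
      by_contra hc
      obtain ⟨v, hv, hv0⟩ := Submodule.exists_mem_ne_zero_of_ne_bot hc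
      obtain ⟨s, rfl⟩ := Submodule.mem_span_singleton.mp hv.1
      have hs : s ≠ 0 := by rintro rfl; simp at hv0
      exact hyx (by simpa [hs] using Submodule.smul_mem _ s⁻¹ hv.2 : y ∈ (K ∙ x))
    have := Submodule.finrank_sup_add_finrank_inf_eq (K ∙ y) (K ∙ x)
    rw [hyKx, finrank_span_singleton hy0, finrank_span_singleton hx0] at this
    simp only [finrank_bot] at this
    omega
  have hxT : x ∈ T := Submodule.mem_sup_left (Submodule.mem_span_singleton_self x)
  have hyT : y ∈ T := Submodule.mem_sup_right (Submodule.mem_span_singleton_self y)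
  have hTS : T ≤ S := sup_le
    ((Submodule.span_singleton_le_iff_mem x S).mpr
      (Submodule.mem_sup_right (Submodule.mem_span_singleton_self x)))
    ((Submodule.span_singleton_le_iff_mem y S).mpr hy.2)
  refine ⟨T, ⟨hT2, ?_, ?_, ?_⟩, hxT⟩
  · exact ne_bot_of_finrank_pos (by
      have : (K ∙ x) ≤ T ⊓ A := le_inf ((Submodule.span_singleton_le_iff_mem x T).mpr hxT)
        ((Submodule.span_singleton_le_iff_mem x A).mpr hx)
      have := Submodule.finrank_mono this
      rw [finrank_span_singleton hx0] at this
      omega)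
  · -- T ⊓ B ≠ ⊥ by dimension count inside S
    have hsupS : T ⊔ B ≤ S := sup_le hTS le_sup_left
    have h1 : finrank K (T ⊔ B : Submodule K V) ≤ 3 := by
      have := Submodule.finrank_mono hsupS
      omega
    have h2 := Submodule.finrank_sup_add_finrank_inf_eq T B
    rw [hT2, hB] at h2
    exact ne_bot_of_finrank_pos (by omega)
  · exact ne_bot_of_finrank_pos (by
      have : (K ∙ y) ≤ T ⊓ C := le_inf ((Submodule.span_singleton_le_iff_mem y T).mpr hyT)
        ((Submodule.span_singleton_le_iff_mem y C).mpr hy.1)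
      have := Submodule.finrank_mono this
      rw [finrank_span_singleton hy0] at this
      omega)

include hV hA hB hC hAB hAC hBC in
/-- For `v ∉ X` (`X` one of the three base lines), at most one transversal `T` satisfies
`v ∈ X ⊔ T`. -/
lemma bad_unique {T T' : Submodule K V} (hT : IsTransv A B C T) (hT' : IsTransv A B C T')
    {X : Submodule K V} (hX : finrank K X = 2) (hTX : T ≠ X) (hT'X : T' ≠ X)
    (hTXb : T ⊓ X ≠ ⊥) (hT'Xb : T' ⊓ X ≠ ⊥)
    {v : V} (hv : v ∉ X) (hbad : v ∈ X ⊔ T) (hbad' : v ∈ X ⊔ T') : T = T' := by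
  have hv0 : v ≠ 0 := by rintro rfl; exact hv (Submodule.zero_mem X)
  have hXv : finrank K (X ⊔ (K ∙ v) : Submodule K V) = 3 := by
    have hinf : X ⊓ (K ∙ v) = ⊥ := by
      by_contra hc
      obtain ⟨w, hw, hw0⟩ := Submodule.exists_mem_ne_zero_of_ne_bot hc
      obtain ⟨s, rfl⟩ := Submodule.mem_span_singleton.mp hw.2
      have hs : s ≠ 0 := by rintro rfl; simp at hw0
      exact hv (by simpa [hs] using Submodule.smul_mem X s⁻¹ hw.1 : v ∈ X)
    have := Submodule.finrank_sup_add_finrank_inf_eq X (K ∙ v)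
    rw [hinf, hX, finrank_span_singleton hv0] at this
    simp only [finrank_bot] at this
    omega
  have key : ∀ T'' : Submodule K V, IsTransv A B C T'' → T'' ≠ X → T'' ⊓ X ≠ ⊥ →
      v ∈ X ⊔ T'' → T'' ≤ X ⊔ (K ∙ v) := by
    intro T'' hT'' hne hnb hbad''
    have hr : finrank K (X ⊔ T'' : Submodule K V) = 3 := by
      have h1 : finrank K (T'' ⊓ X : Submodule K V) = 1 := inf_rank_one hT''.1 hX hne hnb
      have := Submodule.finrank_sup_add_finrank_inf_eq X T''
      rw [inf_comm] at this
      rw [h1, hX, hT''.1] at this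
      omega
    have hle : X ⊔ (K ∙ v) ≤ X ⊔ T'' := sup_le le_sup_left
      ((Submodule.span_singleton_le_iff_mem v _).mpr hbad'')
    have heq : X ⊔ (K ∙ v) = X ⊔ T'' := eq_of_le_of_rank hle (by omega)
    rw [heq]
    exact le_sup_right
  have h1 := key T hT hTX hTXb hbad
  have h2 := key T' hT' hT'X hT'Xb hbad'
  by_contra hne
  have hskew := trans_skew hV hA hB hC hAB hAC hBC hT hT' hne
  have hsup : T ⊔ T' ≤ X ⊔ (K ∙ v) := sup_le h1 h2
  have h3 : finrank K (T ⊔ T' : Submodule K V) = 4 := by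
    have := Submodule.finrank_sup_add_finrank_inf_eq T T'
    rw [hskew, hT.1, hT'.1] at this
    simp only [finrank_bot] at this
    omega
  have := Submodule.finrank_mono hsup
  omega

include hV hA hB hC hAB hAC hBC in
/-- Given at least 3 scalars and `v` not on any base line, there is a transversal avoiding all
three bad conditions. -/
lemma exists_good_transversal [Fintype K] (hK : 2 < Fintype.card K)
    {v : V} (hvA : v ∉ A) (hvB : v ∉ B) (hvC : v ∉ C) :
    ∃ T : Submodule K V, IsTransv A B C T ∧ v ∉ A ⊔ T ∧ v ∉ B ⊔ T ∧ v ∉ C ⊔ T := by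
  classical
  -- four distinct points on the line A
  obtain ⟨a, ha, ha0⟩ : ∃ a : V, a ∈ A ∧ a ≠ 0 := by
    apply Submodule.exists_mem_ne_zero_of_ne_bot
    intro h0
    rw [h0] at hA
    simp at hA
  obtain ⟨b, hbA, hb⟩ : ∃ b : V, b ∈ A ∧ b ∉ (K ∙ a) := by
    by_contra hc
    push_neg at hc
    have : A ≤ K ∙ a := fun x hx => hc x hx
    have := Submodule.finrank_mono this
    rw [hA, finrank_span_singleton ha0] at this
    omega
  obtain ⟨c, hc0, hc1⟩ : ∃ c : K, c ≠ 0 ∧ c ≠ 1 := by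
    by_contra hcon
    push_neg at hcon
    have : (Finset.univ : Finset K) ⊆ {0, 1} := by
      intro x _
      rcases eq_or_ne x 0 with rfl | hx
      · simp
      · simp [hcon x hx]
    have hle := Finset.card_le_card this
    rw [Finset.card_univ] at hle
    have : ({0, 1} : Finset K).card ≤ 2 := Finset.card_insert_le _ _ |>.trans (by simp)
    omega
  -- the four points
  set x : Fin 4 → V := ![a, b, a + b, a + c • b] with hxdef
  have hxA : ∀ i, x i ∈ A := by
    intro i
    fin_cases i <;> simp [hxdef] <;>
      [exact ha; exact hbA; exact A.add_mem ha hbA; exact A.add_mem ha (A.smul_mem c hbA)]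
  have hx0 : ∀ i, x i ≠ 0 := by
    have h1 := combo_ne_zero (K := K) ha0 hb (α := 1) (β := 0) (by simp)
    have h2 := combo_ne_zero (K := K) ha0 hb (α := 0) (β := 1) (by simp)
    have h3 := combo_ne_zero (K := K) ha0 hb (α := 1) (β := 1) (by simp)
    have h4 := combo_ne_zero (K := K) ha0 hb (α := 1) (β := c) (by simp [hc0])
    intro i
    fin_cases i <;> simpa [hxdef] using by first
      | simpa using h1
      | simpa using h2
      | simpa using h3
      | simpa using h4
  have hxne : ∀ i j, i ≠ j → (K ∙ (x i)) ≠ (K ∙ (x j)) := by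
    have d12 := span_combo_ne (K := K) ha0 hb (α := 1) (β := 0) (γ := 0) (δ := 1) (by simp)
    have d13 := span_combo_ne (K := K) ha0 hb (α := 1) (β := 0) (γ := 1) (δ := 1) (by simp)
    have d14 := span_combo_ne (K := K) ha0 hb (α := 1) (β := 0) (γ := 1) (δ := c) (by simp [hc0])
    have d23 := span_combo_ne (K := K) ha0 hb (α := 0) (β := 1) (γ := 1) (δ := 1) (by simp)
    have d24 := span_combo_ne (K := K) ha0 hb (α := 0) (β := 1) (γ := 1) (δ := c) (by simp)
    have d34 := span_combo_ne (K := K) ha0 hb (α := 1) (β := 1) (γ := 1) (δ := c)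
      (by simpa using sub_ne_zero.mpr hc1)
    simp only [one_smul, zero_smul, add_zero, zero_add] at d12 d13 d14 d23 d24 d34
    intro i j hij
    fin_cases i <;> fin_cases j <;> simp_all [hxdef] <;> first
      | exact d12 | exact d13 | exact d14 | exact d23 | exact d24 | exact d34
      | exact (d12 ·.symm) | exact (d13 ·.symm) | exact (d14 ·.symm)
      | exact (d23 ·.symm) | exact (d24 ·.symm) | exact (d34 ·.symm)
  -- four distinct transversals
  have hTex : ∀ i, ∃ T : Submodule K V, IsTransv A B C T ∧ x i ∈ T := fun i =>
    exists_transversal_through hV hB hC hAB hAC (hxA i) (hx0 i)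
  choose T hT hxT using hTex
  have hTne : ∀ i j, i ≠ j → T i ≠ T j := by
    intro i j hij heq
    have h1 : (K ∙ (x i)) ⊔ (K ∙ (x j)) ≤ T i ⊓ A := by
      apply sup_le
      · exact le_inf ((Submodule.span_singleton_le_iff_mem _ _).mpr (hxT i))
          ((Submodule.span_singleton_le_iff_mem _ _).mpr (hxA i))
      · exact le_inf ((Submodule.span_singleton_le_iff_mem _ _).mpr (heq ▸ hxT j))
          ((Submodule.span_singleton_le_iff_mem _ _).mpr (hxA j))
    have h2 : finrank K ((K ∙ (x i)) ⊔ (K ∙ (x j)) : Submodule K V) = 2 :=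
      finrank_sup_one_dim (hx0 i) (hx0 j) (hxne i j hij)
    have h3 := Submodule.finrank_mono h1
    rw [h2] at h3
    have h4 : finrank K (T i ⊓ A : Submodule K V) ≤ 2 := by
      have := Submodule.finrank_mono (inf_le_left : T i ⊓ A ≤ T i)
      rw [(hT i).1] at this
      omega
    have h5 : T i ⊓ A = T i := eq_of_le_of_rank inf_le_left (by rw [(hT i).1]; omega)
    have h6 : T i ≤ A := h5 ▸ inf_le_right
    have h7 : T i = A := eq_of_le_of_rank h6 (by rw [(hT i).1, hA])
    exact trans_ne_A hAB (hT i) h7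
  -- pigeonhole: some transversal is good
  by_contra hcon
  push_neg at hcon
  have hbad : ∀ i, ∃ k : Fin 3, v ∈ (![A, B, C] k) ⊔ T i := by
    intro i
    by_cases h1 : v ∈ A ⊔ T i
    · exact ⟨0, h1⟩
    by_cases h2 : v ∈ B ⊔ T i
    · exact ⟨1, h2⟩
    exact ⟨2, hcon (T i) (hT i) h1 h2⟩
  choose f hf using hbad
  obtain ⟨i, j, hij, hfij⟩ := Fintype.exists_ne_map_eq_of_card_lt f (by simp)
  have hTneB : ∀ m : Fin 4, T m ≠ B :=
    fun m => trans_ne_A (A := B) (B := A) (by rw [inf_comm]; exact hAB)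
      ⟨(hT m).1, (hT m).2.2.1, (hT m).2.1, (hT m).2.2.2⟩
  have hTneC : ∀ m : Fin 4, T m ≠ C :=
    fun m => trans_ne_A (A := C) (B := A) (by rw [inf_comm]; exact hAC)
      ⟨(hT m).1, (hT m).2.2.2, (hT m).2.1, (hT m).2.2.1⟩
  have main : ∀ (X : Submodule K V), finrank K X = 2 →
      T i ≠ X → T j ≠ X → T i ⊓ X ≠ ⊥ → T j ⊓ X ≠ ⊥ → v ∉ X →
      v ∈ X ⊔ T i → v ∈ X ⊔ T j → False := by
    intro X hX n1 n2 b1 b2 hvX m1 m2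
    exact hTne i j hij (bad_unique hV hA hB hC hAB hAC hBC (hT i) (hT j) hX n1 n2 b1 b2 hvX m1 m2)
  obtain ⟨k, hk⟩ : ∃ k, f i = k := ⟨_, rfl⟩
  have h1 := hf i
  have h2 := hf j
  rw [hk] at h1
  rw [← hfij, hk] at h2
  fin_cases k
  · simp only [Matrix.cons_val_zero] at h1 h2
    exact main A hA (trans_ne_A hAB (hT i)) (trans_ne_A hAB (hT j))
      (hT i).2.1 (hT j).2.1 hvA h1 h2
  · simp only [Matrix.cons_val_one, Matrix.head_cons] at h1 h2
    exact main B hB (hTneB i) (hTneB j) (hT i).2.2.1 (hT j).2.2.1 hvB h1 h2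
  · simp only [Matrix.cons_val_two, Matrix.tail_cons, Matrix.head_cons] at h1 h2
    exact main C hC (hTneC i) (hTneC j) (hT i).2.2.2 (hT j).2.2.2 hvC h1 h2

include hV hA hB hC hAB hAC hBC in
/-- The key construction for minimality: a plane `U` through `v` meeting the three base lines
in points of a common line `T` avoiding `v`, and meeting `D` only in `v`. -/
lemma minimality_aux [Fintype K] (hK : 2 < Fintype.card K)
    {D : Submodule K V} (hD : finrank K D = 2)
    (hDA : D ⊓ A = ⊥) (hDB : D ⊓ B = ⊥) (hDC : D ⊓ C = ⊥)
    (hTD : ∀ T : Submodule K V, IsTransv A B C T → T ⊓ D = ⊥)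
    {v : V} (hv0 : v ≠ 0) (hvD : v ∈ D) :
    ∃ T U : Submodule K V, finrank K U = 3 ∧ v ∈ U ∧ v ∉ T ∧
      U ⊓ D = (K ∙ v) ∧ U ⊓ A ≤ T ∧ U ⊓ B ≤ T ∧ U ⊓ C ≤ T := by
  have hnot : ∀ X : Submodule K V, D ⊓ X = ⊥ → v ∉ X := by
    intro X hX hmem
    exact hv0 (by simpa [hX] using Submodule.mem_inf.mpr ⟨hvD, hmem⟩ : v ∈ (⊥ : Submodule K V))
  obtain ⟨T, hT, hbA, hbB, hbC⟩ := exists_good_transversal hV hA hB hC hAB hAC hBC hK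
    (hnot A hDA) (hnot B hDB) (hnot C hDC)
  have hvT : v ∉ T := fun h => hbA (Submodule.mem_sup_right h)
  set U : Submodule K V := T ⊔ (K ∙ v) with hUdef
  have hvU : v ∈ U := Submodule.mem_sup_right (Submodule.mem_span_singleton_self v)
  have hTKv : T ⊓ (K ∙ v) = ⊥ := by
    by_contra hc
    obtain ⟨w, hw, hw0⟩ := Submodule.exists_mem_ne_zero_of_ne_bot hc
    obtain ⟨s, rfl⟩ := Submodule.mem_span_singleton.mp hw.2
    have hs : s ≠ 0 := by rintro rfl; simp at hw0
    exact hvT (by simpa [hs] using Submodule.smul_mem T s⁻¹ hw.1 : v ∈ T)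
  have hU3 : finrank K U = 3 := by
    have := Submodule.finrank_sup_add_finrank_inf_eq T (K ∙ v)
    rw [hTKv, hT.1, finrank_span_singleton hv0, ← hUdef] at this
    simp only [finrank_bot] at this
    omega
  have hTU : T ≤ U := hUdef ▸ le_sup_left
  -- U meets each base line exactly in the transversal point
  have baseline : ∀ X : Submodule K V, finrank K X = 2 → T ≠ X → T ⊓ X ≠ ⊥ →
      v ∉ X ⊔ T → U ⊓ X ≤ T := by
    intro X hX hTX hTXb hbX
    have hXU : ¬ (X ≤ U) := by
      intro hle
      have h1 : finrank K (X ⊔ T : Submodule K V) = 3 := by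
        have hr := inf_rank_one hT.1 hX hTX hTXb
        have := Submodule.finrank_sup_add_finrank_inf_eq X T
        rw [inf_comm] at this
        rw [hr, hX, hT.1] at this
        omega
      have h2 : X ⊔ T ≤ U := sup_le hle hTU
      have h3 : X ⊔ T = U := eq_of_le_of_rank h2 (by omega)
      exact hbX (h3 ▸ hvU)
    have hr1 : finrank K (U ⊓ X : Submodule K V) ≤ 1 := by
      by_contra hcon
      push_neg at hcon
      have h4 : finrank K (U ⊓ X : Submodule K V) ≤ 2 := by
        have := Submodule.finrank_mono (inf_le_right : U ⊓ X ≤ X)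
        omega
      have : U ⊓ X = X := eq_of_le_of_rank inf_le_right (by omega)
      exact hXU (this ▸ inf_le_left)
    have hsub : T ⊓ X ≤ U ⊓ X := inf_le_inf_right X hTU
    have hr2 : 1 ≤ finrank K (T ⊓ X : Submodule K V) := finrank_pos_of_ne_bot hTXb
    have : T ⊓ X = U ⊓ X := eq_of_le_of_rank hsub (by omega)
    rw [← this]
    exact inf_le_left
  have hTneB : T ≠ B := trans_ne_A (A := B) (B := A) (by rw [inf_comm]; exact hAB)
    ⟨hT.1, hT.2.2.1, hT.2.1, hT.2.2.2⟩
  have hTneC : T ≠ C := trans_ne_A (A := C) (B := A) (by rw [inf_comm]; exact hAC)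
    ⟨hT.1, hT.2.2.2, hT.2.1, hT.2.2.1⟩
  refine ⟨T, U, hU3, hvU, hvT, ?_, baseline A hA (trans_ne_A hAB hT) hT.2.1 hbA,
    baseline B hB hTneB hT.2.2.1 hbB, baseline C hC hTneC hT.2.2.2 hbC⟩
  -- U ⊓ D = K ∙ v
  have hTDb := hTD T hT
  have hDU : ¬ (D ≤ U) := by
    intro hle
    have h1 : finrank K (D ⊔ T : Submodule K V) = 4 := by
      have := Submodule.finrank_sup_add_finrank_inf_eq D T
      rw [inf_comm] at this
      rw [hTDb, hD, hT.1] at this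
      simp only [finrank_bot] at this
      omega
    have h2 : D ⊔ T ≤ U := sup_le hle hTU
    have := Submodule.finrank_mono h2
    omega
  have hKvle : (K ∙ v) ≤ U ⊓ D := le_inf
    ((Submodule.span_singleton_le_iff_mem v U).mpr hvU)
    ((Submodule.span_singleton_le_iff_mem v D).mpr hvD)
  have hr1 : finrank K (U ⊓ D : Submodule K V) ≤ 1 := by
    by_contra hcon
    push_neg at hcon
    have h4 : finrank K (U ⊓ D : Submodule K V) ≤ 2 := by
      have := Submodule.finrank_mono (inf_le_right : U ⊓ D ≤ D)
      omega
    have : U ⊓ D = D := eq_of_le_of_rank inf_le_right (by omega)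
    exact hDU (this ▸ inf_le_left)
  exact (eq_of_le_of_rank hKvle (by rw [finrank_span_singleton hv0]; omega)).symm

end Trans2


section More
variable {K V : Type*} [Field K] [AddCommGroup V] [Module K V] [FiniteDimensional K V]

lemma inf_span_singleton_bot {N : Submodule K V} {x : V} (hx : x ∉ N) :
    N ⊓ (K ∙ x) = ⊥ := by
  by_contra hc
  obtain ⟨w, hw, hw0⟩ := Submodule.exists_mem_ne_zero_of_ne_bot hc
  obtain ⟨s, rfl⟩ := Submodule.mem_span_singleton.mp hw.2
  have hs : s ≠ 0 := by rintro rfl; simp at hw0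
  exact hx (by simpa [hs] using Submodule.smul_mem N s⁻¹ hw.1 : x ∈ N)

lemma span_ne_of_disjoint {W W' : Submodule K V} (h : W ⊓ W' = ⊥) {z x : V}
    (hz : z ∈ W) (hx : x ∈ W') (hx0 : x ≠ 0) : (K ∙ z) ≠ (K ∙ x) := by
  intro heq
  apply hx0
  have h1 : x ∈ (K ∙ z) := heq ▸ Submodule.mem_span_singleton_self x
  have h2 : (K ∙ z) ≤ W := (Submodule.span_singleton_le_iff_mem z W).mpr hz
  have hb : x ∈ (⊥ : Submodule K V) := by
    rw [← h]; exact Submodule.mem_inf.mpr ⟨h2 h1, hx⟩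
  simpa using hb

lemma mem_span_singleton_of_span_le {z x : V} (h : (K ∙ z) = (K ∙ x)) : z ∈ (K ∙ x) :=
  h ▸ Submodule.mem_span_singleton_self z

lemma span_eq_span_smul {t : K} (ht : t ≠ 0) (y : V) : (K ∙ (t • y)) = (K ∙ y) := by
  apply le_antisymm
  · rw [Submodule.span_singleton_le_iff_mem]
    exact Submodule.smul_mem _ t (Submodule.mem_span_singleton_self y)
  · rw [Submodule.span_singleton_le_iff_mem]
    exact Submodule.mem_span_singleton.mpr ⟨t⁻¹, by rw [smul_smul, inv_mul_cancel₀ ht, one_smul]⟩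

end More

section QuadricTrans
variable {F : Type*} [Field F] [FiniteDimensional F (Fin 4 → F)]

/-- If a 2-dimensional subspace contains three points with pairwise distinct spans, all on the
quadric, then the whole subspace is in the quadric cone. -/
lemma trans_in_quadric {e : (Fin 4 → F) ≃ₗ[F] (Fin 4 → F)} {T : Submodule F (Fin 4 → F)}
    (hT2 : finrank F T = 2) {x y z : Fin 4 → F}
    (hx : x ∈ T) (hy : y ∈ T) (hz : z ∈ T)
    (hx0 : x ≠ 0) (hy0 : y ≠ 0) (hz0 : z ≠ 0)
    (hxy : (F ∙ x) ≠ (F ∙ y)) (hzx : (F ∙ z) ≠ (F ∙ x)) (hzy : (F ∙ z) ≠ (F ∙ y))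
    (hqx : Phi e x = 0) (hqy : Phi e y = 0) (hqz : Phi e z = 0) :
    ∀ w ∈ T, Phi e w = 0 := by
  have hsp : Submodule.span F {x, y} = T := by
    apply eq_of_le_of_rank
    · rw [Submodule.span_le]
      rintro w (rfl | rfl)
      · exact hx
      · exact hy
    · rw [hT2]
      have : Submodule.span F ({x, y} : Set (Fin 4 → F)) = (F ∙ x) ⊔ (F ∙ y) := by
        rw [Submodule.span_insert]
      rw [this, finrank_sup_one_dim hx0 hy0 hxy]
  have hzmem : z ∈ Submodule.span F ({x, y} : Set (Fin 4 → F)) := hsp ▸ hz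
  obtain ⟨s, t, hst⟩ := Submodule.mem_span_pair.mp hzmem
  have hs : s ≠ 0 := by
    rintro rfl
    simp only [zero_smul, zero_add] at hst
    have ht : t ≠ 0 := by rintro rfl; simp at hst; exact hz0 hst.symm
    exact hzy (by rw [← hst, span_eq_span_smul ht])
  have ht : t ≠ 0 := by
    rintro rfl
    simp only [zero_smul, add_zero] at hst
    exact hzx (by rw [← hst, span_eq_span_smul hs])
  intro w hw
  exact line_in_quadric (e := e) ⟨s, t, hs, ht, hst.symm⟩ hqx hqy hqz w (hsp ▸ hw)

/-- A subspace all of whose nonzero vectors satisfy `Phi = 0`. -/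
def InCone (e : (Fin 4 → F) ≃ₗ[F] (Fin 4 → F)) (W : Submodule F (Fin 4 → F)) : Prop :=
  ∀ x ∈ W, x ≠ 0 → Phi e x = 0

lemma transv_in_cone {e : (Fin 4 → F) ≃ₗ[F] (Fin 4 → F)} {A B C T : Submodule F (Fin 4 → F)}
    (hT : IsTransv A B C T) (hAB : A ⊓ B = ⊥) (hCA : C ⊓ A = ⊥) (hCB : C ⊓ B = ⊥)
    (hcA : InCone e A) (hcB : InCone e B) (hcC : InCone e C) :
    ∀ w ∈ T, w ≠ 0 → Phi e w = 0 := by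
  obtain ⟨x, hx, hx0⟩ := Submodule.exists_mem_ne_zero_of_ne_bot hT.2.1
  obtain ⟨y, hy, hy0⟩ := Submodule.exists_mem_ne_zero_of_ne_bot hT.2.2.1
  obtain ⟨z, hz, hz0⟩ := Submodule.exists_mem_ne_zero_of_ne_bot hT.2.2.2
  intro w hw _
  exact trans_in_quadric hT.1 hx.1 hy.1 hz.1 hx0 hy0 hz0
    (span_ne_of_disjoint hAB hx.2 hy.2 hy0)
    (span_ne_of_disjoint hCA hz.2 hx.2 hx0)
    (span_ne_of_disjoint hCB hz.2 hy.2 hy0)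
    (hcA x hx.2 hx0) (hcB y hy.2 hy0) (hcC z hz.2 hz0) w hw

lemma transv_avoid {e : (Fin 4 → F) ≃ₗ[F] (Fin 4 → F)} {A B C D T : Submodule F (Fin 4 → F)}
    (hT : IsTransv A B C T) (hAB : A ⊓ B = ⊥) (hDA : D ⊓ A = ⊥) (hDB : D ⊓ B = ⊥)
    (hcA : InCone e A) (hcB : InCone e B) (hcD : InCone e D)
    (hoffC : ∀ x ∈ C, x ≠ 0 → Phi e x ≠ 0) : T ⊓ D = ⊥ := by
  by_contra hc
  obtain ⟨w, hw, hw0⟩ := Submodule.exists_mem_ne_zero_of_ne_bot hc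
  obtain ⟨x, hx, hx0⟩ := Submodule.exists_mem_ne_zero_of_ne_bot hT.2.1
  obtain ⟨y, hy, hy0⟩ := Submodule.exists_mem_ne_zero_of_ne_bot hT.2.2.1
  obtain ⟨z, hz, hz0⟩ := Submodule.exists_mem_ne_zero_of_ne_bot hT.2.2.2
  have hcone := trans_in_quadric hT.1 hx.1 hy.1 hw.1 hx0 hy0 hw0
    (span_ne_of_disjoint hAB hx.2 hy.2 hy0)
    (span_ne_of_disjoint hDA hw.2 hx.2 hx0)
    (span_ne_of_disjoint hDB hw.2 hy.2 hy0)
    (hcA x hx.2 hx0) (hcB y hy.2 hy0) (hcD w hw.2 hw0)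
  exact hoffC z hz.2 hz0 (hcone z hz.1)

end QuadricTrans

section Card
variable {K V : Type*} [Field K] [Fintype K] [AddCommGroup V] [Module K V]
  [FiniteDimensional K V]

/-- A projective line has `q + 1` points. -/
lemma line_ncard {W : Submodule K V} (hW : finrank K W = 2) :
    Set.ncard {p : ℙ K V | p.submodule ≤ W} = Fintype.card K + 1 := by
  classical
  obtain ⟨a, ha, ha0⟩ : ∃ a : V, a ∈ W ∧ a ≠ 0 := by
    apply Submodule.exists_mem_ne_zero_of_ne_bot
    intro h0; rw [h0] at hW; simp at hW
  obtain ⟨b, hbW, hb⟩ : ∃ b : V, b ∈ W ∧ b ∉ (K ∙ a) := by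
    by_contra hc
    push_neg at hc
    have hle : W ≤ K ∙ a := fun x hx => hc x hx
    have := Submodule.finrank_mono hle
    rw [hW, finrank_span_singleton ha0] at this
    omega
  have hb0 : b ≠ 0 := by rintro rfl; exact hb (Submodule.zero_mem _)
  have hWspan : W = Submodule.span K ({a, b} : Set V) := by
    symm
    apply eq_of_le_of_rank
    · rw [Submodule.span_le]; rintro w (rfl | rfl); exacts [ha, hbW]
    · have hab : (K ∙ a) ≠ (K ∙ b) := by
        intro h
        exact hb (by rw [h]; exact Submodule.mem_span_singleton_self b)
      rw [hW, Submodule.span_insert, finrank_sup_one_dim ha0 hb0 hab]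
  -- explicit parametrization of the line
  have hcomb : ∀ (α β : K), ¬(α = 0 ∧ β = 0) → α • a + β • b ≠ 0 := fun α β h =>
    combo_ne_zero ha0 hb h
  set g : Option K → ℙ K V := fun o =>
    Option.rec (Projectivization.mk K b hb0)
      (fun c => Projectivization.mk K (a + c • b) (by
        have := hcomb 1 c (by simp)
        simpa using this)) o with hgdef
  have hginj : Function.Injective g := by
    intro o₁ o₂ heq
    match o₁, o₂ with
    | none, none => rfl
    | none, some c =>
      exfalso
      rw [hgdef] at heq
      simp only [Projectivization.mk_eq_mk_iff'] at heq
      obtain ⟨s, hs⟩ := heq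
      have hexp : s • a + (s * c) • b = b := by simpa [smul_add, smul_smul] using hs
      have h0 : s • a + (s * c - 1) • b = 0 := by
        rw [sub_smul, one_smul]
        calc s • a + ((s * c) • b - b) = (s • a + (s * c) • b) - b := by abel
          _ = 0 := by rw [hexp]; exact sub_self b
      obtain ⟨h1, h2⟩ := li_of_notMem ha0 hb _ _ h0
      have hs0 : s = 0 := by simpa using h1
      rw [hs0] at h2
      simp at h2
    | some c, none =>
      exfalso
      rw [hgdef] at heq
      simp only [Projectivization.mk_eq_mk_iff'] at heq
      obtain ⟨s, hs⟩ := heq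
      have h0 : (1 : K) • a + (c - s) • b = 0 := by
        rw [sub_smul, one_smul]
        calc a + (c • b - s • b) = (a + c • b) - s • b := by abel
          _ = 0 := by rw [← hs]; exact sub_self _
      obtain ⟨h1, h2⟩ := li_of_notMem ha0 hb _ _ h0
      simp at h1
    | some c₁, some c₂ =>
      congr 1
      rw [hgdef] at heq
      simp only [Projectivization.mk_eq_mk_iff'] at heq
      obtain ⟨s, hs⟩ := heq
      have hexp : s • a + (s * c₂) • b = a + c₁ • b := by
        simpa [smul_add, smul_smul] using hs
      have h0 : (s - 1) • a + (s * c₂ - c₁) • b = 0 := by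
        rw [sub_smul, sub_smul, one_smul]
        calc (s • a - a) + ((s * c₂) • b - c₁ • b)
            = (s • a + (s * c₂) • b) - (a + c₁ • b) := by abel
          _ = 0 := by rw [hexp]; exact sub_self _
      obtain ⟨h1, h2⟩ := li_of_notMem ha0 hb _ _ h0
      have hs1 : s = 1 := by
        have := sub_eq_zero.mp h1; exact this
      rw [hs1] at h2
      have := sub_eq_zero.mp h2
      simpa using this.symm
  have hrange : {p : ℙ K V | p.submodule ≤ W} = Set.range g := by
    ext p
    simp only [Set.mem_setOf_eq, Set.mem_range]
    constructor
    · intro hp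
      have hrep : p.rep ∈ W := rep_mem_iff.mp hp
      rw [hWspan] at hrep
      obtain ⟨s, t, hst⟩ := Submodule.mem_span_pair.mp hrep
      rcases eq_or_ne s 0 with rfl | hs
      · refine ⟨none, ?_⟩
        have ht : t ≠ 0 := by
          rintro rfl
          simp only [zero_smul, add_zero, zero_add] at hst
          exact p.rep_nonzero hst.symm
        show Projectivization.mk K b hb0 = p
        conv_rhs => rw [← Projectivization.mk_rep p]
        rw [Projectivization.mk_eq_mk_iff']
        have hst' : t • b = p.rep := by simpa using hst
        exact ⟨t⁻¹, by rw [← hst', smul_smul, inv_mul_cancel₀ ht, one_smul]⟩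
      · refine ⟨some (t / s), ?_⟩
        show Projectivization.mk K (a + (t / s) • b) _ = p
        conv_rhs => rw [← Projectivization.mk_rep p]
        rw [Projectivization.mk_eq_mk_iff']
        refine ⟨s⁻¹, ?_⟩
        rw [← hst, smul_add, smul_smul, smul_smul, inv_mul_cancel₀ hs, one_smul,
          div_eq_inv_mul]
    · rintro ⟨o, rfl⟩
      match o with
      | none =>
        show (Projectivization.mk K b hb0).submodule ≤ W
        rw [Projectivization.submodule_mk, Submodule.span_singleton_le_iff_mem]
        exact hbW
      | some c =>
        show (Projectivization.mk K (a + c • b) _).submodule ≤ W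
        rw [Projectivization.submodule_mk, Submodule.span_singleton_le_iff_mem]
        exact W.add_mem ha (W.smul_mem c hbW)
  rw [hrange, ← Set.image_univ, Set.ncard_image_of_injective _ hginj, Set.ncard_univ,
    Nat.card_eq_fintype_card, Fintype.card_option]

end Card

section Key
variable {F : Type*} [Field F] [Fintype F]

local notation "V4" => (Fin 4 → F)

/-- The key minimality step: removing a point `P` of the line `D` destroys the cutting
property, where `A`, `B`, `C` are the other three lines. -/
lemma min_key (hF : 2 < Fintype.card F) [FiniteDimensional F V4] (hV : finrank F V4 = 4)
    {A B C D : Submodule F V4}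
    (hA : finrank F A = 2) (hB : finrank F B = 2) (hC : finrank F C = 2)
    (hD : finrank F D = 2)
    (hAB : A ⊓ B = ⊥) (hAC : A ⊓ C = ⊥) (hBC : B ⊓ C = ⊥)
    (hDA : D ⊓ A = ⊥) (hDB : D ⊓ B = ⊥) (hDC : D ⊓ C = ⊥)
    (hTD : ∀ T : Submodule F V4, IsTransv A B C T → T ⊓ D = ⊥)
    {Bset : Set (ℙ F V4)}
    (hBeq : Bset = {p : ℙ F V4 | p.submodule ≤ A} ∪ {p : ℙ F V4 | p.submodule ≤ B} ∪
      {p : ℙ F V4 | p.submodule ≤ C} ∪ {p : ℙ F V4 | p.submodule ≤ D})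
    {P : ℙ F V4} (hP : P.submodule ≤ D) :
    ¬ IsCuttingBlockingSet (Bset \ {P}) := by
  intro hcut
  have hv0 : P.rep ≠ 0 := P.rep_nonzero
  have hvD : P.rep ∈ D := rep_mem_iff.mp hP
  obtain ⟨T, U, hU3, hvU, hvT, hUD, hUA, hUB, hUC⟩ :=
    minimality_aux hV hA hB hC hAB hAC hBC hF hD hDA hDB hDC hTD hv0 hvD
  -- the hyperplane determined by U
  obtain ⟨f, hf0, hfker⟩ := exists_functional (by rw [hU3, hV])
  set H : Set (ℙ F V4) := {p : ℙ F V4 | f p.rep = 0} with hHdef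
  have hHU : H = {p : ℙ F V4 | p.submodule ≤ U} := by
    rw [hHdef, hyperplane_eq_ker, hfker]
  have hHhyp : IsProjHyperplane H := ⟨f, hf0, rfl⟩
  have hspan := hcut H hHhyp
  -- all points of `H ∩ (Bset \ {P})` lie on the line `T`
  have hsub : H ∩ (Bset \ {P}) ⊆ (subOf T : Set (ℙ F V4)) := by
    rintro p ⟨hpH, hpB, hpP⟩
    have hpU : p.submodule ≤ U := by rwa [hHU] at hpH
    rw [hBeq] at hpB
    rcases hpB with ((hpA | hpB') | hpC') | hpD'
    · exact le_trans (le_inf hpU hpA) hUA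
    · exact le_trans (le_inf hpU hpB') hUB
    · exact le_trans (le_inf hpU hpC') hUC
    · exfalso
      apply hpP
      have h1 : p.submodule ≤ (F ∙ P.rep) := hUD ▸ le_inf hpU hpD'
      have h2 : p.submodule = (F ∙ P.rep) := eq_of_le_of_rank h1
        (by rw [finrank_span_singleton hv0, Projectivization.finrank_submodule])
      have h3 : p.submodule = P.submodule := by rw [h2, Projectivization.submodule_eq]
      exact Projectivization.submodule_injective h3
  have hle : Projectivization.Subspace.span (H ∩ (Bset \ {P})) ≤ subOf T :=
    Projectivization.Subspace.span_le_subspace_iff.mpr hsub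
  have hPH : P ∈ H := by
    rw [hHU]
    exact rep_mem_iff.mpr hvU
  have hPspan : P ∈ Projectivization.Subspace.span H :=
    Projectivization.Subspace.subset_span H hPH
  rw [← hspan] at hPspan
  have : P.submodule ≤ T := hle hPspan
  exact hvT (rep_mem_iff.mp this)

end Key

section Cut
variable {K V : Type*} [Field K] [AddCommGroup V] [Module K V] [FiniteDimensional K V]

lemma mem_repspan {S : Set (ℙ K V)} {v : V} (hv : v ≠ 0)
    (hS : Projectivization.mk K v hv ∈ S) :
    v ∈ Submodule.span K (Projectivization.rep '' S) := by
  obtain ⟨u, hu⟩ := Projectivization.exists_smul_eq_mk_rep K v hv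
  have hrep : (Projectivization.mk K v hv).rep ∈ Submodule.span K (Projectivization.rep '' S) :=
    Submodule.subset_span ⟨_, hS, rfl⟩
  have hveq : v = (u⁻¹ : Kˣ) • ((u : Kˣ) • v) := (inv_smul_smul u v).symm
  rw [hveq, hu, Units.smul_def]
  exact Submodule.smul_mem _ _ hrep

end Cut

section Cut2
variable {F : Type*} [Field F] [FiniteDimensional F (Fin 4 → F)]

local notation "V4" => (Fin 4 → F)

lemma cutting_main (hV : finrank F V4 = 4) (e : V4 ≃ₗ[F] V4)
    {W₁ W₂ W₃ Wr : Submodule F V4}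
    (h1 : finrank F W₁ = 2) (h2 : finrank F W₂ = 2) (h3 : finrank F W₃ = 2)
    (hr : finrank F Wr = 2)
    (h12 : W₁ ⊓ W₂ = ⊥) (h13 : W₁ ⊓ W₃ = ⊥) (h23 : W₂ ⊓ W₃ = ⊥)
    (hr1 : Wr ⊓ W₁ = ⊥) (hr2 : Wr ⊓ W₂ = ⊥) (hr3 : Wr ⊓ W₃ = ⊥)
    (hc1 : InCone e W₁) (hc2 : InCone e W₂) (hc3 : InCone e W₃)
    (hoff : ∀ x ∈ Wr, x ≠ 0 → Phi e x ≠ 0)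
    {Bset : Set (ℙ F V4)}
    (hBeq : Bset = {p : ℙ F V4 | p.submodule ≤ W₁} ∪ {p : ℙ F V4 | p.submodule ≤ W₂} ∪
      {p : ℙ F V4 | p.submodule ≤ W₃} ∪ {p : ℙ F V4 | p.submodule ≤ Wr}) :
    IsCuttingBlockingSet Bset := by
  rintro H ⟨f, hf0, hHf⟩
  set U : Submodule F V4 := LinearMap.ker f with hUdef
  have hU3 : finrank F U = 3 := by
    have := finrank_ker hf0
    rw [hV, ← hUdef] at this
    omega
  have hHU : H = {p : ℙ F V4 | p.submodule ≤ U} := by rw [hHf, hyperplane_eq_ker]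
  -- the linear span of the representatives of `H ∩ Bset`
  set M : Submodule F V4 := Submodule.span F (Projectivization.rep '' (H ∩ Bset)) with hMdef
  have hmemB : ∀ (W : Submodule F V4),
      ({p : ℙ F V4 | p.submodule ≤ W} ⊆ Bset) → ∀ (v : V4) (hv : v ≠ 0), v ∈ U → v ∈ W →
        v ∈ M := by
    intro W hWB v hv hvU hvW
    apply mem_repspan hv
    constructor
    · rw [hHU]
      exact (mem_line_iff hv).mpr hvU
    · exact hWB ((mem_line_iff hv).mpr hvW)
  have hB1 : {p : ℙ F V4 | p.submodule ≤ W₁} ⊆ Bset := by rw [hBeq]; intro p hp; left; left; left; exact hp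
  have hB2 : {p : ℙ F V4 | p.submodule ≤ W₂} ⊆ Bset := by rw [hBeq]; intro p hp; left; left; right; exact hp
  have hB3 : {p : ℙ F V4 | p.submodule ≤ W₃} ⊆ Bset := by rw [hBeq]; intro p hp; left; right; exact hp
  have hBr : {p : ℙ F V4 | p.submodule ≤ Wr} ⊆ Bset := by rw [hBeq]; intro p hp; right; exact hp
  -- points of intersection with the four lines
  obtain ⟨v₁, hv₁, hv₁0⟩ : ∃ v, v ∈ U ⊓ W₁ ∧ v ≠ 0 := exists_nonzero_inter (by rw [hV, hU3, h1]; omega)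
  obtain ⟨v₂, hv₂, hv₂0⟩ : ∃ v, v ∈ U ⊓ W₂ ∧ v ≠ 0 := exists_nonzero_inter (by rw [hV, hU3, h2]; omega)
  obtain ⟨v₃, hv₃, hv₃0⟩ : ∃ v, v ∈ U ⊓ W₃ ∧ v ≠ 0 := exists_nonzero_inter (by rw [hV, hU3, h3]; omega)
  obtain ⟨vr, hvr, hvr0⟩ : ∃ v, v ∈ U ⊓ Wr ∧ v ≠ 0 := exists_nonzero_inter (by rw [hV, hU3, hr]; omega)
  have hv₁M : v₁ ∈ M := hmemB W₁ hB1 v₁ hv₁0 hv₁.1 hv₁.2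
  have hv₂M : v₂ ∈ M := hmemB W₂ hB2 v₂ hv₂0 hv₂.1 hv₂.2
  have hv₃M : v₃ ∈ M := hmemB W₃ hB3 v₃ hv₃0 hv₃.1 hv₃.2
  have hvrM : vr ∈ M := hmemB Wr hBr vr hvr0 hvr.1 hvr.2
  -- the key claim : U ≤ M
  have hUM : U ≤ M := by
    -- helper for the case where a whole quadric line is inside U
    have caseW : ∀ (W : Submodule F V4), finrank F W = 2 →
        ({p : ℙ F V4 | p.submodule ≤ W} ⊆ Bset) → W ≤ U → Wr ⊓ W = ⊥ → U ≤ M := by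
      intro W hW2 hWB hWU hWrW
      have hvrW : vr ∉ W := by
        intro hmem
        have : vr ∈ Wr ⊓ W := ⟨hvr.2, hmem⟩
        rw [hWrW] at this
        exact hvr0 (by simpa using this)
      have hWr3 : finrank F (W ⊔ (F ∙ vr) : Submodule F V4) = 3 := by
        have := Submodule.finrank_sup_add_finrank_inf_eq W (F ∙ vr)
        rw [inf_span_singleton_bot hvrW, hW2, finrank_span_singleton hvr0] at this
        simp only [finrank_bot] at this
        omega
      have hUeq : W ⊔ (F ∙ vr) = U := eq_of_le_of_rank
        (sup_le hWU ((Submodule.span_singleton_le_iff_mem _ _).mpr hvr.1)) (by omega)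
      rw [← hUeq]
      apply sup_le
      · intro w hw
        rcases eq_or_ne w 0 with rfl | hw0
        · exact M.zero_mem
        · exact hmemB W hWB w hw0 (hWU hw) hw
      · exact (Submodule.span_singleton_le_iff_mem _ _).mpr hvrM
    by_cases hca : W₁ ≤ U
    · exact caseW W₁ h1 hB1 hca hr1
    by_cases hcb : W₂ ≤ U
    · exact caseW W₂ h2 hB2 hcb hr2
    by_cases hcc : W₃ ≤ U
    · exact caseW W₃ h3 hB3 hcc hr3
    -- now the three intersection points; form the plane through two of them
    set Pl : Submodule F V4 := Submodule.span F ({v₁, v₂} : Set V4) with hPldef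
    have hsp12 : (F ∙ v₁) ≠ (F ∙ v₂) := span_ne_of_disjoint h12 hv₁.2 hv₂.2 hv₂0
    have hPl2 : finrank F Pl = 2 := by
      rw [hPldef, Submodule.span_insert, finrank_sup_one_dim hv₁0 hv₂0 hsp12]
    have hPlU : Pl ≤ U := by
      rw [hPldef, Submodule.span_le]
      rintro w (rfl | rfl)
      exacts [hv₁.1, hv₂.1]
    have hfin : ∀ x : V4, x ∉ Pl → x ∈ U → U ≤ Pl ⊔ (F ∙ x) → U ≤ M → U ≤ M := fun _ _ _ _ h => h
    have hsup3 : ∀ x : V4, x ≠ 0 → x ∉ Pl → x ∈ U → Pl ⊔ (F ∙ x) = U := by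
      intro x hx0 hxPl hxU
      apply eq_of_le_of_rank (sup_le hPlU ((Submodule.span_singleton_le_iff_mem _ _).mpr hxU))
      have := Submodule.finrank_sup_add_finrank_inf_eq Pl (F ∙ x)
      rw [inf_span_singleton_bot hxPl, hPl2, finrank_span_singleton hx0] at this
      simp only [finrank_bot] at this
      omega
    have hPlM : Pl ≤ M := by
      rw [hPldef, Submodule.span_le]
      rintro w (rfl | rfl)
      exacts [hv₁M, hv₂M]
    by_cases hv3Pl : v₃ ∈ Pl
    · -- the three points are collinear, so that line is in the quadric; use the point on `r`
      have hcone : ∀ w ∈ Pl, Phi e w = 0 := by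
        apply trans_in_quadric hPl2 (Submodule.subset_span (by simp))
          (Submodule.subset_span (by simp)) hv3Pl hv₁0 hv₂0 hv₃0 hsp12
          (span_ne_of_disjoint (by rw [inf_comm]; exact h13) hv₃.2 hv₁.2 hv₁0)
          (span_ne_of_disjoint (by rw [inf_comm]; exact h23) hv₃.2 hv₂.2 hv₂0)
          (hc1 v₁ hv₁.2 hv₁0) (hc2 v₂ hv₂.2 hv₂0) (hc3 v₃ hv₃.2 hv₃0)
      have hvrPl : vr ∉ Pl := fun hmem => hoff vr hvr.2 hvr0 (hcone vr hmem)
      rw [← hsup3 vr hvr0 hvrPl hvr.1]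
      exact sup_le hPlM ((Submodule.span_singleton_le_iff_mem _ _).mpr hvrM)
    · rw [← hsup3 v₃ hv₃0 hv3Pl hv₃.1]
      exact sup_le hPlM ((Submodule.span_singleton_le_iff_mem _ _).mpr hv₃M)
  -- conclude the span equality
  apply le_antisymm
  · exact Projectivization.Subspace.monotone_span Set.inter_subset_left
  · rw [Projectivization.Subspace.span_le_subspace_iff]
    intro p hp
    have hpU : p.rep ∈ U := by
      rw [hHU] at hp
      exact rep_mem_iff.mp hp
    have := mk_mem_span_of_mem_span (H ∩ Bset) p.rep (hUM hpU) p.rep_nonzero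
    rwa [Projectivization.mk_rep] at this
end Cut2


/-- In `PG(3, q)`, `q > 2`, the union `B` of three pairwise skew lines contained in a
hyperbolic quadric (one regulus) together with a line external to the quadric is a minimal
cutting blocking set of size `4(q+1)`. -/
theorem statement11 (q : ℕ) (F : Type*) [Field F] [Fintype F]
    (hq : Fintype.card F = q) (hq2 : 2 < q)
    (Q ℓ₁ ℓ₂ ℓ₃ r : Set (ℙ F (Fin 4 → F)))
    (hQ : IsHyperbolicQuadric Q)
    (hl₁ : IsProjLine ℓ₁) (hl₂ : IsProjLine ℓ₂) (hl₃ : IsProjLine ℓ₃)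
    (hl₁Q : ℓ₁ ⊆ Q) (hl₂Q : ℓ₂ ⊆ Q) (hl₃Q : ℓ₃ ⊆ Q)
    (h₁₂ : ℓ₁ ∩ ℓ₂ = ∅) (h₁₃ : ℓ₁ ∩ ℓ₃ = ∅) (h₂₃ : ℓ₂ ∩ ℓ₃ = ∅)
    (hr : IsProjLine r) (hrQ : r ∩ Q = ∅) :
    IsCuttingBlockingSet (ℓ₁ ∪ ℓ₂ ∪ ℓ₃ ∪ r) ∧
      (ℓ₁ ∪ ℓ₂ ∪ ℓ₃ ∪ r).ncard = 4 * (q + 1) ∧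
      ∀ P ∈ ℓ₁ ∪ ℓ₂ ∪ ℓ₃ ∪ r,
        ¬ IsCuttingBlockingSet ((ℓ₁ ∪ ℓ₂ ∪ ℓ₃ ∪ r) \ {P}) := by
  classical
  obtain ⟨e, hQe⟩ := hQ
  obtain ⟨W₁, hW₁2, hl₁e⟩ := hl₁
  obtain ⟨W₂, hW₂2, hl₂e⟩ := hl₂
  obtain ⟨W₃, hW₃2, hl₃e⟩ := hl₃
  obtain ⟨Wr, hWr2, hre⟩ := hr
  have hV : finrank F (Fin 4 → F) = 4 := by rw [finrank_pi]; simp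
  have hF : 2 < Fintype.card F := by rw [hq]; exact hq2
  -- disjointness of lines as submodules
  have disj : ∀ (s s' : Set (ℙ F (Fin 4 → F))) (W W' : Submodule F (Fin 4 → F)),
      s = {p : ℙ F (Fin 4 → F) | p.submodule ≤ W} →
      s' = {p : ℙ F (Fin 4 → F) | p.submodule ≤ W'} → s ∩ s' = ∅ → W ⊓ W' = ⊥ := by
    intro s s' W W' hs hs' hss
    by_contra hc
    obtain ⟨w, hw, hw0⟩ := Submodule.exists_mem_ne_zero_of_ne_bot hc
    have : Projectivization.mk F w hw0 ∈ s ∩ s' := by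
      rw [hs, hs']
      exact ⟨(mem_line_iff hw0).mpr hw.1, (mem_line_iff hw0).mpr hw.2⟩
    rw [hss] at this
    exact this
  have hrl₁ : r ∩ ℓ₁ = ∅ := by
    rw [Set.eq_empty_iff_forall_notMem]
    intro p hp
    have : p ∈ r ∩ Q := ⟨hp.1, hl₁Q hp.2⟩
    rw [hrQ] at this
    exact this
  have hrl₂ : r ∩ ℓ₂ = ∅ := by
    rw [Set.eq_empty_iff_forall_notMem]
    intro p hp
    have : p ∈ r ∩ Q := ⟨hp.1, hl₂Q hp.2⟩
    rw [hrQ] at this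
    exact this
  have hrl₃ : r ∩ ℓ₃ = ∅ := by
    rw [Set.eq_empty_iff_forall_notMem]
    intro p hp
    have : p ∈ r ∩ Q := ⟨hp.1, hl₃Q hp.2⟩
    rw [hrQ] at this
    exact this
  have d12 : W₁ ⊓ W₂ = ⊥ := disj _ _ _ _ hl₁e hl₂e h₁₂
  have d13 : W₁ ⊓ W₃ = ⊥ := disj _ _ _ _ hl₁e hl₃e h₁₃
  have d23 : W₂ ⊓ W₃ = ⊥ := disj _ _ _ _ hl₂e hl₃e h₂₃
  have dr1 : Wr ⊓ W₁ = ⊥ := disj _ _ _ _ hre hl₁e hrl₁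
  have dr2 : Wr ⊓ W₂ = ⊥ := disj _ _ _ _ hre hl₂e hrl₂
  have dr3 : Wr ⊓ W₃ = ⊥ := disj _ _ _ _ hre hl₃e hrl₃
  -- the lines of the quadric are in the cone, `r` is off the cone
  have hc₁ : InCone e W₁ := by
    intro x hx hx0
    exact (mem_quadric_iff hQe hx0).mp (hl₁Q (by rw [hl₁e]; exact (mem_line_iff hx0).mpr hx))
  have hc₂ : InCone e W₂ := by
    intro x hx hx0
    exact (mem_quadric_iff hQe hx0).mp (hl₂Q (by rw [hl₂e]; exact (mem_line_iff hx0).mpr hx))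
  have hc₃ : InCone e W₃ := by
    intro x hx hx0
    exact (mem_quadric_iff hQe hx0).mp (hl₃Q (by rw [hl₃e]; exact (mem_line_iff hx0).mpr hx))
  have hoff : ∀ x ∈ Wr, x ≠ 0 → Phi e x ≠ 0 := by
    intro x hx hx0 hPhi
    have : Projectivization.mk F x hx0 ∈ r ∩ Q := by
      refine ⟨by rw [hre]; exact (mem_line_iff hx0).mpr hx, (mem_quadric_iff hQe hx0).mpr hPhi⟩
    rw [hrQ] at this
    exact this
  have hBeq : ℓ₁ ∪ ℓ₂ ∪ ℓ₃ ∪ r =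
      {p : ℙ F (Fin 4 → F) | p.submodule ≤ W₁} ∪ {p : ℙ F (Fin 4 → F) | p.submodule ≤ W₂} ∪
      {p : ℙ F (Fin 4 → F) | p.submodule ≤ W₃} ∪ {p : ℙ F (Fin 4 → F) | p.submodule ≤ Wr} := by
    rw [hl₁e, hl₂e, hl₃e, hre]
  refine ⟨?_, ?_, ?_⟩
  · -- cutting
    exact cutting_main hV e hW₁2 hW₂2 hW₃2 hWr2 d12 d13 d23 dr1 dr2 dr3 hc₁ hc₂ hc₃ hoff hBeq
  · -- cardinality
    have disjSet : ∀ (s s' : Set (ℙ F (Fin 4 → F))), s ∩ s' = ∅ → Disjoint s s' := by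
      intro s s' h
      exact Set.disjoint_iff_inter_eq_empty.mpr h
    have c₁ : ℓ₁.ncard = q + 1 := by rw [hl₁e, line_ncard hW₁2, hq]
    have c₂ : ℓ₂.ncard = q + 1 := by rw [hl₂e, line_ncard hW₂2, hq]
    have c₃ : ℓ₃.ncard = q + 1 := by rw [hl₃e, line_ncard hW₃2, hq]
    have cr : r.ncard = q + 1 := by rw [hre, line_ncard hWr2, hq]
    haveI : Finite (ℙ F (Fin 4 → F)) := Quotient.finite _
    have fin : ∀ s : Set (ℙ F (Fin 4 → F)), s.Finite := fun s => Set.toFinite s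
    rw [Set.ncard_union_eq (by
        apply Set.disjoint_union_left.mpr
        constructor
        · apply Set.disjoint_union_left.mpr
          exact ⟨(disjSet _ _ hrl₁).symm, (disjSet _ _ hrl₂).symm⟩
        · exact (disjSet _ _ hrl₃).symm) (fin _) (fin _),
      Set.ncard_union_eq (by
        apply Set.disjoint_union_left.mpr
        exact ⟨disjSet _ _ h₁₃, disjSet _ _ h₂₃⟩) (fin _) (fin _),
      Set.ncard_union_eq (disjSet _ _ h₁₂) (fin _) (fin _), c₁, c₂, c₃, cr]
    ring
  · -- minimality
    intro P hP
    rcases hP with ((hP1 | hP2) | hP3) | hPr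
    · -- P on ℓ₁
      refine min_key hF hV hW₂2 hW₃2 hWr2 hW₁2 d23 (by rw [inf_comm]; exact dr2)
        (by rw [inf_comm]; exact dr3) d12 d13 (by rw [inf_comm]; exact dr1)
        (fun T hT => transv_avoid hT d23 d12 d13 hc₂ hc₃ hc₁ hoff)
        ?_ (by rw [hl₁e] at hP1; exact hP1)
      rw [hBeq]
      ext p
      simp only [Set.mem_union]
      tauto
    · -- P on ℓ₂
      refine min_key hF hV hW₁2 hW₃2 hWr2 hW₂2 d13 (by rw [inf_comm]; exact dr1)
        (by rw [inf_comm]; exact dr3) (by rw [inf_comm]; exact d12) d23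
        (by rw [inf_comm]; exact dr2)
        (fun T hT => transv_avoid hT d13 (by rw [inf_comm]; exact d12) d23 hc₁ hc₃ hc₂ hoff)
        ?_ (by rw [hl₂e] at hP2; exact hP2)
      rw [hBeq]
      ext p
      simp only [Set.mem_union]
      tauto
    · -- P on ℓ₃
      refine min_key hF hV hW₁2 hW₂2 hWr2 hW₃2 d12 (by rw [inf_comm]; exact dr1)
        (by rw [inf_comm]; exact dr2) (by rw [inf_comm]; exact d13)
        (by rw [inf_comm]; exact d23) (by rw [inf_comm]; exact dr3)
        (fun T hT => transv_avoid hT d12 (by rw [inf_comm]; exact d13)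
          (by rw [inf_comm]; exact d23) hc₁ hc₂ hc₃ hoff)
        ?_ (by rw [hl₃e] at hP3; exact hP3)
      rw [hBeq]
      ext p
      simp only [Set.mem_union]
      tauto
    · -- P on r
      refine min_key hF hV hW₁2 hW₂2 hW₃2 hWr2 d12 d13 d23 dr1 dr2 dr3
        (fun T hT => ?_) ?_ (by rw [hre] at hPr; exact hPr)
      · by_contra hc
        obtain ⟨w, hw, hw0⟩ := Submodule.exists_mem_ne_zero_of_ne_bot hc
        exact hoff w hw.2 hw0 (transv_in_cone hT d12 (by rw [inf_comm]; exact d13)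
          (by rw [inf_comm]; exact d23) hc₁ hc₂ hc₃ w hw.1 hw0)
      · rw [hBeq]
end

section
/- The linear code over GF(q), q > 2, associated with the minimal cutting blocking set B of PG(3,q) consisting of the 4(q+1) points on three lines of a regulus and one external line, is a [4(q+1), 4]_q code with nonzero weights 3q and 4q, and weight distribution A_{3q} = 4(q²-1), A_{4q} = (q²-3)(q²-1). -/
open scoped LinearAlgebra.Projectivization
open Projectivization Module

/-- The weight of the codeword of the linear code associated with a point set `B` of
`PG(3, q)` corresponding to the nonzero linear functional `f`:
`w = |B| - |{P ∈ B : f(P) = 0}|`. -/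
noncomputable def wt {F : Type*} [Field F] (B : Set (ℙ F (Fin 4 → F)))
    (f : (Fin 4 → F) →ₗ[F] F) : ℕ :=
  B.ncard - {P ∈ B | f P.rep = 0}.ncard

section helpers

set_option linter.unusedSectionVars false

variable {F : Type*} [Field F] [Fintype F] {M : Type*} [AddCommGroup M] [Module F M]

instance [Finite M] : Finite (ℙ F M) :=
  Finite.of_surjective (fun v : {v : M // v ≠ 0} => Projectivization.mk F v.1 v.2)
    (fun P => ⟨⟨P.rep, P.rep_nonzero⟩, P.mk_rep⟩)

lemma aux_natCard [Finite M] : Nat.card M = Fintype.card F ^ finrank F M := by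
  have : Fintype M := Fintype.ofFinite M
  rw [Nat.card_eq_fintype_card]
  exact card_eq_pow_finrank

lemma aux_ncard_sub_diff [Finite M] (U : Submodule F M) :
    ((U : Set M) \ {0}).ncard = Fintype.card F ^ finrank F U - 1 := by
  rw [Set.ncard_diff (by simp [U.zero_mem]) (Set.toFinite _), Set.ncard_singleton,
    ← Nat.card_coe_set_eq]
  congr 1
  rw [← aux_natCard (F := F) (M := U)]
  exact Nat.card_congr (Equiv.refl _)

lemma aux_submodule_le_iff (U : Submodule F M) (P : ℙ F M) :
    P.submodule ≤ U ↔ P.rep ∈ U := by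
  rw [Projectivization.submodule_eq, Submodule.span_singleton_le_iff_mem]

lemma aux_mk_mem_iff (U : Submodule F M) (v : M) (hv : v ≠ 0) :
    Projectivization.mk F v hv ∈ {P : ℙ F M | P.submodule ≤ U} ↔ v ∈ U := by
  rw [Set.mem_setOf_eq, Projectivization.submodule_mk, Submodule.span_singleton_le_iff_mem]

lemma aux_ncard_prod {α β : Type*} (s : Set α) (t : Set β) :
    (s ×ˢ t).ncard = s.ncard * t.ncard := by
  rw [← Nat.card_coe_set_eq, ← Nat.card_coe_set_eq, ← Nat.card_coe_set_eq,
    Nat.card_congr (Equiv.Set.prod s t), Nat.card_prod]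

lemma aux_points_mul [Finite M] (U : Submodule F M) :
    {P : ℙ F M | P.submodule ≤ U}.ncard * (Fintype.card F - 1)
      = Fintype.card F ^ finrank F U - 1 := by
  classical
  set S := {P : ℙ F M | P.submodule ≤ U} with hS
  set A := {a : F | a ≠ 0} with hA
  have hAcard : A.ncard = Fintype.card F - 1 := by
    have : A = Set.univ \ {0} := by ext a; simp [hA]
    rw [this, Set.ncard_diff (by simp) (Set.toFinite _), Set.ncard_singleton, Set.ncard_univ,
      Nat.card_eq_fintype_card]
  have himg : (fun x : ℙ F M × F => x.2 • x.1.rep) '' (S ×ˢ A) = (U : Set M) \ {0} := by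
    ext v
    constructor
    · rintro ⟨⟨P, a⟩, ⟨hP, ha⟩, rfl⟩
      exact ⟨U.smul_mem _ ((aux_submodule_le_iff U P).1 hP),
        smul_ne_zero ha P.rep_nonzero⟩
    · rintro ⟨hv, hv0⟩
      have hv0' : v ≠ 0 := hv0
      obtain ⟨a, ha⟩ := Projectivization.exists_smul_eq_mk_rep F v hv0'
      refine ⟨(Projectivization.mk F v hv0', ((a⁻¹ : Fˣ) : F)), ⟨?_, ?_⟩, ?_⟩
      · rw [Set.mem_setOf_eq, aux_submodule_le_iff, ← ha]
        exact U.smul_mem _ hv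
      · simp only [hA, Set.mem_setOf_eq]
        exact Units.ne_zero _
      · show ((a⁻¹ : Fˣ) : F) • (Projectivization.mk F v hv0').rep = v
        rw [← ha]
        show ((a⁻¹ : Fˣ) : F) • ((a : F) • v) = v
        rw [smul_smul, ← Units.val_mul, inv_mul_cancel, Units.val_one, one_smul]
  have hinj : Set.InjOn (fun x : ℙ F M × F => x.2 • x.1.rep) (S ×ˢ A) := by
    rintro ⟨P, a⟩ ⟨hP, ha⟩ ⟨P', a'⟩ ⟨hP', ha'⟩ h
    simp only at h
    have hPP' : P = P' := by
      have h1 : Projectivization.mk F (a • P.rep) (smul_ne_zero ha P.rep_nonzero) = P := by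
        conv_rhs => rw [← P.mk_rep]
        rw [Projectivization.mk_eq_mk_iff']
        exact ⟨a, rfl⟩
      have h2 : Projectivization.mk F (a' • P'.rep) (smul_ne_zero ha' P'.rep_nonzero) = P' := by
        conv_rhs => rw [← P'.mk_rep]
        rw [Projectivization.mk_eq_mk_iff']
        exact ⟨a', rfl⟩
      rw [← h1, ← h2]
      congr 1
    subst hPP'
    have : a = a' := smul_left_injective F P.rep_nonzero h
    simp [this]
  rw [← hAcard, ← aux_ncard_prod, ← Set.ncard_image_of_injOn hinj, himg,
    aux_ncard_sub_diff]

lemma aux_qpos : 1 < Fintype.card F := Fintype.one_lt_card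

lemma aux_sq : (Fintype.card F + 1) * (Fintype.card F - 1) = Fintype.card F ^ 2 - 1 := by
  have h : 1 ≤ Fintype.card F := Fintype.card_pos
  obtain ⟨k, hk⟩ := Nat.exists_eq_add_of_le h
  rw [hk]; simp [pow_two]; ring_nf; omega

lemma aux_points_d2 [Finite M] (U : Submodule F M) (hU : finrank F U = 2) :
    {P : ℙ F M | P.submodule ≤ U}.ncard = Fintype.card F + 1 := by
  have h := aux_points_mul U
  rw [hU, ← aux_sq] at h
  exact Nat.eq_of_mul_eq_mul_right (by have := aux_qpos (F := F); omega) h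

lemma aux_points_d1 [Finite M] (U : Submodule F M) (hU : finrank F U = 1) :
    {P : ℙ F M | P.submodule ≤ U}.ncard = 1 := by
  have h := aux_points_mul U
  rw [hU, pow_one] at h
  exact Nat.eq_of_mul_eq_mul_right (by have := aux_qpos (F := F); omega)
    (h.trans (one_mul _).symm)

lemma aux_skew [Finite M] {W W' : Submodule F M}
    (h : {P : ℙ F M | P.submodule ≤ W} ∩ {P : ℙ F M | P.submodule ≤ W'} = ∅) :
    W ⊓ W' = ⊥ := by
  by_contra h0
  obtain ⟨v, hv, hv0⟩ := Submodule.exists_mem_ne_zero_of_ne_bot h0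
  exact Set.eq_empty_iff_forall_notMem.1 h (Projectivization.mk F v hv0)
    ⟨(aux_mk_mem_iff W v hv0).2 hv.1, (aux_mk_mem_iff W' v hv0).2 hv.2⟩

lemma aux_ncard_union4 {X : Type*} [Finite X] (s t u v : Set X)
    (hst : s ∩ t = ∅) (hsu : s ∩ u = ∅) (htu : t ∩ u = ∅)
    (hsv : s ∩ v = ∅) (htv : t ∩ v = ∅) (huv : u ∩ v = ∅) :
    (s ∪ t ∪ u ∪ v).ncard = s.ncard + t.ncard + u.ncard + v.ncard := by
  have dst : Disjoint s t := Set.disjoint_iff_inter_eq_empty.2 hst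
  have dsu : Disjoint s u := Set.disjoint_iff_inter_eq_empty.2 hsu
  have dtu : Disjoint t u := Set.disjoint_iff_inter_eq_empty.2 htu
  have dsv : Disjoint s v := Set.disjoint_iff_inter_eq_empty.2 hsv
  have dtv : Disjoint t v := Set.disjoint_iff_inter_eq_empty.2 htv
  have duv : Disjoint u v := Set.disjoint_iff_inter_eq_empty.2 huv
  rw [Set.ncard_union_eq (by simp [Set.disjoint_union_left, dsv, dtv, duv])
    (Set.toFinite _) (Set.toFinite _),
    Set.ncard_union_eq (by simp [Set.disjoint_union_left, dsu, dtu])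
    (Set.toFinite _) (Set.toFinite _),
    Set.ncard_union_eq dst (Set.toFinite _) (Set.toFinite _)]

end helpers

section dual

variable {F : Type*} [Field F] [Fintype F]

instance : Finite (Module.Dual F (Fin 4 → F)) :=
  Finite.of_injective (fun f => (f : (Fin 4 → F) → F)) DFunLike.coe_injective

lemma aux_dual_count (W : Submodule F (Fin 4 → F)) (hW : finrank F W = 2) :
    {f : Module.Dual F (Fin 4 → F) | f ≠ 0 ∧ W ≤ LinearMap.ker f}.ncard
      = Fintype.card F ^ 2 - 1 := by
  have hV : finrank F (Fin 4 → F) = 4 := Module.finrank_fin_fun F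
  have hann : finrank F W.dualAnnihilator = 2 := by
    have h1 : finrank F ((Fin 4 → F) ⧸ W) = finrank F W.dualAnnihilator :=
      LinearEquiv.finrank_eq (Subspace.quotEquivAnnihilator W)
    have h2 := W.finrank_quotient_add_finrank
    omega
  have hset : {f : Module.Dual F (Fin 4 → F) | f ≠ 0 ∧ W ≤ LinearMap.ker f}
      = (W.dualAnnihilator : Set (Module.Dual F (Fin 4 → F))) \ {0} := by
    ext f
    simp only [Set.mem_setOf_eq, Set.mem_diff, SetLike.mem_coe,
      Submodule.mem_dualAnnihilator, Set.mem_singleton_iff, SetLike.le_def,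
      LinearMap.mem_ker]
    tauto
  rw [hset, aux_ncard_sub_diff W.dualAnnihilator, hann]

lemma aux_dual_total :
    {f : Module.Dual F (Fin 4 → F) | f ≠ 0}.ncard = Fintype.card F ^ 4 - 1 := by
  have hV : finrank F (Fin 4 → F) = 4 := Module.finrank_fin_fun F
  have hset : {f : Module.Dual F (Fin 4 → F) | f ≠ 0}
      = ((⊤ : Submodule F (Module.Dual F (Fin 4 → F))) :
          Set (Module.Dual F (Fin 4 → F))) \ {0} := by
    ext f; simp
  rw [hset, aux_ncard_sub_diff ⊤, finrank_top, Subspace.dual_finrank_eq, hV]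

end dual

set_option maxHeartbeats 1000000 in
/-- The linear code over `GF(q)`, `q > 2`, associated with the minimal cutting blocking set
`B` of `PG(3, q)` consisting of the `4(q+1)` points on three pairwise skew lines of a
regulus of a hyperbolic quadric and one external line, is a `[4(q+1), 4]_q` code
(length `4(q+1)`, the points of `B` span `PG(3,q)`) with nonzero weights `3q` and `4q`
and weight distribution `A_{3q} = 4(q²-1)`, `A_{4q} = (q²-3)(q²-1)`. -/
theorem statement12 (q : ℕ) (F : Type*) [Field F] [Fintype F]
    (hq : Fintype.card F = q) (hq2 : 2 < q)
    (Q ℓ₁ ℓ₂ ℓ₃ r : Set (ℙ F (Fin 4 → F)))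
    (hQ : IsHyperbolicQuadric Q)
    (hl₁ : IsProjLine ℓ₁) (hl₂ : IsProjLine ℓ₂) (hl₃ : IsProjLine ℓ₃)
    (hl₁Q : ℓ₁ ⊆ Q) (hl₂Q : ℓ₂ ⊆ Q) (hl₃Q : ℓ₃ ⊆ Q)
    (h₁₂ : ℓ₁ ∩ ℓ₂ = ∅) (h₁₃ : ℓ₁ ∩ ℓ₃ = ∅) (h₂₃ : ℓ₂ ∩ ℓ₃ = ∅)
    (hr : IsProjLine r) (hrQ : r ∩ Q = ∅)
    (B : Set (ℙ F (Fin 4 → F))) (hB : B = ℓ₁ ∪ ℓ₂ ∪ ℓ₃ ∪ r) :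
    B.ncard = 4 * (q + 1) ∧
    Projectivization.Subspace.span B = ⊤ ∧
    (∀ f : (Fin 4 → F) →ₗ[F] F, f ≠ 0 → wt B f = 3 * q ∨ wt B f = 4 * q) ∧
    {f : (Fin 4 → F) →ₗ[F] F | f ≠ 0 ∧ wt B f = 3 * q}.ncard = 4 * (q ^ 2 - 1) ∧
    {f : (Fin 4 → F) →ₗ[F] F | f ≠ 0 ∧ wt B f = 4 * q}.ncard
      = (q ^ 2 - 3) * (q ^ 2 - 1) := by
  subst hq
  set q := Fintype.card F with hqdef
  have hq3 : 3 ≤ q := hq2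
  have hV : finrank F (Fin 4 → F) = 4 := Module.finrank_fin_fun F
  obtain ⟨W₁, hW₁, hl₁e⟩ := hl₁
  obtain ⟨W₂, hW₂, hl₂e⟩ := hl₂
  obtain ⟨W₃, hW₃, hl₃e⟩ := hl₃
  obtain ⟨Wr, hWr, hre⟩ := hr
  -- disjointness of r from the three lines
  have hdisjr : ∀ ℓ : Set (ℙ F (Fin 4 → F)), ℓ ⊆ Q → ℓ ∩ r = ∅ := by
    intro ℓ hℓQ
    rw [Set.eq_empty_iff_forall_notMem]
    rintro P ⟨h1, h2⟩
    exact Set.eq_empty_iff_forall_notMem.1 hrQ P ⟨h2, hℓQ h1⟩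
  have h₁r : ℓ₁ ∩ r = ∅ := hdisjr ℓ₁ hl₁Q
  have h₂r : ℓ₂ ∩ r = ∅ := hdisjr ℓ₂ hl₂Q
  have h₃r : ℓ₃ ∩ r = ∅ := hdisjr ℓ₃ hl₃Q
  rw [hl₁e, hl₂e] at h₁₂
  rw [hl₁e, hl₃e] at h₁₃
  rw [hl₂e, hl₃e] at h₂₃
  rw [hl₁e, hre] at h₁r
  rw [hl₂e, hre] at h₂r
  rw [hl₃e, hre] at h₃r
  rw [hl₁e, hl₂e, hl₃e, hre] at hB
  clear hl₁Q hl₂Q hl₃Q hrQ hQ hdisjr hl₁e hl₂e hl₃e hre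
  -- trivial intersections of the submodules
  have hI12 : W₁ ⊓ W₂ = ⊥ := aux_skew h₁₂
  have hI13 : W₁ ⊓ W₃ = ⊥ := aux_skew h₁₃
  have hI23 : W₂ ⊓ W₃ = ⊥ := aux_skew h₂₃
  have hI1r : W₁ ⊓ Wr = ⊥ := aux_skew h₁r
  have hI2r : W₂ ⊓ Wr = ⊥ := aux_skew h₂r
  have hI3r : W₃ ⊓ Wr = ⊥ := aux_skew h₃r
  -- rank of sups
  have hsup : ∀ W W' : Submodule F (Fin 4 → F), finrank F W = 2 → finrank F W' = 2 →
      W ⊓ W' = ⊥ → finrank F ((W ⊔ W' : Submodule F (Fin 4 → F))) = 4 := by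
    intro W W' h h' hI
    have := Submodule.finrank_sup_add_finrank_inf_eq W W'
    rw [hI, finrank_bot, h, h'] at this
    omega
  -- subsets of B
  have hsub1 : {p : ℙ F (Fin 4 → F) | p.submodule ≤ W₁} ⊆ B := by
    intro x hx; rw [hB]; exact Or.inl (Or.inl (Or.inl hx))
  have hsub2 : {p : ℙ F (Fin 4 → F) | p.submodule ≤ W₂} ⊆ B := by
    intro x hx; rw [hB]; exact Or.inl (Or.inl (Or.inr hx))
  -- cardinality of B
  have hBcard : B.ncard = 4 * (q + 1) := by
    rw [hB, aux_ncard_union4 _ _ _ _ h₁₂ h₁₃ h₂₃ h₁r h₂r h₃r,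
      aux_points_d2 W₁ hW₁, aux_points_d2 W₂ hW₂, aux_points_d2 W₃ hW₃,
      aux_points_d2 Wr hWr]
    ring
  -- span = ⊤
  have hspan : Projectivization.Subspace.span B = ⊤ := by
    have hsup12 : W₁ ⊔ W₂ = ⊤ := by
      apply Submodule.eq_top_of_finrank_eq
      rw [hsup W₁ W₂ hW₁ hW₂ hI12, hV]
    rw [eq_top_iff, SetLike.le_def]
    intro P _
    induction P using Projectivization.ind with
    | h v hv =>
      have hvmem : v ∈ W₁ ⊔ W₂ := by rw [hsup12]; trivial
      obtain ⟨a, ha, b, hb, rfl⟩ := Submodule.mem_sup.1 hvmem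
      by_cases hb0 : b = 0
      · have haW : a + b ∈ W₁ := by rw [hb0, add_zero]; exact ha
        exact Projectivization.Subspace.subset_span B
          (hsub1 ((aux_mk_mem_iff W₁ _ hv).2 haW))
      · by_cases ha0 : a = 0
        · have hbW : a + b ∈ W₂ := by rw [ha0, zero_add]; exact hb
          exact Projectivization.Subspace.subset_span B
            (hsub2 ((aux_mk_mem_iff W₂ _ hv).2 hbW))
        · exact (Projectivization.Subspace.span B).mem_add a b ha0 hb0 hv
            (Projectivization.Subspace.subset_span B
              (hsub1 ((aux_mk_mem_iff W₁ a ha0).2 ha)))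
            (Projectivization.Subspace.subset_span B
              (hsub2 ((aux_mk_mem_iff W₂ b hb0).2 hb)))
  -- rank of kernels
  have hker : ∀ f : (Fin 4 → F) →ₗ[F] F, f ≠ 0 → finrank F (LinearMap.ker f) = 3 := by
    intro f hf
    have hrange : finrank F (LinearMap.range f) = 1 := by
      have hne : LinearMap.range f ≠ ⊥ := by
        simpa [LinearMap.range_eq_bot] using hf
      have hle : finrank F (LinearMap.range f) ≤ 1 := by
        have := Submodule.finrank_le (LinearMap.range f)
        rwa [Module.finrank_self] at this
      have hpos : 0 < finrank F (LinearMap.range f) := by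
        rcases Nat.eq_zero_or_pos (finrank F (LinearMap.range f)) with h0 | h
        · exact absurd (Submodule.finrank_eq_zero.1 h0) hne
        · exact h
      omega
    have := LinearMap.finrank_range_add_finrank_ker f
    rw [hV, hrange] at this
    omega
  -- intersection of a line with the hyperplane of f
  have hlineZ : ∀ (W : Submodule F (Fin 4 → F)) (f : (Fin 4 → F) →ₗ[F] F),
      {P : ℙ F (Fin 4 → F) | P.submodule ≤ W} ∩ {P : ℙ F (Fin 4 → F) | f P.rep = 0}
        = {P : ℙ F (Fin 4 → F) | P.submodule ≤ W ⊓ LinearMap.ker f} := by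
    intro W f
    ext P
    simp only [Set.mem_inter_iff, Set.mem_setOf_eq]
    constructor
    · rintro ⟨h1, h2⟩
      exact le_inf h1 ((aux_submodule_le_iff _ P).2 (LinearMap.mem_ker.2 h2))
    · intro h
      exact ⟨h.trans inf_le_left,
        LinearMap.mem_ker.1 ((aux_submodule_le_iff _ P).1 (h.trans inf_le_right))⟩
  have hcountIn : ∀ (W : Submodule F (Fin 4 → F)) (f : (Fin 4 → F) →ₗ[F] F),
      finrank F W = 2 → W ≤ LinearMap.ker f →
      ({P : ℙ F (Fin 4 → F) | P.submodule ≤ W} ∩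
        {P : ℙ F (Fin 4 → F) | f P.rep = 0}).ncard = q + 1 := by
    intro W f hW hWK
    rw [hlineZ, inf_eq_left.2 hWK]
    exact aux_points_d2 W hW
  have hcountOut : ∀ (W : Submodule F (Fin 4 → F)) (f : (Fin 4 → F) →ₗ[F] F),
      f ≠ 0 → finrank F W = 2 → ¬ W ≤ LinearMap.ker f →
      ({P : ℙ F (Fin 4 → F) | P.submodule ≤ W} ∩
        {P : ℙ F (Fin 4 → F) | f P.rep = 0}).ncard = 1 := by
    intro W f hf hW hWK
    rw [hlineZ]
    apply aux_points_d1
    have hle2 : finrank F ((W ⊓ LinearMap.ker f : Submodule F (Fin 4 → F))) ≤ 2 := by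
      have := Submodule.finrank_mono (inf_le_left : W ⊓ LinearMap.ker f ≤ W)
      omega
    have hne2 : finrank F ((W ⊓ LinearMap.ker f : Submodule F (Fin 4 → F))) ≠ 2 := by
      intro h2
      apply hWK
      have : W ⊓ LinearMap.ker f = W :=
        Submodule.eq_of_le_of_finrank_le inf_le_left (by omega)
      exact inf_eq_left.1 this
    have hge1 : 1 ≤ finrank F ((W ⊓ LinearMap.ker f : Submodule F (Fin 4 → F))) := by
      have h1 := Submodule.finrank_sup_add_finrank_inf_eq W (LinearMap.ker f)
      have h2 := Submodule.finrank_le ((W ⊔ LinearMap.ker f : Submodule F (Fin 4 → F)))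
      rw [hV] at h2
      rw [hW, hker f hf] at h1
      omega
    omega
  -- at most one line in a hyperplane
  have honly : ∀ (f : (Fin 4 → F) →ₗ[F] F), f ≠ 0 →
      ∀ W W' : Submodule F (Fin 4 → F), finrank F W = 2 → finrank F W' = 2 →
      W ⊓ W' = ⊥ → W ≤ LinearMap.ker f → ¬ W' ≤ LinearMap.ker f := by
    intro f hf W W' h h' hI hW hW'
    have hsle : W ⊔ W' ≤ LinearMap.ker f := sup_le hW hW'
    have := Submodule.finrank_mono hsle
    rw [hsup W W' h h' hI, hker f hf] at this
    omega
  -- the count of points of B on a hyperplane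
  have hBZ : ∀ f : (Fin 4 → F) →ₗ[F] F,
      {P ∈ B | f P.rep = 0}.ncard
        = ({P : ℙ F (Fin 4 → F) | P.submodule ≤ W₁} ∩ {P | f P.rep = 0}).ncard
          + ({P : ℙ F (Fin 4 → F) | P.submodule ≤ W₂} ∩ {P | f P.rep = 0}).ncard
          + ({P : ℙ F (Fin 4 → F) | P.submodule ≤ W₃} ∩ {P | f P.rep = 0}).ncard
          + ({P : ℙ F (Fin 4 → F) | P.submodule ≤ Wr} ∩ {P | f P.rep = 0}).ncard := by
    intro f
    have hsep : {P ∈ B | f P.rep = 0}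
        = ({P : ℙ F (Fin 4 → F) | P.submodule ≤ W₁} ∩ {P | f P.rep = 0})
          ∪ ({P : ℙ F (Fin 4 → F) | P.submodule ≤ W₂} ∩ {P | f P.rep = 0})
          ∪ ({P : ℙ F (Fin 4 → F) | P.submodule ≤ W₃} ∩ {P | f P.rep = 0})
          ∪ ({P : ℙ F (Fin 4 → F) | P.submodule ≤ Wr} ∩ {P | f P.rep = 0}) := by
      rw [hB]; ext P
      simp only [Set.mem_setOf_eq, Set.mem_union, Set.mem_inter_iff]
      tauto
    have hdd : ∀ s t : Set (ℙ F (Fin 4 → F)), s ∩ t = ∅ →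
        (s ∩ {P | f P.rep = 0}) ∩ (t ∩ {P | f P.rep = 0}) = ∅ := by
      intro s t hst
      rw [Set.eq_empty_iff_forall_notMem]
      rintro P ⟨⟨h1, _⟩, ⟨h2, _⟩⟩
      exact Set.eq_empty_iff_forall_notMem.1 hst P ⟨h1, h2⟩
    rw [hsep, aux_ncard_union4 _ _ _ _ (hdd _ _ h₁₂) (hdd _ _ h₁₃) (hdd _ _ h₂₃)
      (hdd _ _ h₁r) (hdd _ _ h₂r) (hdd _ _ h₃r)]
  -- weight in the two cases
  have hwt3 : ∀ f : (Fin 4 → F) →ₗ[F] F, f ≠ 0 →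
      (W₁ ≤ LinearMap.ker f ∨ W₂ ≤ LinearMap.ker f ∨ W₃ ≤ LinearMap.ker f
        ∨ Wr ≤ LinearMap.ker f) → wt B f = 3 * q := by
    intro f hf hE
    have hinner : {P ∈ B | f P.rep = 0}.ncard = q + 4 := by
      rw [hBZ f]
      rcases hE with h | h | h | h
      · rw [hcountIn W₁ f hW₁ h,
          hcountOut W₂ f hf hW₂ (honly f hf W₁ W₂ hW₁ hW₂ hI12 h),
          hcountOut W₃ f hf hW₃ (honly f hf W₁ W₃ hW₁ hW₃ hI13 h),
          hcountOut Wr f hf hWr (honly f hf W₁ Wr hW₁ hWr hI1r h)]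
      · rw [hcountIn W₂ f hW₂ h,
          hcountOut W₁ f hf hW₁ fun h' => honly f hf W₁ W₂ hW₁ hW₂ hI12 h' h,
          hcountOut W₃ f hf hW₃ (honly f hf W₂ W₃ hW₂ hW₃ hI23 h),
          hcountOut Wr f hf hWr (honly f hf W₂ Wr hW₂ hWr hI2r h)]
        omega
      · rw [hcountIn W₃ f hW₃ h,
          hcountOut W₁ f hf hW₁ fun h' => honly f hf W₁ W₃ hW₁ hW₃ hI13 h' h,
          hcountOut W₂ f hf hW₂ fun h' => honly f hf W₂ W₃ hW₂ hW₃ hI23 h' h,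
          hcountOut Wr f hf hWr (honly f hf W₃ Wr hW₃ hWr hI3r h)]
        omega
      · rw [hcountIn Wr f hWr h,
          hcountOut W₁ f hf hW₁ fun h' => honly f hf W₁ Wr hW₁ hWr hI1r h' h,
          hcountOut W₂ f hf hW₂ fun h' => honly f hf W₂ Wr hW₂ hWr hI2r h' h,
          hcountOut W₃ f hf hW₃ fun h' => honly f hf W₃ Wr hW₃ hWr hI3r h' h]
        omega
    rw [wt, hBcard, hinner]
    omega
  have hwt4 : ∀ f : (Fin 4 → F) →ₗ[F] F, f ≠ 0 →
      ¬(W₁ ≤ LinearMap.ker f ∨ W₂ ≤ LinearMap.ker f ∨ W₃ ≤ LinearMap.ker f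
        ∨ Wr ≤ LinearMap.ker f) → wt B f = 4 * q := by
    intro f hf hE
    push_neg at hE
    obtain ⟨hE1, hE2, hE3, hEr⟩ := hE
    have hinner : {P ∈ B | f P.rep = 0}.ncard = 4 := by
      rw [hBZ f, hcountOut W₁ f hf hW₁ hE1, hcountOut W₂ f hf hW₂ hE2,
        hcountOut W₃ f hf hW₃ hE3, hcountOut Wr f hf hWr hEr]
    rw [wt, hBcard, hinner]
    omega
  -- the set with weight 3q
  have h3card : {f : (Fin 4 → F) →ₗ[F] F | f ≠ 0 ∧ wt B f = 3 * q}.ncard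
      = 4 * (q ^ 2 - 1) := by
    have hset3 : {f : (Fin 4 → F) →ₗ[F] F | f ≠ 0 ∧ wt B f = 3 * q}
        = {f : (Fin 4 → F) →ₗ[F] F | f ≠ 0 ∧ W₁ ≤ LinearMap.ker f}
          ∪ {f : (Fin 4 → F) →ₗ[F] F | f ≠ 0 ∧ W₂ ≤ LinearMap.ker f}
          ∪ {f : (Fin 4 → F) →ₗ[F] F | f ≠ 0 ∧ W₃ ≤ LinearMap.ker f}
          ∪ {f : (Fin 4 → F) →ₗ[F] F | f ≠ 0 ∧ Wr ≤ LinearMap.ker f} := by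
      ext f
      simp only [Set.mem_setOf_eq, Set.mem_union]
      constructor
      · rintro ⟨hf, hw⟩
        by_cases hE : W₁ ≤ LinearMap.ker f ∨ W₂ ≤ LinearMap.ker f ∨ W₃ ≤ LinearMap.ker f
            ∨ Wr ≤ LinearMap.ker f
        · tauto
        · exfalso
          rw [hwt4 f hf hE] at hw
          omega
      · rintro (((⟨hf, h⟩ | ⟨hf, h⟩) | ⟨hf, h⟩) | ⟨hf, h⟩)
        · exact ⟨hf, hwt3 f hf (Or.inl h)⟩
        · exact ⟨hf, hwt3 f hf (Or.inr (Or.inl h))⟩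
        · exact ⟨hf, hwt3 f hf (Or.inr (Or.inr (Or.inl h)))⟩
        · exact ⟨hf, hwt3 f hf (Or.inr (Or.inr (Or.inr h)))⟩
    have hdA : ∀ W W' : Submodule F (Fin 4 → F), finrank F W = 2 → finrank F W' = 2 →
        W ⊓ W' = ⊥ →
        {f : (Fin 4 → F) →ₗ[F] F | f ≠ 0 ∧ W ≤ LinearMap.ker f}
          ∩ {f : (Fin 4 → F) →ₗ[F] F | f ≠ 0 ∧ W' ≤ LinearMap.ker f} = ∅ := by
      intro W W' h h' hI
      rw [Set.eq_empty_iff_forall_notMem]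
      rintro f ⟨⟨hf, h1⟩, ⟨_, h2⟩⟩
      exact honly f hf W W' h h' hI h1 h2
    rw [hset3, aux_ncard_union4 _ _ _ _ (hdA W₁ W₂ hW₁ hW₂ hI12) (hdA W₁ W₃ hW₁ hW₃ hI13)
      (hdA W₂ W₃ hW₂ hW₃ hI23) (hdA W₁ Wr hW₁ hWr hI1r) (hdA W₂ Wr hW₂ hWr hI2r)
      (hdA W₃ Wr hW₃ hWr hI3r),
      aux_dual_count W₁ hW₁, aux_dual_count W₂ hW₂, aux_dual_count W₃ hW₃,
      aux_dual_count Wr hWr]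
    ring
  refine ⟨hBcard, hspan, ?_, h3card, ?_⟩
  · intro f hf
    by_cases hE : W₁ ≤ LinearMap.ker f ∨ W₂ ≤ LinearMap.ker f ∨ W₃ ≤ LinearMap.ker f
        ∨ Wr ≤ LinearMap.ker f
    · exact Or.inl (hwt3 f hf hE)
    · exact Or.inr (hwt4 f hf hE)
  · -- A_{4q}
    have h34 : (3 : ℕ) * q ≠ 4 * q := by omega
    have hsplit : {f : (Fin 4 → F) →ₗ[F] F | f ≠ 0}
        = {f : (Fin 4 → F) →ₗ[F] F | f ≠ 0 ∧ wt B f = 3 * q}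
          ∪ {f : (Fin 4 → F) →ₗ[F] F | f ≠ 0 ∧ wt B f = 4 * q} := by
      ext f
      simp only [Set.mem_setOf_eq, Set.mem_union]
      constructor
      · intro hf
        by_cases hE : W₁ ≤ LinearMap.ker f ∨ W₂ ≤ LinearMap.ker f ∨ W₃ ≤ LinearMap.ker f
            ∨ Wr ≤ LinearMap.ker f
        · exact Or.inl ⟨hf, hwt3 f hf hE⟩
        · exact Or.inr ⟨hf, hwt4 f hf hE⟩
      · rintro (⟨hf, _⟩ | ⟨hf, _⟩) <;> exact hf
    have hdisj : Disjoint {f : (Fin 4 → F) →ₗ[F] F | f ≠ 0 ∧ wt B f = 3 * q}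
        {f : (Fin 4 → F) →ₗ[F] F | f ≠ 0 ∧ wt B f = 4 * q} := by
      rw [Set.disjoint_iff_inter_eq_empty, Set.eq_empty_iff_forall_notMem]
      rintro f ⟨⟨_, h3⟩, ⟨_, h4⟩⟩
      exact h34 (h3.symm.trans h4)
    have hsum := aux_dual_total (F := F)
    rw [hsplit, Set.ncard_union_eq hdisj (Set.toFinite _) (Set.toFinite _), h3card] at hsum
    -- arithmetic
    have hx : 3 ≤ q ^ 2 := by nlinarith
    obtain ⟨y, hy⟩ := Nat.exists_eq_add_of_le hx
    have e1 : q ^ 2 - 3 = y := by omega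
    have e2 : q ^ 2 - 1 = y + 2 := by omega
    have e4 : q ^ 4 = y * (y + 2) + 4 * (y + 2) + 1 := by
      have : q ^ 4 = (q ^ 2) * (q ^ 2) := by ring
      rw [this, hy]; ring
    have hT : q ^ 4 - 1 = y * (y + 2) + 4 * (y + 2) := by
      rw [e4, Nat.add_sub_cancel]
    rw [e2, hT] at hsum
    rw [e1, e2]
    exact Nat.add_left_cancel (hsum.trans (by ring))
end

section
/- Let φ: PG(2,q²) → subsets of PG(5,q) be the field reduction map sending each point (1-dimensional GF(q²)-subspace of GF(q²)³) to the corresponding line of PG(5,q) (2-dimensional GF(q)-subspace of GF(q)⁶ = GF(q²)³). If P is a set of points of PG(2,q²) that is not contained in any line of PG(2,q²) and not contained in any degenerate Hermitian curve of rank 2 of PG(2,q²), then the lines {φ(P) : P ∈ P} are in higgledy-piggledy arrangement in PG(5,q), i.e., their union of points is a cutting blocking set of PG(5,q). -/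
open scoped LinearAlgebra.Projectivization
open Projectivization Module

/-- The field reduction map: a point of `PG(2, q²) = ℙ L V` is sent to the set of points of
`PG(5, q) = ℙ K V` lying on the corresponding spread line (the `K`-restriction of its
`L`-span). -/
def fieldReduction {K L V : Type*} [Field K] [Field L] [Algebra K L]
    [AddCommGroup V] [Module K V] [Module L V] [IsScalarTower K L V]
    (P : ℙ L V) : Set (ℙ K V) :=
  {Q : ℙ K V | Q.submodule ≤ Submodule.restrictScalars K P.submodule}

/-- A degenerate Hermitian curve of rank 2 of `PG(2, q²)`: the cone with vertex a point
`P₀` over a Baer subline (the `K`-combinations of two `L`-independent vectors spanning a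
line not through `P₀`). -/
def IsDegHermitian (K : Type*) {L V : Type*} [Field K] [Field L] [Algebra K L]
    [AddCommGroup V] [Module L V] (H : Set (ℙ L V)) : Prop :=
  ∃ (P₀ : ℙ L V) (u w : V), LinearIndependent L ![u, w] ∧
    P₀.submodule ⊓ Submodule.span L {u, w} = ⊥ ∧
    H = {P : ℙ L V | ∃ a b : K, ¬(a = 0 ∧ b = 0) ∧
      P.submodule ≤ P₀.submodule ⊔
        Submodule.span L {algebraMap K L a • u + algebraMap K L b • w}}

section Helpers

variable {K V : Type*} [Field K] [AddCommGroup V] [Module K V]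

private lemma rep_mk_mem_iff (M : Submodule K V) {v : V} (hv : v ≠ 0) :
    (Projectivization.mk K v hv).rep ∈ M ↔ v ∈ M := by
  obtain ⟨a, ha⟩ := exists_smul_eq_mk_rep K v hv
  rw [← ha, M.smul_mem_iff' a]

/-- The set of points whose representative lies in a submodule `M` is a projective
subspace. -/
private def ofSubmodule (M : Submodule K V) : Projectivization.Subspace K V where
  carrier := {p | p.rep ∈ M}
  mem_add' v w hv hw hvw h1 h2 := by
    rw [Set.mem_setOf_eq, rep_mk_mem_iff] at h1 h2 ⊢
    exact M.add_mem h1 h2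

private lemma mem_ofSubmodule_iff (M : Submodule K V) (p : ℙ K V) :
    p ∈ ofSubmodule M ↔ p.rep ∈ M := Iff.rfl

private lemma mem_span_of_rep_mem_span (T : Set (ℙ K V)) (p : ℙ K V)
    (hp : p.rep ∈ Submodule.span K (Projectivization.rep '' T)) :
    p ∈ Projectivization.Subspace.span T := by
  have key : ∀ v, ∀ _ : v ∈ Submodule.span K (Projectivization.rep '' T), ∀ hv : v ≠ 0,
      Projectivization.mk K v hv ∈ Projectivization.Subspace.span T := by
    intro v hv
    induction hv using Submodule.span_induction with
    | mem x hx =>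
      intro hne
      obtain ⟨s, hs, rfl⟩ := hx
      rw [Projectivization.mk_rep]
      exact Projectivization.Subspace.subset_span T hs
    | zero => exact fun h => absurd rfl h
    | add x y hx hy ihx ihy =>
      intro hxy
      by_cases hx0 : x = 0
      · have hy0 : y ≠ 0 := by rintro rfl; simp [hx0] at hxy
        have he : Projectivization.mk K (x + y) hxy = Projectivization.mk K y hy0 :=
          (Projectivization.mk_eq_mk_iff K _ _ _ _).2 ⟨1, by simp [hx0]⟩
        rw [he]; exact ihy hy0
      · by_cases hy0 : y = 0
        · have he : Projectivization.mk K (x + y) hxy = Projectivization.mk K x hx0 :=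
            (Projectivization.mk_eq_mk_iff K _ _ _ _).2 ⟨1, by simp [hy0]⟩
          rw [he]; exact ihx hx0
        · exact (Projectivization.Subspace.span T).mem_add x y hx0 hy0 hxy (ihx hx0) (ihy hy0)
    | smul a x hx ih =>
      intro hax
      have ha : a ≠ 0 := fun h => hax (by simp [h])
      have hx0 : x ≠ 0 := fun h => hax (by simp [h])
      have he : Projectivization.mk K (a • x) hax = Projectivization.mk K x hx0 :=
        (Projectivization.mk_eq_mk_iff K _ _ _ _).2 ⟨Units.mk0 a ha, rfl⟩
      rw [he]; exact ih hx0
  have := key p.rep hp p.rep_nonzero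
  rwa [Projectivization.mk_rep] at this

private lemma eq_span_singleton_of_mem {M : Submodule K V} [FiniteDimensional K M]
    (hM : Module.finrank K M = 1) {v : V} (hv : v ≠ 0) (hvM : v ∈ M) :
    M = Submodule.span K {v} := by
  symm
  apply Submodule.eq_of_le_of_finrank_eq
  · rwa [Submodule.span_le, Set.singleton_subset_iff]
  · rw [finrank_span_singleton hv, hM]

private lemma submodule_eq_span_of_mem {p : ℙ K V} {v : V} (hv : v ≠ 0)
    (hvp : v ∈ p.submodule) : p.submodule = Submodule.span K {v} :=
  eq_span_singleton_of_mem p.finrank_submodule hv hvp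

private lemma range_eq_top_of_ne_zero {f : V →ₗ[K] K} (hf : f ≠ 0) :
    LinearMap.range f = ⊤ := by
  obtain ⟨v, hv⟩ : ∃ v, f v ≠ 0 := by
    by_contra h; push_neg at h; exact hf (LinearMap.ext fun v => h v)
  rw [LinearMap.range_eq_top]
  intro c
  exact ⟨(c * (f v)⁻¹) • v, by
    rw [map_smul, smul_eq_mul, mul_assoc, inv_mul_cancel₀ hv, mul_one]⟩

private lemma finrank_ker_add_one [FiniteDimensional K V] {f : V →ₗ[K] K} (hf : f ≠ 0) :
    Module.finrank K (LinearMap.ker f) + 1 = Module.finrank K V := by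
  have h := f.finrank_range_add_finrank_ker
  rw [range_eq_top_of_ne_zero hf, finrank_top, Module.finrank_self] at h
  omega

end Helpers

set_option maxHeartbeats 3200000 in
/-- If a set `S` of points of `PG(2, q²)` is contained in no line and in no degenerate
Hermitian curve of rank 2, then the corresponding spread lines of `PG(5, q)` obtained by
field reduction are in higgledy–piggledy arrangement: the union of their points is a
cutting blocking set of `PG(5, q)`. -/
theorem statement14 (q : ℕ) (K L : Type*) [Field K] [Field L] [Algebra K L]
    [Fintype K] [Fintype L] (hK : Fintype.card K = q) (hL : Fintype.card L = q ^ 2)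
    (S : Set (ℙ L (Fin 3 → L)))
    (hline : ¬ ∃ W : Submodule L (Fin 3 → L), Module.finrank L W = 2 ∧
      S ⊆ {P : ℙ L (Fin 3 → L) | P.submodule ≤ W})
    (hherm : ∀ H : Set (ℙ L (Fin 3 → L)), IsDegHermitian K H → ¬ S ⊆ H) :
    IsCuttingBlockingSet (⋃ P ∈ S, fieldReduction (K := K) P) := by
  classical
  haveI : Module.Finite K L := ⟨⟨Finset.univ, by simp⟩⟩
  haveI : FiniteDimensional K (Fin 3 → L) := FiniteDimensional.trans K L (Fin 3 → L)
  have hq2 : 2 ≤ q := hK ▸ Fintype.one_lt_card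
  have hKL2 : Module.finrank K L = 2 := by
    have hcard := card_eq_pow_finrank (K := K) (V := L)
    rw [hK, hL] at hcard
    exact (Nat.pow_right_injective hq2 hcard).symm
  have hV3 : Module.finrank L (Fin 3 → L) = 3 := by simp
  have hV6 : Module.finrank K (Fin 3 → L) = 6 := by
    rw [← Module.finrank_mul_finrank K L (Fin 3 → L), hKL2, hV3]
  intro Hset hH
  obtain ⟨f, hf0, rfl⟩ := hH
  set X : Set (ℙ K (Fin 3 → L)) := ⋃ P ∈ S, fieldReduction (K := K) P with hX
  set H : Set (ℙ K (Fin 3 → L)) := {p | f p.rep = 0} with hHdef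
  set M : Submodule K (Fin 3 → L) :=
    Submodule.span K (Projectivization.rep '' (H ∩ X)) with hM
  -- the main claim
  have hkey : LinearMap.ker f ≤ M := by
    by_contra hkey
    obtain ⟨x, hxker, hxM⟩ := SetLike.not_le_iff_exists.1 hkey
    -- a nonzero `K`-functional on `L`
    obtain ⟨t, ht1, -⟩ := Submodule.exists_dual_map_eq_bot_of_notMem
        (p := (⊥ : Submodule K L)) (x := (1 : L)) (by simp) inferInstance
    -- a functional vanishing on `M` but not at `x`
    obtain ⟨g, hgx, hgmap⟩ := Submodule.exists_dual_map_eq_bot_of_notMem hxM inferInstance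
    have hgM : ∀ m ∈ M, g m = 0 := fun m hm => by
      have h : g m ∈ M.map g := Submodule.mem_map_of_mem hm
      rwa [hgmap, Submodule.mem_bot] at h
    -- the map `ℓ ↦ t ∘ ℓ` from the `L`-dual to the `K`-dual
    haveI : IsScalarTower K L (Module.Dual L (Fin 3 → L)) :=
      ⟨fun c μ ℓ => by ext v; simp [Algebra.smul_def, mul_assoc]⟩
    haveI : FiniteDimensional K (Module.Dual L (Fin 3 → L)) :=
      FiniteDimensional.trans K L _
    set Φ : Module.Dual L (Fin 3 → L) →ₗ[K] Module.Dual K (Fin 3 → L) :=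
      { toFun := fun ℓ => t.comp (ℓ.restrictScalars K)
        map_add' := fun ℓ ℓ' => by ext v; simp
        map_smul' := fun c ℓ => by ext v; simp } with hΦ
    have hΦapp : ∀ (ℓ : Module.Dual L (Fin 3 → L)) (v : Fin 3 → L),
        Φ ℓ v = t (ℓ v) := fun ℓ v => rfl
    have hΦinj : Function.Injective Φ := by
      rw [← LinearMap.ker_eq_bot, LinearMap.ker_eq_bot']
      intro ℓ hℓ
      refine LinearMap.ext fun v => ?_
      rw [LinearMap.zero_apply]
      by_contra hy
      have hall : ∀ μ : L, t (μ * ℓ v) = 0 := by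
        intro μ
        have h := LinearMap.congr_fun hℓ (μ • v)
        rw [hΦapp, map_smul, smul_eq_mul] at h
        exact h
      apply ht1
      have h := hall (ℓ v)⁻¹
      rwa [inv_mul_cancel₀ hy] at h
    have hΦsurj : Function.Surjective Φ := by
      apply (LinearMap.injective_iff_surjective_of_finrank_eq_finrank ?_).1 hΦinj
      have h1 : Module.finrank L (Module.Dual L (Fin 3 → L)) = 3 := by
        rw [Subspace.dual_finrank_eq, hV3]
      have h2 : Module.finrank K (Module.Dual L (Fin 3 → L)) = 6 := by
        rw [← Module.finrank_mul_finrank K L (Module.Dual L (Fin 3 → L)), hKL2, h1]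
      have h3 : Module.finrank K (Module.Dual K (Fin 3 → L)) = 6 := by
        rw [Subspace.dual_finrank_eq, hV6]
      rw [h2, h3]
    obtain ⟨ℓ₁, hℓ₁⟩ := hΦsurj f
    obtain ⟨ℓ₂, hℓ₂⟩ := hΦsurj g
    have hl1 : ℓ₁ ≠ 0 := by rintro rfl; rw [map_zero] at hℓ₁; exact hf0 hℓ₁.symm
    -- every point of `S` carries a vector annihilated by `t ∘ ℓ₁` and `t ∘ ℓ₂`
    have hv_exists : ∀ P ∈ S, ∃ v : Fin 3 → L,
        v ≠ 0 ∧ v ∈ P.submodule ∧ t (ℓ₁ v) = 0 ∧ t (ℓ₂ v) = 0 := by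
      intro P hP
      set A := Submodule.restrictScalars K P.submodule with hA
      have hArank : Module.finrank K A = 2 := by
        rw [LinearEquiv.finrank_eq
          ((Submodule.restrictScalarsEquiv K L (Fin 3 → L) P.submodule).restrictScalars K)]
        rw [← Module.finrank_mul_finrank K L P.submodule, hKL2, P.finrank_submodule]
      have hfker : Module.finrank K (LinearMap.ker f) = 5 := by
        have h := finrank_ker_add_one hf0
        rw [hV6] at h; omega
      have hne : A ⊓ LinearMap.ker f ≠ ⊥ := by
        intro hbot
        have h1 := Submodule.finrank_sup_add_finrank_inf_eq A (LinearMap.ker f)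
        rw [hbot, finrank_bot, hArank, hfker] at h1
        have h2 : Module.finrank K ↥(A ⊔ LinearMap.ker f) ≤ 6 :=
          hV6 ▸ Submodule.finrank_le _
        omega
      obtain ⟨v, hvmem, hv0⟩ := (Submodule.ne_bot_iff _).1 hne
      have hvA : v ∈ P.submodule := hvmem.1
      have hvker : f v = 0 := hvmem.2
      set Q := Projectivization.mk K v hv0 with hQ
      have hQX : Q ∈ X := by
        rw [hX]
        refine Set.mem_biUnion hP ?_
        show Q.submodule ≤ Submodule.restrictScalars K P.submodule
        rw [hQ, Projectivization.submodule_mk]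
        rw [Submodule.span_le, Set.singleton_subset_iff]
        exact hvA
      have hQH : Q ∈ H := by
        show f Q.rep = 0
        have : Q.rep ∈ LinearMap.ker f := (rep_mk_mem_iff (LinearMap.ker f) hv0).2 hvker
        exact this
      have hQM : Q.rep ∈ M := Submodule.subset_span ⟨Q, ⟨hQH, hQX⟩, rfl⟩
      refine ⟨Q.rep, Q.rep_nonzero, ?_, ?_, ?_⟩
      · exact (rep_mk_mem_iff A hv0).2 hvA
      · rw [← hΦapp, hℓ₁]; exact hQH
      · rw [← hΦapp, hℓ₂]; exact hgM _ hQM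
    by_cases hdep : ∃ μ : L, ℓ₂ = μ • ℓ₁
    · obtain ⟨μ, hμ⟩ := hdep
      by_cases hμK : ∃ c : K, algebraMap K L c = μ
      · -- then g is a multiple of f, contradicting g x ≠ 0
        obtain ⟨c, rfl⟩ := hμK
        apply hgx
        have hgf : g x = c • f x := by
          rw [← hℓ₁, ← hℓ₂, hμ, hΦapp, hΦapp, LinearMap.smul_apply, algebraMap_smul,
            map_smul]
        rw [hgf, LinearMap.mem_ker.1 hxker, smul_zero]
      · -- then every point of S lies on the line `ker ℓ₁`
        push_neg at hμK
        apply hline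
        refine ⟨LinearMap.ker ℓ₁, ?_, ?_⟩
        · have h := finrank_ker_add_one hl1
          rw [hV3] at h; omega
        · -- `1` and `μ` span `L` over `K`
          have hli : LinearIndependent K ![(1 : L), μ] := by
            rw [LinearIndependent.pair_iff]
            intro s r hsr
            rw [Algebra.smul_def, Algebra.smul_def, mul_one] at hsr
            by_cases hr : r = 0
            · refine ⟨?_, hr⟩
              rw [hr, map_zero, zero_mul, add_zero] at hsr
              exact (map_eq_zero _).1 hsr
            · exfalso
              apply hμK (-(r⁻¹ * s))
              have hr' : algebraMap K L r ≠ 0 := by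
                simpa using hr
              rw [map_neg, map_mul, map_inv₀]
              field_simp
              linear_combination -hsr
          have hsp : ∀ z : L, ∃ a b : K, a • (1 : L) + b • μ = z := by
            intro z
            have htop : Submodule.span K (Set.range ![(1 : L), μ]) = ⊤ := by
              apply Submodule.eq_top_of_finrank_eq
              rw [finrank_span_eq_card hli, hKL2]
              simp
            have hzr : z ∈ Submodule.span K ({(1 : L), μ} : Set L) := by
              have hrange : Set.range ![(1 : L), μ] = {(1 : L), μ} := by
                simp [Matrix.range_cons, Matrix.range_empty, Set.pair_comm]
              rw [← hrange, htop]; trivial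
            exact Submodule.mem_span_pair.1 hzr
          intro P hP
          obtain ⟨v, hv0, hvP, ht1v, ht2v⟩ := hv_exists P hP
          have hker : ℓ₁ v = 0 := by
            by_contra hy
            have ht2v' : t (μ * ℓ₁ v) = 0 := by
              rw [hμ, LinearMap.smul_apply, smul_eq_mul] at ht2v
              exact ht2v
            apply ht1
            obtain ⟨a, b, hab⟩ := hsp (ℓ₁ v)⁻¹
            have h1 : (1 : L) = (a • (1 : L) + b • μ) * ℓ₁ v := by
              rw [hab, inv_mul_cancel₀ hy]
            rw [h1, add_mul, smul_mul_assoc, smul_mul_assoc, one_mul, map_add,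
              map_smul, map_smul, ht1v, ht2v', smul_zero, smul_zero, add_zero]
          show P.submodule ≤ LinearMap.ker ℓ₁
          rw [submodule_eq_span_of_mem hv0 hvP, Submodule.span_le,
            Set.singleton_subset_iff]
          exact LinearMap.mem_ker.2 hker
    · -- the Hermitian-curve case
      set Λ : (Fin 3 → L) →ₗ[L] L × L := ℓ₁.prod ℓ₂ with hΛdef
      have hΛapp : ∀ v, Λ v = (ℓ₁ v, ℓ₂ v) := fun v => rfl
      have hΛsurj : Function.Surjective Λ := by
        by_contra hs
        rw [← LinearMap.range_eq_top] at hs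
        obtain ⟨z, hz⟩ : ∃ z, z ∉ LinearMap.range Λ := by
          by_contra h; push_neg at h; exact hs (Submodule.eq_top_iff'.2 h)
        obtain ⟨φ, hφz, hφmap⟩ := Submodule.exists_dual_map_eq_bot_of_notMem hz inferInstance
        have hφ0 : ∀ u, φ (Λ u) = 0 := fun u => by
          have h : φ (Λ u) ∈ (LinearMap.range Λ).map φ :=
            Submodule.mem_map_of_mem (LinearMap.mem_range_self Λ u)
          rwa [hφmap, Submodule.mem_bot] at h
        set a := φ (1, 0) with hadef
        set b := φ (0, 1) with hbdef
        have hφeval : ∀ p : L × L, φ p = p.1 * a + p.2 * b := by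
          intro p
          have hp : p = p.1 • ((1 : L), (0 : L)) + p.2 • ((0 : L), (1 : L)) := by
            ext <;> simp
          conv_lhs => rw [hp]
          rw [map_add, map_smul, map_smul, smul_eq_mul, smul_eq_mul, ← hadef, ← hbdef]
        have hcomb : ∀ u, ℓ₁ u * a + ℓ₂ u * b = 0 := fun u => by
          have h := hφ0 u
          rwa [hφeval, hΛapp] at h
        by_cases hb : b = 0
        · have ha : a ≠ 0 := by
            intro ha
            apply hφz
            rw [hφeval, ha, hb, mul_zero, mul_zero, add_zero]
          apply hl1
          refine LinearMap.ext fun u => ?_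
          rw [LinearMap.zero_apply]
          have h := hcomb u
          rw [hb, mul_zero, add_zero, mul_eq_zero] at h
          rcases h with h | h
          · exact h
          · exact absurd h ha
        · apply hdep
          refine ⟨-(a * b⁻¹), ?_⟩
          refine LinearMap.ext fun u => ?_
          have h := hcomb u
          rw [LinearMap.smul_apply, smul_eq_mul]
          apply mul_right_cancel₀ hb
          have hbb : b⁻¹ * b = 1 := inv_mul_cancel₀ hb
          linear_combination h + (a * ℓ₁ u) * hbb
      obtain ⟨u, hu⟩ := hΛsurj (0, 1)
      obtain ⟨w, hw⟩ := hΛsurj (1, 0)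
      rw [hΛapp, Prod.mk.injEq] at hu hw
      obtain ⟨hu1, hu2⟩ := hu
      obtain ⟨hw1, hw2⟩ := hw
      have hkerrank : Module.finrank L (LinearMap.ker Λ) = 1 := by
        have h := Λ.finrank_range_add_finrank_ker
        rw [LinearMap.range_eq_top.2 hΛsurj, finrank_top, hV3] at h
        have h2 : Module.finrank L (L × L) = 2 := by
          rw [Module.finrank_prod, Module.finrank_self]
        rw [h2] at h
        omega
      obtain ⟨v₀, hv₀mem, hv₀⟩ := (Submodule.ne_bot_iff (LinearMap.ker Λ)).1 (by
        intro h
        rw [h, finrank_bot] at hkerrank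
        omega)
      have hkerΛ : LinearMap.ker Λ = Submodule.span L {v₀} :=
        eq_span_singleton_of_mem hkerrank hv₀ hv₀mem
      set P₀ := Projectivization.mk L v₀ hv₀ with hP₀def
      have hP₀ : P₀.submodule = LinearMap.ker Λ := by
        rw [hP₀def, Projectivization.submodule_mk, hkerΛ]
      -- the kernel of t is spanned by a single τ
      have ht0 : t ≠ 0 := fun h => ht1 (by rw [h]; rfl)
      have htrank : Module.finrank K (LinearMap.ker t) = 1 := by
        have h := finrank_ker_add_one ht0
        rw [hKL2] at h; omega
      obtain ⟨τ, hτmem, hτ0⟩ := (Submodule.ne_bot_iff (LinearMap.ker t)).1 (by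
        intro h
        rw [h, finrank_bot] at htrank
        omega)
      have hkert : LinearMap.ker t = Submodule.span K {τ} :=
        eq_span_singleton_of_mem htrank hτ0 hτmem
      -- independence of u and w
      have hind : LinearIndependent L ![u, w] := by
        rw [LinearIndependent.pair_iff]
        intro s r hsr
        constructor
        · have h := congrArg ℓ₂ hsr
          rw [map_add, map_smul, map_smul, hu2, hw2, smul_eq_mul, smul_eq_mul, mul_one,
            mul_zero, add_zero, map_zero] at h
          exact h
        · have h := congrArg ℓ₁ hsr
          rw [map_add, map_smul, map_smul, hu1, hw1, smul_eq_mul, smul_eq_mul, mul_one,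
            mul_zero, zero_add, map_zero] at h
          exact h
      -- the vertex is not on the line spanned by u, w
      have hbot : P₀.submodule ⊓ Submodule.span L {u, w} = ⊥ := by
        rw [eq_bot_iff]
        rintro z hzmem
        have hz1 : z ∈ P₀.submodule := hzmem.1
        have hz2 : z ∈ Submodule.span L {u, w} := hzmem.2
        obtain ⟨α, β, hz⟩ := Submodule.mem_span_pair.1 hz2
        rw [hP₀] at hz1
        have hΛz : Λ z = 0 := LinearMap.mem_ker.1 hz1
        rw [hΛapp] at hΛz
        rw [Prod.ext_iff] at hΛz
        simp only [Prod.fst_zero, Prod.snd_zero] at hΛz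
        obtain ⟨h1, h2⟩ := hΛz
        have hβ : β = 0 := by
          have h := h1
          rw [← hz, map_add, map_smul, map_smul, hu1, hw1, smul_eq_mul, smul_eq_mul,
            mul_zero, mul_one, zero_add] at h
          exact h
        have hα : α = 0 := by
          have h := h2
          rw [← hz, map_add, map_smul, map_smul, hu2, hw2, smul_eq_mul, smul_eq_mul,
            mul_zero, mul_one, add_zero] at h
          exact h
        rw [Submodule.mem_bot, ← hz, hα, hβ, zero_smul, zero_smul, add_zero]
      -- S is contained in the degenerate Hermitian curve
      have hsubset : S ⊆ {P : ℙ L (Fin 3 → L) | ∃ a b : K, ¬(a = 0 ∧ b = 0) ∧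
          P.submodule ≤ P₀.submodule ⊔
            Submodule.span L {algebraMap K L a • u + algebraMap K L b • w}} := by
        intro P hP
        obtain ⟨v, hv0, hvP, ht1v, ht2v⟩ := hv_exists P hP
        obtain ⟨a, ha⟩ := Submodule.mem_span_singleton.1
          (hkert ▸ LinearMap.mem_ker.2 ht1v)
        obtain ⟨b, hb⟩ := Submodule.mem_span_singleton.1
          (hkert ▸ LinearMap.mem_ker.2 ht2v)
        have hPv : P.submodule = Submodule.span L {v} := submodule_eq_span_of_mem hv0 hvP
        by_cases hab : a = 0 ∧ b = 0
        · refine ⟨1, 0, by simp, ?_⟩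
          have hvker : v ∈ LinearMap.ker Λ := by
            rw [LinearMap.mem_ker]
            have h1 : ℓ₁ v = 0 := by rw [← ha, hab.1, zero_smul]
            have h2 : ℓ₂ v = 0 := by rw [← hb, hab.2, zero_smul]
            rw [hΛapp, h1, h2]
            rfl
          rw [hPv]
          refine le_trans ?_ le_sup_left
          rw [Submodule.span_le, Set.singleton_subset_iff, hP₀]
          exact hvker
        · refine ⟨b, a, fun h => hab ⟨h.2, h.1⟩, ?_⟩
          set s : Fin 3 → L := algebraMap K L b • u + algebraMap K L a • w with hs
          have hl1s : ℓ₁ s = algebraMap K L a := by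
            rw [hs, map_add, map_smul, map_smul, hu1, hw1, smul_eq_mul, smul_eq_mul,
              mul_zero, mul_one, zero_add]
          have hl2s : ℓ₂ s = algebraMap K L b := by
            rw [hs, map_add, map_smul, map_smul, hu2, hw2, smul_eq_mul, smul_eq_mul,
              mul_zero, mul_one, add_zero]
          have hz : v - τ • s ∈ LinearMap.ker Λ := by
            rw [LinearMap.mem_ker]
            have e1 : ℓ₁ (v - τ • s) = 0 := by
              rw [map_sub, map_smul, hl1s, ← ha, Algebra.smul_def, smul_eq_mul,
                mul_comm, sub_self]
            have e2 : ℓ₂ (v - τ • s) = 0 := by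
              rw [map_sub, map_smul, hl2s, ← hb, Algebra.smul_def, smul_eq_mul,
                mul_comm, sub_self]
            rw [hΛapp, e1, e2]
            rfl
          rw [hPv, Submodule.span_le, Set.singleton_subset_iff]
          have hvdec : v = (v - τ • s) + τ • s := by abel
          rw [hvdec]
          exact Submodule.add_mem _ (Submodule.mem_sup_left (hP₀ ▸ hz))
            (Submodule.mem_sup_right
              (Submodule.smul_mem _ τ (Submodule.mem_span_singleton_self s)))
      exact hherm _ ⟨P₀, u, w, hind, hbot, rfl⟩ hsubset
  -- conclude
  have hMle : M ≤ LinearMap.ker f := by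
    rw [hM, Submodule.span_le]
    rintro _ ⟨p, ⟨hpH, _⟩, rfl⟩
    exact LinearMap.mem_ker.2 hpH
  have hHcoe : H = ↑(ofSubmodule (LinearMap.ker f)) := by
    ext p
    simp [hHdef, mem_ofSubmodule_iff, LinearMap.mem_ker]
  have hsub : Projectivization.Subspace.span H = ofSubmodule (LinearMap.ker f) := by
    rw [hHcoe, Projectivization.Subspace.span_coe]
  apply le_antisymm
  · rw [hsub]
    apply Projectivization.Subspace.span_le_subspace_iff.2
    intro p hp
    exact LinearMap.mem_ker.2 hp.1
  · rw [hsub]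
    intro p hp
    exact mem_span_of_rep_mem_span _ p (hkey hp)
end
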